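/- arXiv:2402.11280 — 7 statements merged into one kernel-verified Lean document; each statement's English description precedes it below -/
import Mathlib

section
/- Under Assumption A, there exist τ₀ > 0 and Q > 0, depending only on d, k, L, β, γ, ‖x₀‖ and T (in particular independent of i, τ, n and N), such that for every N ∈ ℕ with τ = T/N ≤ τ₀, the iterates of the discrete HiSD scheme satisfy ‖v_{i,n} − v_{i,n−1}‖ ≤ Q τ for all 1 ≤ i ≤ k and 1 ≤ n ≤ N. -/
open scoped RealInnerProductSpace BigOperators

noncomputable section

set_option maxHeartbeats 2000000

theorem hisd_stmt0
    (d k : ℕ) (hd : 1 ≤ d) (hk : 1 ≤ k) (hkd : k ≤ d)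
    (F : EuclideanSpace ℝ (Fin d) → EuclideanSpace ℝ (Fin d))
    (J : EuclideanSpace ℝ (Fin d) → (EuclideanSpace ℝ (Fin d) →L[ℝ] EuclideanSpace ℝ (Fin d)))
    (hJsymm : ∀ x u w, ⟪J x u, w⟫ = ⟪u, J x w⟫)
    (L : ℝ) (hL : 0 < L)
    (hLip : ∀ x₁ x₂ : EuclideanSpace ℝ (Fin d), ‖J x₂ - J x₁‖ + ‖F x₂ - F x₁‖ ≤ L * ‖x₂ - x₁‖)
    (hgrow : ∀ x : EuclideanSpace ℝ (Fin d), ‖F x‖ ≤ L * (1 + ‖x‖))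
    (β γ : ℝ) (hβ : 0 < β) (hγ : 0 < γ)
    (T : ℝ) (hT : 0 < T)
    (x₀ : EuclideanSpace ℝ (Fin d))
    (v₀ : Fin k → EuclideanSpace ℝ (Fin d))
    (hv₀ : ∀ i j : Fin k, ⟪v₀ i, v₀ j⟫ = if i = j then (1:ℝ) else 0) :
    ∃ τ₀ > (0:ℝ), ∃ Q > (0:ℝ), ∀ (N : ℕ) (τ : ℝ), 0 < N → τ = T / N → τ ≤ τ₀ →
      ∀ (x : ℕ → EuclideanSpace ℝ (Fin d)) (v : ℕ → Fin k → EuclideanSpace ℝ (Fin d)),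
        x 0 = x₀ → v 0 = v₀ →
        (∀ n < N, x (n+1) = x n + τ •
            (β • (F (x n) - (2:ℝ) • ∑ j, ⟪v n j, F (x n)⟫ • v n j))) →
        (∀ n < N, ∀ i : Fin k,
          let vt := v n i + (τ * γ) • J (x n) (v n i)
          let w := vt - ∑ j ∈ Finset.Iio i, ⟪vt, v (n+1) j⟫ • v (n+1) j
          w ≠ 0 ∧ v (n+1) i = ‖w‖⁻¹ • w) →
        ∀ n < N, ∀ i : Fin k, ‖v (n+1) i - v n i‖ ≤ Q * τ := by
  set C : ℝ := β * (1 + 2 * k) * L with hC_def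
  have hC : 0 < C := by positivity
  set M : ℝ := (1 + ‖x₀‖) * Real.exp (C * T) with hM_def
  have hM1 : 1 ≤ M := by
    have h1 : (1:ℝ) ≤ Real.exp (C * T) := Real.one_le_exp (by positivity)
    nlinarith [norm_nonneg x₀]
  set CJ : ℝ := ‖J x₀‖ + L * (M + ‖x₀‖) + 1 with hCJ_def
  have hCJ1 : 1 ≤ CJ := by
    have := norm_nonneg (J x₀); have := norm_nonneg x₀; nlinarith
  have hCJ : 0 < CJ := lt_of_lt_of_le one_pos hCJ1
  set A : ℝ := 2 * (k + 1) * γ * CJ + 1 with hA_def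
  have hA : 0 < A := by positivity
  set Q : ℝ := A * (4 * k + 1) ^ k with hQ_def
  have hQ : 0 < Q := by positivity
  refine ⟨min (1 / (γ * CJ)) (1 / (8 * k)), lt_min (by positivity)
    (by positivity), Q, hQ, ?_⟩
  intro N τ hN hτdef hττ₀ x v hx0 hv0 hxrec hvrec
  have hτpos : 0 < τ := by
    rw [hτdef]; positivity
  have hτ1 : τ * (γ * CJ) ≤ 1 := by
    have h := le_trans hττ₀ (min_le_left _ _)
    rw [le_div_iff₀ (by positivity)] at h
    linarith [h]
  have hτ2 : τ * (8 * k) ≤ 1 := by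
    have h := le_trans hττ₀ (min_le_right _ _)
    rw [le_div_iff₀ (by positivity : (0:ℝ) < 8 * k)] at h
    linarith [h]
  -- orthonormality invariant
  have ortho : ∀ n, n ≤ N → ∀ i j : Fin k, ⟪v n i, v n j⟫ = if i = j then (1:ℝ) else 0 := by
    intro n
    induction n with
    | zero => intro _; rw [hv0]; exact hv₀
    | succ n ih =>
      intro hn1 i j
      have hn : n < N := hn1
      have ihn := ih (le_of_lt hn)
      -- unit norms at step n+1
      have hunit : ∀ i : Fin k, ‖v (n+1) i‖ = 1 := by
        intro i
        obtain ⟨hw0, hvi⟩ := hvrec n hn i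
        rw [hvi, norm_smul, norm_inv, norm_norm,
          inv_mul_cancel₀ (norm_ne_zero_iff.mpr hw0)]
      have horth : ∀ m : ℕ, ∀ p q : Fin k, p.val < m → q < p → ⟪v (n+1) p, v (n+1) q⟫ = 0 := by
        intro m
        induction m with
        | zero => intro p q hp; omega
        | succ m ihm =>
          intro p q hp hqp
          obtain ⟨hw0, hvp⟩ := hvrec n hn p
          set vt := v n p + (τ * γ) • J (x n) (v n p) with hvt
          set w := vt - ∑ j ∈ Finset.Iio p, ⟪vt, v (n+1) j⟫ • v (n+1) j with hw
          have hwq : ⟪w, v (n+1) q⟫ = 0 := by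
            rw [hw, inner_sub_left, sum_inner]
            have hsum : ∑ l ∈ Finset.Iio p, ⟪⟪vt, v (n+1) l⟫ • v (n+1) l, v (n+1) q⟫
                = ⟪vt, v (n+1) q⟫ := by
              rw [Finset.sum_eq_single q]
              · rw [real_inner_smul_left, real_inner_self_eq_norm_sq, hunit q]
                ring
              · intro l hl hlq
                rw [real_inner_smul_left]
                have hlp : l < p := Finset.mem_Iio.mp hl
                have : ⟪v (n+1) l, v (n+1) q⟫ = 0 := by
                  rcases lt_or_gt_of_ne hlq with h | h
                  · rw [real_inner_comm]
                    exact ihm q l (by omega) h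
                  · exact ihm l q (by omega) h
                rw [this]; ring
              · intro hq
                exact absurd (Finset.mem_Iio.mpr hqp) hq
            rw [hsum]; ring
          rw [hvp, real_inner_smul_left, hwq]; ring
      rcases eq_or_ne i j with h | h
      · subst h
        rw [if_pos rfl, real_inner_self_eq_norm_sq, hunit i]
        norm_num
      · simp only [if_neg h]
        rcases lt_or_gt_of_ne h with hlt | hgt
        · rw [real_inner_comm]
          exact horth k j i j.isLt hlt
        · exact horth k i j i.isLt hgt
  -- bound on x
  have xb : ∀ n, n ≤ N → 1 + ‖x n‖ ≤ (1 + ‖x₀‖) * (1 + C * τ) ^ n := by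
    intro n
    induction n with
    | zero => intro _; rw [hx0]; simp
    | succ n ih =>
      intro hn1
      have hn : n < N := hn1
      have ihn := ih (le_of_lt hn)
      have hxs := hxrec n hn
      have hstep : ‖x (n+1) - x n‖ ≤ C * τ * (1 + ‖x n‖) := by
        have h1 : x (n+1) - x n = τ • (β • (F (x n) - (2:ℝ) • ∑ j, ⟪v n j, F (x n)⟫ • v n j)) := by
          rw [hxs]; abel
        have hz : ‖F (x n) - (2:ℝ) • ∑ j, ⟪v n j, F (x n)⟫ • v n j‖
            ≤ (1 + 2 * k) * (L * (1 + ‖x n‖)) := by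
          have hFb := hgrow (x n)
          have hsum : ‖∑ j : Fin k, ⟪v n j, F (x n)⟫ • v n j‖ ≤ k * ‖F (x n)‖ := by
            calc ‖∑ j : Fin k, ⟪v n j, F (x n)⟫ • v n j‖
                ≤ ∑ j : Fin k, ‖⟪v n j, F (x n)⟫ • v n j‖ := norm_sum_le _ _
              _ ≤ ∑ _j : Fin k, ‖F (x n)‖ := by
                  apply Finset.sum_le_sum
                  intro j _
                  have hvn : ‖v n j‖ = 1 := by
                    have h := ortho n (le_of_lt hn) j j
                    simp only [real_inner_self_eq_norm_sq, if_true, eq_self_iff_true] at h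
                    nlinarith [norm_nonneg (v n j)]
                  rw [norm_smul, hvn, mul_one]
                  calc ‖⟪v n j, F (x n)⟫‖ = |⟪v n j, F (x n)⟫| := rfl
                    _ ≤ ‖v n j‖ * ‖F (x n)‖ := abs_real_inner_le_norm _ _
                    _ = ‖F (x n)‖ := by rw [hvn, one_mul]
              _ = k * ‖F (x n)‖ := by simp [Finset.sum_const, mul_comm]
          calc ‖F (x n) - (2:ℝ) • ∑ j, ⟪v n j, F (x n)⟫ • v n j‖
              ≤ ‖F (x n)‖ + ‖(2:ℝ) • ∑ j : Fin k, ⟪v n j, F (x n)⟫ • v n j‖ := norm_sub_le _ _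
            _ = ‖F (x n)‖ + 2 * ‖∑ j : Fin k, ⟪v n j, F (x n)⟫ • v n j‖ := by
                rw [norm_smul]; norm_num
            _ ≤ ‖F (x n)‖ + 2 * (k * ‖F (x n)‖) := by
                have h2 : (0:ℝ) ≤ 2 := by norm_num
                nlinarith [hsum]
            _ = (1 + 2 * k) * ‖F (x n)‖ := by ring
            _ ≤ (1 + 2 * k) * (L * (1 + ‖x n‖)) := by
                apply mul_le_mul_of_nonneg_left hFb (by positivity)
        rw [h1, norm_smul, norm_smul]
        simp only [Real.norm_eq_abs, abs_of_pos hτpos, abs_of_pos hβ]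
        calc τ * (β * ‖F (x n) - (2:ℝ) • ∑ j, ⟪v n j, F (x n)⟫ • v n j‖)
            ≤ τ * (β * ((1 + 2 * k) * (L * (1 + ‖x n‖)))) := by
              apply mul_le_mul_of_nonneg_left _ (le_of_lt hτpos)
              exact mul_le_mul_of_nonneg_left hz (le_of_lt hβ)
          _ = C * τ * (1 + ‖x n‖) := by rw [hC_def]; ring
      have h2 : ‖x (n+1)‖ ≤ ‖x n‖ + C * τ * (1 + ‖x n‖) := by
        calc ‖x (n+1)‖ ≤ ‖x n‖ + ‖x (n+1) - x n‖ := by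
              have := norm_add_le (x n) (x (n+1) - x n)
              simpa using this
          _ ≤ ‖x n‖ + C * τ * (1 + ‖x n‖) := by linarith
      calc 1 + ‖x (n+1)‖ ≤ (1 + C * τ) * (1 + ‖x n‖) := by nlinarith
        _ ≤ (1 + C * τ) * ((1 + ‖x₀‖) * (1 + C * τ) ^ n) := by
            apply mul_le_mul_of_nonneg_left ihn (by positivity)
        _ = (1 + ‖x₀‖) * (1 + C * τ) ^ (n+1) := by ring
  have xM : ∀ n, n ≤ N → 1 + ‖x n‖ ≤ M := by
    intro n hn
    have h1 := xb n hn
    have h2 : (1 + C * τ) ^ n ≤ Real.exp (C * T) := by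
      calc (1 + C * τ) ^ n ≤ Real.exp (C * τ) ^ n := by
            apply pow_le_pow_left₀ (by positivity)
            linarith [Real.add_one_le_exp (C * τ)]
        _ = Real.exp (C * τ * n) := by
            rw [← Real.exp_nat_mul]; ring_nf
        _ ≤ Real.exp (C * T) := by
            apply Real.exp_le_exp.mpr
            have hτn : τ * n ≤ T := by
              rw [hτdef]
              rw [div_mul_eq_mul_div, div_le_iff₀ (by exact_mod_cast hN)]
              have : (n:ℝ) ≤ N := by exact_mod_cast hn
              nlinarith [hT.le]
            nlinarith [hC.le, hτpos.le]
    calc 1 + ‖x n‖ ≤ (1 + ‖x₀‖) * (1 + C * τ) ^ n := h1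
      _ ≤ (1 + ‖x₀‖) * Real.exp (C * T) := by
          apply mul_le_mul_of_nonneg_left h2 (by positivity)
      _ = M := rfl
  have JB : ∀ n, n ≤ N → ‖J (x n)‖ ≤ CJ := by
    intro n hn
    have h1 : ‖J (x n) - J x₀‖ ≤ L * ‖x n - x₀‖ := by
      have := hLip x₀ (x n)
      have := norm_nonneg (F (x n) - F x₀)
      linarith
    have h2 : ‖x n - x₀‖ ≤ M + ‖x₀‖ := by
      have := norm_sub_le (x n) x₀
      have := xM n hn
      linarith
    calc ‖J (x n)‖ = ‖J x₀ + (J (x n) - J x₀)‖ := by congr 1; abel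
      _ ≤ ‖J x₀‖ + ‖J (x n) - J x₀‖ := norm_add_le _ _
      _ ≤ ‖J x₀‖ + L * (M + ‖x₀‖) := by nlinarith
      _ ≤ CJ := by rw [hCJ_def]; linarith
  -- main claim
  intro n hn
  have hunit : ∀ i : Fin k, ‖v (n+1) i‖ = 1 := by
    intro i
    obtain ⟨hw0, hvi⟩ := hvrec n hn i
    rw [hvi, norm_smul, norm_inv, norm_norm,
      inv_mul_cancel₀ (norm_ne_zero_iff.mpr hw0)]
  have hunitn : ∀ i : Fin k, ‖v n i‖ = 1 := by
    intro i
    have h := ortho n (le_of_lt hn) i i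
    simp only [real_inner_self_eq_norm_sq, if_true, eq_self_iff_true] at h
    nlinarith [norm_nonneg (v n i)]
  have key : ∀ m : ℕ, ∀ i : Fin k, i.val < m →
      ‖v (n+1) i - v n i‖ ≤ (A * (4 * k + 1) ^ m) * τ := by
    intro m
    induction m with
    | zero => intro i hi; omega
    | succ m ihm =>
      intro i hi
      set p : ℝ := (4 * (k:ℝ) + 1) ^ m with hp_def
      have hppos : 0 < p := by positivity
      have hpone : (1:ℝ) ≤ p := by
        rw [hp_def]
        apply one_le_pow₀
        have : (0:ℝ) ≤ (k:ℝ) := by positivity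
        linarith
      obtain ⟨hw0, hvi⟩ := hvrec n hn i
      set vt := v n i + (τ * γ) • J (x n) (v n i) with hvt
      set w := vt - ∑ j ∈ Finset.Iio i, ⟪vt, v (n+1) j⟫ • v (n+1) j with hw
      have hJvi : ‖J (x n) (v n i)‖ ≤ CJ := by
        calc ‖J (x n) (v n i)‖ ≤ ‖J (x n)‖ * ‖v n i‖ := ContinuousLinearMap.le_opNorm _ _
          _ ≤ CJ := by rw [hunitn i, mul_one]; exact JB n (le_of_lt hn)
      have hvtv : ‖vt - v n i‖ ≤ τ * γ * CJ := by
        rw [hvt]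
        have : v n i + (τ * γ) • J (x n) (v n i) - v n i = (τ * γ) • J (x n) (v n i) := by abel
        rw [this, norm_smul, Real.norm_eq_abs, abs_of_pos (by positivity)]
        nlinarith [hJvi, mul_pos hτpos hγ, norm_nonneg (J (x n) (v n i))]
      have hvtb : ‖vt‖ ≤ 2 := by
        calc ‖vt‖ ≤ ‖v n i‖ + ‖vt - v n i‖ := by
              have := norm_add_le (v n i) (vt - v n i); simpa using this
          _ ≤ 1 + τ * γ * CJ := by rw [hunitn i]; linarith
          _ ≤ 2 := by nlinarith [hτ1]
      -- coefficient bound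
      have hcoef : ∀ j : Fin k, j < i → |⟪vt, v (n+1) j⟫| ≤ τ * γ * CJ + 2 * (A * p * τ) := by
        intro j hji
        have hvj : ‖v (n+1) j - v n j‖ ≤ A * p * τ := ihm j (by omega)
        have h1 : ⟪vt, v (n+1) j⟫ = ⟪vt, v n j⟫ + ⟪vt, v (n+1) j - v n j⟫ := by
          rw [← inner_add_right]
          congr 1
          abel
        have h2 : |⟪vt, v n j⟫| ≤ τ * γ * CJ := by
          rw [hvt, inner_add_left, real_inner_smul_left]
          have hij : ⟪v n i, v n j⟫ = 0 := by
            have := ortho n (le_of_lt hn) i j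
            rwa [if_neg (by exact fun h => absurd h (Fin.ne_of_gt hji))] at this
          rw [hij, zero_add, abs_mul, abs_of_pos (by positivity : (0:ℝ) < τ * γ)]
          have : |⟪J (x n) (v n i), v n j⟫| ≤ CJ := by
            calc |⟪J (x n) (v n i), v n j⟫| ≤ ‖J (x n) (v n i)‖ * ‖v n j‖ :=
                  abs_real_inner_le_norm _ _
              _ ≤ CJ := by rw [hunitn j, mul_one]; exact hJvi
          nlinarith [this, mul_pos hτpos hγ, abs_nonneg (⟪J (x n) (v n i), v n j⟫ : ℝ)]
        have h3 : |⟪vt, v (n+1) j - v n j⟫| ≤ 2 * (A * p * τ) := by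
          calc |⟪vt, v (n+1) j - v n j⟫| ≤ ‖vt‖ * ‖v (n+1) j - v n j‖ :=
                abs_real_inner_le_norm _ _
            _ ≤ 2 * (A * p * τ) := by
                apply mul_le_mul hvtb hvj (norm_nonneg _) (by norm_num)
        calc |⟪vt, v (n+1) j⟫| ≤ |⟪vt, v n j⟫| + |⟪vt, v (n+1) j - v n j⟫| := by
              rw [h1]; exact abs_add_le _ _
          _ ≤ τ * γ * CJ + 2 * (A * p * τ) := by linarith
      have hwvt : ‖w - vt‖ ≤ k * (τ * γ * CJ + 2 * (A * p * τ)) := by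
        have : w - vt = -(∑ j ∈ Finset.Iio i, ⟪vt, v (n+1) j⟫ • v (n+1) j) := by
          rw [hw]; abel
        rw [this, norm_neg]
        calc ‖∑ j ∈ Finset.Iio i, ⟪vt, v (n+1) j⟫ • v (n+1) j‖
            ≤ ∑ j ∈ Finset.Iio i, ‖⟪vt, v (n+1) j⟫ • v (n+1) j‖ := norm_sum_le _ _
          _ ≤ ∑ _j ∈ Finset.Iio i, (τ * γ * CJ + 2 * (A * p * τ)) := by
              apply Finset.sum_le_sum
              intro j hj
              rw [norm_smul, hunit j, mul_one]
              exact hcoef j (Finset.mem_Iio.mp hj)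
          _ = (Finset.Iio i).card * (τ * γ * CJ + 2 * (A * p * τ)) := by
              rw [Finset.sum_const, nsmul_eq_mul]
          _ ≤ k * (τ * γ * CJ + 2 * (A * p * τ)) := by
              apply mul_le_mul_of_nonneg_right _ (by positivity)
              have : (Finset.Iio i).card ≤ k := by
                calc (Finset.Iio i).card ≤ (Finset.univ : Finset (Fin k)).card :=
                      Finset.card_le_card (Finset.subset_univ _)
                  _ = k := by simp
              exact_mod_cast this
      have hviw : ‖v (n+1) i - w‖ = |1 - ‖w‖| := by
        rw [hvi]
        have : ‖w‖⁻¹ • w - w = (‖w‖⁻¹ - 1) • w := by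
          rw [sub_smul, one_smul]
        rw [this, norm_smul, Real.norm_eq_abs]
        have hwne : ‖w‖ ≠ 0 := norm_ne_zero_iff.mpr hw0
        rw [← abs_of_nonneg (norm_nonneg w), ← abs_mul]
        congr 1
        field_simp
        rw [abs_norm]; ring
      have hw1 : |1 - ‖w‖| ≤ ‖w - vt‖ + τ * γ * CJ := by
        have h1 : |‖w‖ - ‖vt‖| ≤ ‖w - vt‖ := abs_norm_sub_norm_le _ _
        have h2 : |‖vt‖ - 1| ≤ τ * γ * CJ := by
          have := abs_norm_sub_norm_le vt (v n i)
          rw [hunitn i] at this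
          linarith [le_trans this hvtv]
        calc |1 - ‖w‖| = |(‖vt‖ - ‖w‖) + (1 - ‖vt‖)| := by ring_nf
          _ ≤ |‖vt‖ - ‖w‖| + |1 - ‖vt‖| := abs_add_le _ _
          _ ≤ ‖w - vt‖ + τ * γ * CJ := by
              rw [abs_sub_comm (‖vt‖) (‖w‖), abs_sub_comm 1 (‖vt‖)]
              linarith
      have htotal : ‖v (n+1) i - v n i‖
          ≤ 2 * ((k:ℝ) * (τ * γ * CJ + 2 * (A * p * τ))) + 2 * (τ * γ * CJ) := by
        calc ‖v (n+1) i - v n i‖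
            ≤ ‖v (n+1) i - w‖ + ‖w - vt‖ + ‖vt - v n i‖ := by
              have h1 := norm_add_le (v (n+1) i - w) (w - vt)
              have h2 := norm_add_le (v (n+1) i - w + (w - vt)) (vt - v n i)
              have he : v (n+1) i - w + (w - vt) + (vt - v n i) = v (n+1) i - v n i := by abel
              rw [he] at h2
              have he2 : v (n + 1) i - w + (w - vt) = v (n+1) i - vt := by abel
              rw [he2] at h1 h2
              linarith
          _ ≤ (‖w - vt‖ + τ * γ * CJ) + ‖w - vt‖ + τ * γ * CJ := by
              rw [hviw]
              linarith [hw1, hvtv]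
          _ ≤ 2 * ((k:ℝ) * (τ * γ * CJ + 2 * (A * p * τ))) + 2 * (τ * γ * CJ) := by linarith
      -- final arithmetic
      have e3 : 2 * ((k:ℝ) + 1) * γ * CJ ≤ A := by rw [hA_def]; linarith
      have f1 : 2 * ((k:ℝ) + 1) * γ * CJ * τ ≤ A * τ :=
        mul_le_mul_of_nonneg_right e3 hτpos.le
      have f2 : A * 1 * τ ≤ A * p * τ :=
        mul_le_mul_of_nonneg_right
          (mul_le_mul_of_nonneg_left hpone hA.le) hτpos.le
      have hfin : 2 * ((k:ℝ) * (τ * γ * CJ + 2 * (A * p * τ))) + 2 * (τ * γ * CJ)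
          ≤ (A * (4 * k + 1) ^ (m+1)) * τ := by
        have e2 : (4 * (k:ℝ) + 1) ^ (m+1) = p * (4 * (k:ℝ) + 1) := by
          rw [hp_def, pow_succ]
        push_cast
        rw [e2]
        nlinarith [f1, f2]
      calc ‖v (n+1) i - v n i‖
          ≤ 2 * ((k:ℝ) * (τ * γ * CJ + 2 * (A * p * τ))) + 2 * (τ * γ * CJ) := htotal
        _ ≤ (A * (4 * k + 1) ^ (m+1)) * τ := hfin
  intro i
  have := key k i i.isLt
  rw [hQ_def]
  exact this
end
end

section
/- Under Assumption A, there exist τ₀ > 0 and Q > 0, depending only on d, k, L, β, γ, ‖x₀‖ and T, such that for every N ∈ ℕ with τ = T/N ≤ τ₀, the iterates of the discrete HiSD scheme satisfy ‖(v_{i,n} − v_{i,n−1})/τ − R_i^{n−1} − L_i^{n−1}‖ ≤ Q τ for all 1 ≤ i ≤ k and 1 ≤ n ≤ N; that is, combining the Rayleigh-quotient step and the Gram–Schmidt step recovers, up to an O(τ) error, the explicit Euler discretization of the directional-vector dynamics dv_i/dt = R_i + L_i of the continuous HiSD. -/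
open scoped RealInnerProductSpace BigOperators

noncomputable section

lemma gs_ortho {E : Type*} [NormedAddCommGroup E] [InnerProductSpace ℝ E] {k : ℕ}
    (vt u' : Fin k → E)
    (hGS : ∀ i : Fin k,
      (vt i - ∑ j ∈ Finset.Iio i, ⟪vt i, u' j⟫ • u' j ≠ 0) ∧
      u' i = ‖vt i - ∑ j ∈ Finset.Iio i, ⟪vt i, u' j⟫ • u' j‖⁻¹ •
        (vt i - ∑ j ∈ Finset.Iio i, ⟪vt i, u' j⟫ • u' j)) :
    ∀ i j : Fin k, ⟪u' i, u' j⟫ = if i = j then (1:ℝ) else 0 := by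
  have hnorm : ∀ i : Fin k, ‖u' i‖ = 1 := by
    intro i
    rw [(hGS i).2, norm_smul, norm_inv, norm_norm,
      inv_mul_cancel₀ (norm_ne_zero_iff.mpr (hGS i).1)]
  have key : ∀ m : ℕ, ∀ i : Fin k, (i : ℕ) ≤ m → ∀ j : Fin k, j < i → ⟪u' i, u' j⟫ = 0 := by
    intro m
    induction m with
    | zero =>
      intro i hi j hj
      rw [Fin.lt_def] at hj
      omega
    | succ m IHm =>
      intro i hi j hj
      have IH : ∀ p : Fin k, p < i → ∀ q : Fin k, q < p → ⟪u' p, u' q⟫ = 0 := by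
        intro p hp q hq
        exact IHm p (by omega) q hq
      rw [(hGS i).2, real_inner_smul_left, inner_sub_left, sum_inner]
      have hcollapse : ∀ j' ∈ Finset.Iio i, ⟪(⟪vt i, u' j'⟫ : ℝ) • u' j', u' j⟫
          = if j' = j then ⟪vt i, u' j'⟫ else 0 := by
        intro j' hj'
        rw [Finset.mem_Iio] at hj'
        rw [real_inner_smul_left]
        by_cases h : j' = j
        · subst h
          have : ⟪u' j', u' j'⟫ = ‖u' j'‖ ^ 2 := real_inner_self_eq_norm_sq _
          rw [if_pos rfl, this, hnorm, one_pow, mul_one]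
        · rw [if_neg h]
          rcases lt_or_gt_of_ne h with hlt | hgt
          · -- j' < j < i : use IH j (j < i) applied to j'
            rw [real_inner_comm (u' j) (u' j'), IH j hj j' hlt, mul_zero]
          · -- j < j' < i
            rw [IH j' hj' j hgt, mul_zero]
      rw [Finset.sum_congr rfl hcollapse, Finset.sum_ite_eq' (Finset.Iio i) j
        (fun j' => (⟪vt i, u' j'⟫ : ℝ)), if_pos (Finset.mem_Iio.mpr hj), sub_self, mul_zero]
  intro i j
  by_cases h : i = j
  · subst h
    rw [if_pos rfl, real_inner_self_eq_norm_sq, hnorm, one_pow]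
  · rw [if_neg h]
    rcases lt_or_gt_of_ne h with hlt | hgt
    · rw [real_inner_comm]; exact key j j le_rfl i hlt
    · exact key i i le_rfl j hgt


lemma hB_aux1 (x:ℝ) (hx : 0 ≤ x) : 0 ≤ 400*(x+1)^2 - 2*x := by nlinarith

lemma hB_aux2 (x:ℝ) (hx : 0 ≤ x) : 12*x^2+88*x+12 ≤ 400*(x+1)^2 := by nlinarith

lemma helper_sqrt {x : ℝ} (h : 1/4 ≤ x^2) (hx : 0 ≤ x) : 1/2 ≤ x := by nlinarith

lemma helper_absdiff {x y C : ℝ} (hx : 1/2 ≤ x) (hy : 1/2 ≤ y) (h : |x^2 - y^2| ≤ C) :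
    |x - y| ≤ C := by
  have h1 := (abs_le.mp h).1
  have h2 := (abs_le.mp h).2
  have hC : 0 ≤ C := le_trans (abs_nonneg _) h
  rw [abs_le]
  constructor <;> nlinarith

set_option maxHeartbeats 1000000 in
lemma gs_main {E : Type*} [NormedAddCommGroup E] [InnerProductSpace ℝ E] {k : ℕ}
    (A : E →L[ℝ] E) (hA : ∀ p q : E, ⟪A p, q⟫ = ⟪p, A q⟫)
    (a ε : ℝ) (ha : 0 ≤ a) (hAa : a * ‖A‖ ≤ ε)
    (u u' : Fin k → E)
    (hu : ∀ i j : Fin k, ⟪u i, u j⟫ = if i = j then (1:ℝ) else 0)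
    (hGS : ∀ i : Fin k,
      ((u i + a • A (u i)) - ∑ j ∈ Finset.Iio i, ⟪u i + a • A (u i), u' j⟫ • u' j ≠ 0) ∧
      u' i = ‖(u i + a • A (u i)) - ∑ j ∈ Finset.Iio i, ⟪u i + a • A (u i), u' j⟫ • u' j‖⁻¹ •
        ((u i + a • A (u i)) - ∑ j ∈ Finset.Iio i, ⟪u i + a • A (u i), u' j⟫ • u' j))
    (hsm : (400 * ((k:ℝ)+1)^2)^(k+1) * ε ≤ 1) :
    ∀ i : Fin k,
      ‖u' i - u i - a • (A (u i) + ((-⟪u i, A (u i)⟫) • u i -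
        (2:ℝ) • ∑ j ∈ Finset.Iio i, ⟪u j, A (u i)⟫ • u j))‖
        ≤ (400 * ((k:ℝ)+1)^2)^(k+1) * ε^2 := by
  have hk0 : (0:ℝ) ≤ (k:ℝ) := Nat.cast_nonneg k
  set B : ℝ := 400 * ((k:ℝ)+1)^2 with hBdef
  clear_value B
  have hB1 : (1:ℝ) ≤ B := by rw [hBdef]; nlinarith
  have hB400 : (400:ℝ) ≤ B := by rw [hBdef]; nlinarith
  have hε0 : 0 ≤ ε := le_trans (mul_nonneg ha (norm_nonneg _)) hAa
  have hBpow_le : ∀ m, m ≤ k+1 → B^m ≤ B^(k+1) := fun m hm => pow_le_pow_right₀ hB1 hm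
  have hBε : ∀ m, m ≤ k+1 → B^m * ε ≤ 1 := fun m hm =>
    le_trans (mul_le_mul_of_nonneg_right (hBpow_le m hm) hε0) hsm
  have hB1ε : B * ε ≤ 1 := by
    have := hBε 1 (by omega); simpa using this
  have hε400 : ε ≤ 1/400 := by nlinarith [mul_le_mul_of_nonneg_right hB400 hε0]
  -- unit norms
  have hun : ∀ j : Fin k, ‖u j‖ = 1 := by
    intro j
    have h2 : ‖u j‖^2 = 1 := by
      rw [← real_inner_self_eq_norm_sq, hu j j, if_pos rfl]
    have h3 : (‖u j‖ - 1) * (‖u j‖ + 1) = 0 := by nlinarith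
    rcases mul_eq_zero.mp h3 with h | h
    · linarith
    · nlinarith [norm_nonneg (u j)]
  have hu' : ∀ i j : Fin k, ⟪u' i, u' j⟫ = if i = j then (1:ℝ) else 0 :=
    gs_ortho (fun i => u i + a • A (u i)) u' hGS
  have hu'n : ∀ j : Fin k, ‖u' j‖ = 1 := by
    intro j
    have h2 : ‖u' j‖^2 = 1 := by
      rw [← real_inner_self_eq_norm_sq, hu' j j, if_pos rfl]
    have h3 : (‖u' j‖ - 1) * (‖u' j‖ + 1) = 0 := by nlinarith
    rcases mul_eq_zero.mp h3 with h | h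
    · linarith
    · nlinarith [norm_nonneg (u' j)]
  have haA : ∀ j : Fin k, a * ‖A (u j)‖ ≤ ε := by
    intro j
    have h1 : ‖A (u j)‖ ≤ ‖A‖ * ‖u j‖ := A.le_opNorm (u j)
    rw [hun j, mul_one] at h1
    calc a * ‖A (u j)‖ ≤ a * ‖A‖ := mul_le_mul_of_nonneg_left h1 ha
    _ ≤ ε := hAa
  have hiA : ∀ j j' : Fin k, a * |⟪u j, A (u j')⟫| ≤ ε := by
    intro j j'
    have h1 : |⟪u j, A (u j')⟫| ≤ ‖u j‖ * ‖A (u j')‖ := abs_real_inner_le_norm _ _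
    rw [hun j, one_mul] at h1
    calc a * |⟪u j, A (u j')⟫| ≤ a * ‖A (u j')‖ := mul_le_mul_of_nonneg_left h1 ha
    _ ≤ ε := haA j'
  have hcard : ∀ i : Fin k, ((Finset.Iio i).card : ℝ) ≤ (k:ℝ) := by
    intro i
    have h := Finset.card_le_univ (Finset.Iio i)
    rw [Fintype.card_fin] at h
    exact_mod_cast h
  -- D
  set D : Fin k → E := fun i => A (u i) + ((-⟪u i, A (u i)⟫) • u i -
    (2:ℝ) • ∑ j ∈ Finset.Iio i, ⟪u j, A (u i)⟫ • u j) with hDdef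
  clear_value D
  have hsumD : ∀ i : Fin k, ‖a • (∑ j ∈ Finset.Iio i, ⟪u j, A (u i)⟫ • u j)‖ ≤ (k:ℝ) * ε := by
    intro i
    rw [Finset.smul_sum]
    calc ‖∑ j ∈ Finset.Iio i, a • (⟪u j, A (u i)⟫ • u j)‖
        ≤ ∑ j ∈ Finset.Iio i, ‖a • (⟪u j, A (u i)⟫ • u j)‖ := norm_sum_le _ _
      _ ≤ ∑ j ∈ Finset.Iio i, ε := by
          apply Finset.sum_le_sum
          intro j hj
          rw [smul_smul, norm_smul, Real.norm_eq_abs, hun, mul_one, abs_mul, abs_of_nonneg ha]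
          exact hiA j i
      _ = ((Finset.Iio i).card : ℝ) * ε := by rw [Finset.sum_const, nsmul_eq_mul]
      _ ≤ (k:ℝ) * ε := mul_le_mul_of_nonneg_right (hcard i) hε0
  have hDa : ∀ i : Fin k, ‖a • D i‖ ≤ (2*(k:ℝ)+2) * ε := by
    intro i
    have h1 : a • D i = a • A (u i) + ((-(a * ⟪u i, A (u i)⟫)) • u i -
        (2:ℝ) • (a • (∑ j ∈ Finset.Iio i, ⟪u j, A (u i)⟫ • u j))) := by
      simp only [hDdef]; module
    rw [h1]
    have h2 : ‖a • A (u i)‖ ≤ ε := by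
      rw [norm_smul, Real.norm_eq_abs, abs_of_nonneg ha]; exact haA i
    have h3 : ‖(-(a * ⟪u i, A (u i)⟫)) • u i‖ ≤ ε := by
      rw [norm_smul, hun, mul_one, Real.norm_eq_abs, abs_neg, abs_mul, abs_of_nonneg ha]
      exact hiA i i
    have h4 : ‖(2:ℝ) • (a • (∑ j ∈ Finset.Iio i, ⟪u j, A (u i)⟫ • u j))‖ ≤ 2*((k:ℝ)*ε) := by
      rw [norm_smul, Real.norm_eq_abs, show |(2:ℝ)| = 2 by norm_num]
      linarith [hsumD i]
    calc ‖a • A (u i) + ((-(a * ⟪u i, A (u i)⟫)) • u i -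
        (2:ℝ) • (a • (∑ j ∈ Finset.Iio i, ⟪u j, A (u i)⟫ • u j)))‖
        ≤ ‖a • A (u i)‖ + ‖(-(a * ⟪u i, A (u i)⟫)) • u i -
            (2:ℝ) • (a • (∑ j ∈ Finset.Iio i, ⟪u j, A (u i)⟫ • u j))‖ := norm_add_le _ _
      _ ≤ ‖a • A (u i)‖ + (‖(-(a * ⟪u i, A (u i)⟫)) • u i‖ +
            ‖(2:ℝ) • (a • (∑ j ∈ Finset.Iio i, ⟪u j, A (u i)⟫ • u j))‖) := by
          have := norm_sub_le ((-(a * ⟪u i, A (u i)⟫)) • u i)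
            ((2:ℝ) • (a • (∑ j ∈ Finset.Iio i, ⟪u j, A (u i)⟫ • u j)))
          linarith
      _ ≤ ε + (ε + 2*((k:ℝ)*ε)) := by linarith
      _ = (2*(k:ℝ)+2) * ε := by ring
  -- the key step
  have step : ∀ i : Fin k,
      (∀ j : Fin k, j < i → ‖u' j - u j - a • D j‖ ≤ B^((j:ℕ)+1) * ε^2) →
      ‖u' i - u i - a • D i‖ ≤ B^((i:ℕ)+1) * ε^2 := by
    intro i IH
    set Kp : ℝ := B^(i:ℕ) with hKpdef
    clear_value Kp
    have hKp1 : (1:ℝ) ≤ Kp := by rw [hKpdef]; exact one_le_pow₀ hB1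
    have hKpε : Kp * ε ≤ 1 := by rw [hKpdef]; exact hBε (i:ℕ) (by omega)
    have hKp' : ∀ j : Fin k, j < i → ‖u' j - u j - a • D j‖ ≤ Kp * ε^2 := by
      intro j hj
      refine (IH j hj).trans (mul_le_mul_of_nonneg_right ?_ (sq_nonneg ε))
      rw [hKpdef]
      exact pow_le_pow_right₀ hB1 (by rw [Fin.lt_def] at hj; omega)
    have h2k3B : 2*(k:ℝ)+3 ≤ B := by rw [hBdef]; nlinarith
    have h2k3ε : (2*(k:ℝ)+3) * ε ≤ 1 :=
      le_trans (mul_le_mul_of_nonneg_right h2k3B hε0) hB1ε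
    have h2k2ε : (2*(k:ℝ)+2) * ε ≤ 1 :=
      le_trans (mul_le_mul_of_nonneg_right (by linarith : 2*(k:ℝ)+2 ≤ B) hε0) hB1ε
    have h16kB : 2+16*(k:ℝ) ≤ B := by rw [hBdef]; nlinarith
    have h16kε : (2+16*(k:ℝ)) * ε ≤ 1 :=
      le_trans (mul_le_mul_of_nonneg_right h16kB hε0) hB1ε
    have hKpε2 : Kp * ε^2 ≤ ε := by
      calc Kp * ε^2 = (Kp*ε)*ε := by ring
        _ ≤ 1*ε := mul_le_mul_of_nonneg_right hKpε hε0
        _ = ε := one_mul ε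
    have h2k3ε2 : (2*(k:ℝ)+3) * ε^2 ≤ ε := by
      calc (2*(k:ℝ)+3) * ε^2 = ((2*(k:ℝ)+3)*ε)*ε := by ring
        _ ≤ 1*ε := mul_le_mul_of_nonneg_right h2k3ε hε0
        _ = ε := one_mul ε
    have h16kε2 : (2+16*(k:ℝ)) * ε^2 ≤ ε := by
      calc (2+16*(k:ℝ)) * ε^2 = ((2+16*(k:ℝ))*ε)*ε := by ring
        _ ≤ 1*ε := mul_le_mul_of_nonneg_right h16kε hε0
        _ = ε := one_mul ε
    have hclose : ∀ j : Fin k, j < i → ‖u' j - u j‖ ≤ (2*(k:ℝ)+3) * ε := by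
      intro j hj
      have h1 : u' j - u j = (u' j - u j - a • D j) + a • D j := by abel
      rw [h1]
      have h2 := norm_add_le (u' j - u j - a • D j) (a • D j)
      have h3 := hKp' j hj
      have h4 := hDa j
      linarith [hKpε2]
    obtain ⟨hw0, hw'⟩ := hGS i
    set vt : E := u i + a • A (u i) with hvtdef
    set p : E := ∑ j ∈ Finset.Iio i, ⟪vt, u' j⟫ • u' j with hpdef
    set w : E := vt - p with hwdef2
    set s : ℝ := a * ⟪u i, A (u i)⟫ with hsdef
    clear_value vt p w s
    have hsabs : |s| ≤ ε := by rw [hsdef, abs_mul, abs_of_nonneg ha]; exact hiA i i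
    have haAε : ‖a • A (u i)‖ ≤ ε := by
      rw [norm_smul, Real.norm_eq_abs, abs_of_nonneg ha]; exact haA i
    -- coefficient expansion
    have hcj : ∀ j : Fin k, j < i →
        ⟪vt, u' j⟫ = 2*(a*⟪u j, A (u i)⟫) +
          (⟪u i, u' j - u j - a • D j⟫ + a * ⟪A (u i), u' j - u j⟫) := by
      intro j hj
      have hne : i ≠ j := ne_of_gt hj
      have h1 : ⟪vt, u' j⟫ = ⟪u i, u' j⟫ + a * ⟪A (u i), u' j⟫ := by
        rw [hvtdef, inner_add_left, real_inner_smul_left]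
      have hdec : u' j = u j + (a • D j + (u' j - u j - a • D j)) := by abel
      have h2 : ⟪u i, u' j⟫ = ⟪u i, u j⟫ + (⟪u i, a • D j⟫ + ⟪u i, u' j - u j - a • D j⟫) := by
        conv_lhs => rw [hdec]
        rw [inner_add_right, inner_add_right]
      have h3 : ⟪u i, u j⟫ = 0 := by rw [hu i j, if_neg hne]
      have h4 : ⟪u i, a • D j⟫ = a * ⟪u j, A (u i)⟫ := by
        rw [real_inner_smul_right]
        congr 1
        have hDj : ⟪u i, D j⟫ = ⟪u i, A (u j)⟫ + (-⟪u j, A (u j)⟫ * ⟪u i, u j⟫ -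
            2 * ∑ j' ∈ Finset.Iio j, ⟪u j', A (u j)⟫ * ⟪u i, u j'⟫) := by
          simp only [hDdef]
          rw [inner_add_right, inner_sub_right, real_inner_smul_right, real_inner_smul_right,
            inner_sum]
          simp only [real_inner_smul_right]
        have hz : ∑ j' ∈ Finset.Iio j, ⟪u j', A (u j)⟫ * ⟪u i, u j'⟫ = 0 := by
          apply Finset.sum_eq_zero
          intro j' hj'
          rw [Finset.mem_Iio] at hj'
          have hne' : i ≠ j' := ne_of_gt (lt_trans hj' hj)
          rw [hu i j', if_neg hne', mul_zero]
        rw [hDj, h3, hz, ← hA (u i) (u j), real_inner_comm (u j) (A (u i))]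
        ring
      have h5 : ⟪A (u i), u' j⟫ = ⟪u j, A (u i)⟫ + ⟪A (u i), u' j - u j⟫ := by
        have hdec2 : u' j = u j + (u' j - u j) := by abel
        conv_lhs => rw [hdec2]
        rw [inner_add_right, real_inner_comm (u j) (A (u i))]
      rw [h1, h2, h3, h4, h5]; ring
    have hcj_err : ∀ j : Fin k, j < i →
        |⟪vt, u' j⟫ - 2*(a*⟪u j, A (u i)⟫)| ≤ (Kp + (2*(k:ℝ)+3)) * ε^2 := by
      intro j hj
      rw [hcj j hj, add_sub_cancel_left]
      have h1 : |⟪u i, u' j - u j - a • D j⟫| ≤ Kp * ε^2 := by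
        have := abs_real_inner_le_norm (u i) (u' j - u j - a • D j)
        rw [hun i, one_mul] at this
        exact this.trans (hKp' j hj)
      have h2 : |a * ⟪A (u i), u' j - u j⟫| ≤ (2*(k:ℝ)+3) * ε^2 := by
        rw [abs_mul, abs_of_nonneg ha]
        have ha1 := abs_real_inner_le_norm (A (u i)) (u' j - u j)
        have ha2 : a * |⟪A (u i), u' j - u j⟫| ≤ a * (‖A (u i)‖ * ‖u' j - u j‖) :=
          mul_le_mul_of_nonneg_left ha1 ha
        have ha3 : a * (‖A (u i)‖ * ‖u' j - u j‖) = (a * ‖A (u i)‖) * ‖u' j - u j‖ := by ring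
        have ha4 : (a * ‖A (u i)‖) * ‖u' j - u j‖ ≤ ε * ((2*(k:ℝ)+3) * ε) := by
          apply mul_le_mul (haA i) (hclose j hj) (norm_nonneg _) hε0
        nlinarith [ha2, ha4]
      calc |⟪u i, u' j - u j - a • D j⟫ + a * ⟪A (u i), u' j - u j⟫|
          ≤ |⟪u i, u' j - u j - a • D j⟫| + |a * ⟪A (u i), u' j - u j⟫| := abs_add_le _ _
        _ ≤ (Kp + (2*(k:ℝ)+3)) * ε^2 := by linarith
    have hcj_abs : ∀ j : Fin k, j < i → |⟪vt, u' j⟫| ≤ 4*ε := by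
      intro j hj
      have h1 := hcj_err j hj
      have h2 : |2*(a*⟪u j, A (u i)⟫)| ≤ 2*ε := by
        rw [abs_mul, abs_mul, abs_of_nonneg ha, show |(2:ℝ)| = 2 by norm_num]
        linarith [hiA j i]
      have h3 : |⟪vt, u' j⟫| ≤ |2*(a*⟪u j, A (u i)⟫)| + |⟪vt, u' j⟫ - 2*(a*⟪u j, A (u i)⟫)| := by
        have := abs_add_le (2*(a*⟪u j, A (u i)⟫)) (⟪vt, u' j⟫ - 2*(a*⟪u j, A (u i)⟫))
        simpa using this
      have h4 : (Kp + (2*(k:ℝ)+3)) * ε^2 ≤ 2*ε := by nlinarith [hKpε2, h2k3ε2]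
      linarith
    -- Pythagoras
    have hvtp : ⟪vt, p⟫ = ∑ j ∈ Finset.Iio i, ⟪vt, u' j⟫^2 := by
      rw [hpdef, inner_sum]
      apply Finset.sum_congr rfl
      intro j hj
      rw [real_inner_smul_right, sq]
    have hcollapse : ∀ j ∈ Finset.Iio i, ⟪u' j, p⟫ = ⟪vt, u' j⟫ := by
      intro j hj
      rw [hpdef, inner_sum]
      have hterm : ∀ j' ∈ Finset.Iio i,
          ⟪u' j, (⟪vt, u' j'⟫ : ℝ) • u' j'⟫ = if j = j' then ⟪vt, u' j'⟫ else 0 := by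
        intro j' hj'
        rw [real_inner_smul_right, hu' j j']
        by_cases h : j = j' <;> simp [h]
      rw [Finset.sum_congr rfl hterm, Finset.sum_ite_eq (Finset.Iio i) j
        (fun j' => (⟪vt, u' j'⟫ : ℝ)), if_pos hj]
    have hpp : ‖p‖^2 = ∑ j ∈ Finset.Iio i, ⟪vt, u' j⟫^2 := by
      rw [← real_inner_self_eq_norm_sq]
      conv_lhs => rw [hpdef]
      rw [sum_inner]
      apply Finset.sum_congr rfl
      intro j hj
      rw [real_inner_smul_left, ← hpdef, hcollapse j hj, sq]
    have hwsq : ‖w‖^2 = ‖vt‖^2 - ∑ j ∈ Finset.Iio i, ⟪vt, u' j⟫^2 := by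
      rw [hwdef2, norm_sub_sq_real, hvtp, hpp]; ring
    have hvtsq : ‖vt‖^2 = 1 + 2*s + ‖a • A (u i)‖^2 := by
      rw [hvtdef, norm_add_sq_real, real_inner_smul_right, ← hsdef, hun i, one_pow]
    have hsumsq_le : ∑ j ∈ Finset.Iio i, ⟪vt, u' j⟫^2 ≤ (k:ℝ) * (16*ε^2) := by
      calc ∑ j ∈ Finset.Iio i, ⟪vt, u' j⟫^2 ≤ ∑ j ∈ Finset.Iio i, 16*ε^2 := by
            apply Finset.sum_le_sum
            intro j hj
            rw [Finset.mem_Iio] at hj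
            have h1 := hcj_abs j hj
            calc (⟪vt, u' j⟫:ℝ)^2 ≤ (4*ε)^2 :=
                  sq_le_sq' (by linarith [(abs_le.mp h1).1]) (abs_le.mp h1).2
              _ = 16*ε^2 := by ring
        _ = ((Finset.Iio i).card : ℝ) * (16*ε^2) := by rw [Finset.sum_const, nsmul_eq_mul]
        _ ≤ (k:ℝ) * (16*ε^2) := by
            apply mul_le_mul_of_nonneg_right (hcard i)
            positivity
    have hsumsq_nonneg : 0 ≤ ∑ j ∈ Finset.Iio i, ⟪vt, u' j⟫^2 :=
      Finset.sum_nonneg fun j hj => sq_nonneg _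
    have hw2diff : |‖w‖^2 - (1+s)^2| ≤ (2 + 16*(k:ℝ)) * ε^2 := by
      have h1 : ‖w‖^2 - (1+s)^2 = ‖a • A (u i)‖^2 - s^2
          - ∑ j ∈ Finset.Iio i, ⟪vt, u' j⟫^2 := by
        rw [hwsq, hvtsq]; ring
      rw [h1]
      have h2 : ‖a • A (u i)‖^2 ≤ ε^2 := pow_le_pow_left₀ (norm_nonneg _) haAε 2
      have h3 : s^2 ≤ ε^2 := by
        rw [← sq_abs s]; exact pow_le_pow_left₀ (abs_nonneg s) hsabs 2
      have h4 : 0 ≤ (k:ℝ) * ε^2 := mul_nonneg hk0 (sq_nonneg ε)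
      rw [abs_le]
      constructor
      · linarith [sq_nonneg ‖a • A (u i)‖, sq_nonneg ε, hsumsq_le]
      · linarith [sq_nonneg s, hsumsq_nonneg, sq_nonneg ε]
    have h1s : 1/2 ≤ 1 + s := by
      have := abs_le.mp hsabs
      linarith
    have hwlow : 1/2 ≤ ‖w‖ := by
      have h1 := (abs_le.mp hw2diff).1
      have hs' := abs_le.mp hsabs
      have hm1 : (0:ℝ) ≤ (s+ε)*(2+s-ε) :=
        mul_nonneg (by linarith) (by linarith)
      have hq : 1/4 ≤ ‖w‖^2 := by nlinarith [h16kε2, sq_nonneg ε]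
      exact helper_sqrt hq (norm_nonneg w)
    have hwinv : ‖w‖⁻¹ ≤ 2 := by
      rw [show (2:ℝ) = (1/2)⁻¹ by norm_num]
      exact inv_anti₀ (by norm_num) hwlow
    have hwdiff : |‖w‖ - (1+s)| ≤ (2 + 16*(k:ℝ)) * ε^2 :=
      helper_absdiff hwlow h1s hw2diff
    -- main identity
    have hid : u' i - u i - a • D i =
        ‖w‖⁻¹ • (w - (1+s) • (u i + a • D i)) +
        ((1+s) * ‖w‖⁻¹ - 1) • (u i + a • D i) := by
      rw [hw']; module
    have hid2 : w - (1+s) • (u i + a • D i) =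
        s • (u i - (u i + a • D i)) +
        ((2*a) • (∑ j ∈ Finset.Iio i, ⟪u j, A (u i)⟫ • u j) - p) := by
      rw [hwdef2, hvtdef, hsdef]
      simp only [hDdef]
      rw [hpdef]
      module
    have hsum_eq : (2*a) • (∑ j ∈ Finset.Iio i, ⟪u j, A (u i)⟫ • u j) - p =
        ∑ j ∈ Finset.Iio i, ((2*(a*⟪u j, A (u i)⟫)) • (u j - u' j) +
          (2*(a*⟪u j, A (u i)⟫) - ⟪vt, u' j⟫) • u' j) := by
      rw [hpdef, Finset.smul_sum, ← Finset.sum_sub_distrib]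
      apply Finset.sum_congr rfl
      intro j hj
      module
    have hsum_bound : ‖(2*a) • (∑ j ∈ Finset.Iio i, ⟪u j, A (u i)⟫ • u j) - p‖ ≤
        (k:ℝ) * ((Kp + (6*(k:ℝ)+9)) * ε^2) := by
      rw [hsum_eq]
      refine le_trans (norm_sum_le _ _) ?_
      calc ∑ j ∈ Finset.Iio i, ‖(2*(a*⟪u j, A (u i)⟫)) • (u j - u' j) +
            (2*(a*⟪u j, A (u i)⟫) - ⟪vt, u' j⟫) • u' j‖
          ≤ ∑ j ∈ Finset.Iio i, (Kp + (6*(k:ℝ)+9)) * ε^2 := by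
            apply Finset.sum_le_sum
            intro j hj
            rw [Finset.mem_Iio] at hj
            have hb1 : ‖(2*(a*⟪u j, A (u i)⟫)) • (u j - u' j)‖ ≤ 2*ε * ((2*(k:ℝ)+3)*ε) := by
              rw [norm_smul, Real.norm_eq_abs]
              have hc1 : |2*(a*⟪u j, A (u i)⟫)| ≤ 2*ε := by
                rw [abs_mul, abs_mul, abs_of_nonneg ha, show |(2:ℝ)| = 2 by norm_num]
                linarith [hiA j i]
              have hc2 : ‖u j - u' j‖ ≤ (2*(k:ℝ)+3)*ε := by
                rw [norm_sub_rev]; exact hclose j hj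
              apply mul_le_mul hc1 hc2 (norm_nonneg _) (by positivity)
            have hb2 : ‖(2*(a*⟪u j, A (u i)⟫) - ⟪vt, u' j⟫) • u' j‖ ≤
                (Kp + (2*(k:ℝ)+3)) * ε^2 := by
              rw [norm_smul, Real.norm_eq_abs, hu'n j, mul_one, abs_sub_comm]
              exact hcj_err j hj
            have := norm_add_le ((2*(a*⟪u j, A (u i)⟫)) • (u j - u' j))
              ((2*(a*⟪u j, A (u i)⟫) - ⟪vt, u' j⟫) • u' j)
            nlinarith [hb1, hb2]
        _ = ((Finset.Iio i).card : ℝ) * ((Kp + (6*(k:ℝ)+9)) * ε^2) := by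
            rw [Finset.sum_const, nsmul_eq_mul]
        _ ≤ (k:ℝ) * ((Kp + (6*(k:ℝ)+9)) * ε^2) := by
            apply mul_le_mul_of_nonneg_right (hcard i)
            positivity
    have hwz : ‖w - (1+s) • (u i + a • D i)‖ ≤
        ((2*(k:ℝ)+2) + (k:ℝ) * (Kp + (6*(k:ℝ)+9))) * ε^2 := by
      rw [hid2]
      have h1 : ‖s • (u i - (u i + a • D i))‖ ≤ (2*(k:ℝ)+2) * ε^2 := by
        rw [norm_smul, Real.norm_eq_abs, show u i - (u i + a • D i) = -(a • D i) by abel,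
          norm_neg]
        have := mul_le_mul hsabs (hDa i) (norm_nonneg _) hε0
        nlinarith [this]
      have h2 := norm_add_le (s • (u i - (u i + a • D i)))
        ((2*a) • (∑ j ∈ Finset.Iio i, ⟪u j, A (u i)⟫ • u j) - p)
      linarith [hsum_bound]
    have hz2 : ‖u i + a • D i‖ ≤ 2 := by
      have h1 := norm_add_le (u i) (a • D i)
      rw [hun i] at h1
      have := hDa i
      linarith
    have habs2 : |(1+s) * ‖w‖⁻¹ - 1| ≤ 2*((2 + 16*(k:ℝ)) * ε^2) := by
      have hwpos : (0:ℝ) < ‖w‖ := lt_of_lt_of_le (by norm_num) hwlow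
      have hwne : ‖w‖ ≠ 0 := hwpos.ne'
      have hfe : (1+s) * ‖w‖⁻¹ - 1 = ((1+s) - ‖w‖) * ‖w‖⁻¹ := by field_simp
      rw [hfe, abs_mul, abs_inv, abs_norm, abs_sub_comm]
      calc |‖w‖ - (1+s)| * ‖w‖⁻¹ ≤ ((2 + 16*(k:ℝ)) * ε^2) * 2 :=
            mul_le_mul hwdiff hwinv (by positivity) (by positivity)
        _ = 2*((2 + 16*(k:ℝ)) * ε^2) := by ring
    rw [hid]
    have hfinal1 := norm_add_le (‖w‖⁻¹ • (w - (1+s) • (u i + a • D i)))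
      (((1+s) * ‖w‖⁻¹ - 1) • (u i + a • D i))
    rw [norm_smul, norm_smul, Real.norm_eq_abs, Real.norm_eq_abs, abs_inv, abs_norm] at hfinal1
    have ht1 : ‖w‖⁻¹ * ‖w - (1+s) • (u i + a • D i)‖ ≤
        2 * (((2*(k:ℝ)+2) + (k:ℝ)*(Kp + (6*(k:ℝ)+9))) * ε^2) :=
      mul_le_mul hwinv hwz (norm_nonneg _) (by norm_num)
    have ht2 : |(1+s) * ‖w‖⁻¹ - 1| * ‖u i + a • D i‖ ≤ (2*((2 + 16*(k:ℝ)) * ε^2)) * 2 :=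
      mul_le_mul habs2 hz2 (norm_nonneg _) (by positivity)
    have hpow : B^((i:ℕ)+1) = B * Kp := by rw [hKpdef, pow_succ]; ring
    rw [hpow]
    have hBk : (0:ℝ) ≤ B - 2*(k:ℝ) := by rw [hBdef]; exact hB_aux1 _ hk0
    have h1' : (B - 2*(k:ℝ)) ≤ (B - 2*(k:ℝ)) * Kp := by
      calc (B - 2*(k:ℝ)) = (B - 2*(k:ℝ)) * 1 := (mul_one _).symm
        _ ≤ (B - 2*(k:ℝ)) * Kp := mul_le_mul_of_nonneg_left hKp1 hBk
    have h2 : (B - 2*(k:ℝ)) * ε^2 ≤ ((B - 2*(k:ℝ)) * Kp) * ε^2 :=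
      mul_le_mul_of_nonneg_right h1' (sq_nonneg ε)
    have h3 : (12*(k:ℝ)^2+88*(k:ℝ)+12) * ε^2 ≤ B * ε^2 :=
      mul_le_mul_of_nonneg_right (by rw [hBdef]; exact hB_aux2 _ hk0) (sq_nonneg ε)
    have hkey : 2 * (((2*(k:ℝ)+2) + (k:ℝ)*(Kp + (6*(k:ℝ)+9))) * ε^2) +
        (2*((2 + 16*(k:ℝ)) * ε^2)) * 2 ≤ B * Kp * ε^2 := by
      have hx : 0 ≤ (k:ℝ)*ε^2 := mul_nonneg hk0 (sq_nonneg ε)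
      linarith [h2, h3]
    linarith

  have main : ∀ m : ℕ, ∀ i : Fin k, (i:ℕ) ≤ m → ‖u' i - u i - a • D i‖ ≤ B^((i:ℕ)+1) * ε^2 := by
    intro m
    induction m with
    | zero =>
      intro i hi
      apply step
      intro j hj
      rw [Fin.lt_def] at hj; omega
    | succ m IHm =>
      intro i hi
      apply step
      intro j hj
      have : (j:ℕ) ≤ m := by rw [Fin.lt_def] at hj; omega
      exact IHm j this
  intro i
  have h1 := main (i:ℕ) i le_rfl
  have h2 : B^((i:ℕ)+1) * ε^2 ≤ B^(k+1) * ε^2 :=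
    mul_le_mul_of_nonneg_right (hBpow_le _ (by omega)) (sq_nonneg ε)
  calc ‖u' i - u i - a • (A (u i) + ((-⟪u i, A (u i)⟫) • u i -
        (2:ℝ) • ∑ j ∈ Finset.Iio i, ⟪u j, A (u i)⟫ • u j))‖
      = ‖u' i - u i - a • D i‖ := by rw [hDdef]
    _ ≤ B^((i:ℕ)+1) * ε^2 := h1
    _ ≤ B^(k+1) * ε^2 := h2

set_option maxHeartbeats 1000000 in
theorem hisd_stmt1
    (d k : ℕ) (hd : 1 ≤ d) (hk : 1 ≤ k) (hkd : k ≤ d)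
    (F : EuclideanSpace ℝ (Fin d) → EuclideanSpace ℝ (Fin d))
    (J : EuclideanSpace ℝ (Fin d) → (EuclideanSpace ℝ (Fin d) →L[ℝ] EuclideanSpace ℝ (Fin d)))
    (hJsymm : ∀ x u w, ⟪J x u, w⟫ = ⟪u, J x w⟫)
    (L : ℝ) (hL : 0 < L)
    (hLip : ∀ x₁ x₂ : EuclideanSpace ℝ (Fin d), ‖J x₂ - J x₁‖ + ‖F x₂ - F x₁‖ ≤ L * ‖x₂ - x₁‖)
    (hgrow : ∀ x : EuclideanSpace ℝ (Fin d), ‖F x‖ ≤ L * (1 + ‖x‖))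
    (β γ : ℝ) (hβ : 0 < β) (hγ : 0 < γ)
    (T : ℝ) (hT : 0 < T)
    (x₀ : EuclideanSpace ℝ (Fin d))
    (v₀ : Fin k → EuclideanSpace ℝ (Fin d))
    (hv₀ : ∀ i j : Fin k, ⟪v₀ i, v₀ j⟫ = if i = j then (1:ℝ) else 0) :
    ∃ τ₀ > (0:ℝ), ∃ Q > (0:ℝ), ∀ (N : ℕ) (τ : ℝ), 0 < N → τ = T / N → τ ≤ τ₀ →
      ∀ (x : ℕ → EuclideanSpace ℝ (Fin d)) (v : ℕ → Fin k → EuclideanSpace ℝ (Fin d)),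
        x 0 = x₀ → v 0 = v₀ →
        (∀ n < N, x (n+1) = x n + τ •
            (β • (F (x n) - (2:ℝ) • ∑ j, ⟪v n j, F (x n)⟫ • v n j))) →
        (∀ n < N, ∀ i : Fin k,
          let vt := v n i + (τ * γ) • J (x n) (v n i)
          let w := vt - ∑ j ∈ Finset.Iio i, ⟪vt, v (n+1) j⟫ • v (n+1) j
          w ≠ 0 ∧ v (n+1) i = ‖w‖⁻¹ • w) →
        ∀ n < N, ∀ i : Fin k,
          ‖τ⁻¹ • (v (n+1) i - v n i) - γ • J (x n) (v n i) -
            γ • ((-⟪v n i, J (x n) (v n i)⟫) • v n i -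
              (2:ℝ) • ∑ j ∈ Finset.Iio i, ⟪v n j, J (x n) (v n i)⟫ • v n j)‖ ≤ Q * τ := by
  have hk0 : (0:ℝ) ≤ (k:ℝ) := Nat.cast_nonneg k
  set M : ℝ := (1+‖x₀‖) * Real.exp (β*(2*(k:ℝ)+1)*L*T) with hMdef
  have hexp1 : 1 ≤ Real.exp (β*(2*(k:ℝ)+1)*L*T) :=
    Real.one_le_exp (by positivity)
  have hM1 : 1 ≤ M := by
    rw [hMdef]
    nlinarith [norm_nonneg x₀]
  set MJ : ℝ := ‖J x₀‖ + L*(M + ‖x₀‖) + 1 with hMJdef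
  have hMJ1 : 1 ≤ MJ := by
    rw [hMJdef]
    nlinarith [norm_nonneg (J x₀), norm_nonneg x₀, hL.le]
  set g : ℝ := γ * MJ with hgdef
  have hg0 : 0 < g := by rw [hgdef]; nlinarith
  set K : ℝ := (400*((k:ℝ)+1)^2)^(k+1) with hKdef
  have hK0 : 0 < K := by rw [hKdef]; positivity
  refine ⟨1/(K*g), by positivity, K*g^2, by positivity, ?_⟩
  intro N τ hN hτeq hττ₀ x v hx0 hv0 hxrec hGS
  have hNpos : (0:ℝ) < (N:ℝ) := by exact_mod_cast hN
  have hτ0 : 0 < τ := by rw [hτeq]; positivity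
  have hτN : τ * (N:ℝ) = T := by rw [hτeq]; field_simp
  -- orthonormality along the trajectory
  have hortho : ∀ n, n ≤ N → ∀ i j : Fin k, ⟪v n i, v n j⟫ = if i = j then (1:ℝ) else 0 := by
    intro n
    induction n with
    | zero => intro _ i j; rw [hv0]; exact hv₀ i j
    | succ n IHn =>
      intro hn
      have hn' : n < N := by omega
      exact gs_ortho (fun i => v n i + (τ*γ) • (J (x n)) (v n i)) (v (n+1))
        (fun i => hGS n hn' i)
  have hvnorm : ∀ n, n ≤ N → ∀ j : Fin k, ‖v n j‖ = 1 := by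
    intro n hn j
    have h2 : ‖v n j‖^2 = 1 := by
      rw [← real_inner_self_eq_norm_sq, hortho n hn j j, if_pos rfl]
    have h3 : (‖v n j‖ - 1) * (‖v n j‖ + 1) = 0 := by nlinarith
    rcases mul_eq_zero.mp h3 with h | h
    · linarith
    · nlinarith [norm_nonneg (v n j)]
  -- bound on the trajectory
  set q : ℝ := τ*(β*(2*(k:ℝ)+1)*L) with hqdef
  have hq0 : 0 ≤ q := by rw [hqdef]; positivity
  have hxstep : ∀ n, n < N → 1 + ‖x (n+1)‖ ≤ (1 + ‖x n‖) * (1 + q) := by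
    intro n hn
    rw [hxrec n hn]
    have hFb : ‖F (x n)‖ ≤ L*(1+‖x n‖) := hgrow (x n)
    have hsum : ‖∑ j, ⟪v n j, F (x n)⟫ • v n j‖ ≤ (k:ℝ) * ‖F (x n)‖ := by
      refine le_trans (norm_sum_le _ _) ?_
      calc ∑ j, ‖(⟪v n j, F (x n)⟫:ℝ) • v n j‖ ≤ ∑ _j : Fin k, ‖F (x n)‖ := by
            apply Finset.sum_le_sum
            intro j _
            rw [norm_smul, Real.norm_eq_abs, hvnorm n hn.le j, mul_one]
            have := abs_real_inner_le_norm (v n j) (F (x n))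
            rw [hvnorm n hn.le j, one_mul] at this
            exact this
        _ = (k:ℝ) * ‖F (x n)‖ := by
            rw [Finset.sum_const, nsmul_eq_mul, Finset.card_univ, Fintype.card_fin]
    have h1 : ‖x n + τ • (β • (F (x n) - (2:ℝ) • ∑ j, ⟪v n j, F (x n)⟫ • v n j))‖ ≤
        ‖x n‖ + τ * (β * (‖F (x n)‖ + 2*((k:ℝ) * ‖F (x n)‖))) := by
      refine le_trans (norm_add_le _ _) ?_
      have h2 : ‖τ • (β • (F (x n) - (2:ℝ) • ∑ j, ⟪v n j, F (x n)⟫ • v n j))‖ =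
          τ * (β * ‖F (x n) - (2:ℝ) • ∑ j, ⟪v n j, F (x n)⟫ • v n j‖) := by
        rw [norm_smul, norm_smul, Real.norm_eq_abs, Real.norm_eq_abs,
          abs_of_pos hτ0, abs_of_pos hβ]
      have h3 : ‖F (x n) - (2:ℝ) • ∑ j, ⟪v n j, F (x n)⟫ • v n j‖ ≤
          ‖F (x n)‖ + 2*((k:ℝ) * ‖F (x n)‖) := by
        refine le_trans (norm_sub_le _ _) ?_
        rw [norm_smul, Real.norm_eq_abs, show |(2:ℝ)| = 2 by norm_num]
        linarith [hsum]
      rw [h2]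
      have hτβ : 0 ≤ τ * β := by positivity
      nlinarith [mul_le_mul_of_nonneg_left h3 hτβ]
    have h4 : τ * (β * (‖F (x n)‖ + 2*((k:ℝ) * ‖F (x n)‖))) ≤ q * (1 + ‖x n‖) := by
      rw [hqdef]
      have h5 : ‖F (x n)‖ + 2*((k:ℝ) * ‖F (x n)‖) = (2*(k:ℝ)+1) * ‖F (x n)‖ := by ring
      rw [h5]
      have h6 : (2*(k:ℝ)+1) * ‖F (x n)‖ ≤ (2*(k:ℝ)+1) * (L*(1+‖x n‖)) :=
        mul_le_mul_of_nonneg_left hFb (by positivity)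
      have h7 : 0 ≤ τ * β := by positivity
      nlinarith [mul_le_mul_of_nonneg_left h6 h7]
    nlinarith [h1, h4]
  have hxp : ∀ n, n ≤ N → 1 + ‖x n‖ ≤ (1+‖x₀‖) * (1+q)^n := by
    intro n
    induction n with
    | zero => intro _; rw [hx0, pow_zero, mul_one]
    | succ n IHn =>
      intro hn
      have hn' : n < N := by omega
      have h1 := hxstep n hn'
      have h2 := IHn (by omega)
      have h3 : (1 + ‖x n‖) * (1 + q) ≤ ((1+‖x₀‖) * (1+q)^n) * (1 + q) :=
        mul_le_mul_of_nonneg_right h2 (by linarith)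
      rw [pow_succ]
      nlinarith [h1, h3]
  have hxbound : ∀ n, n ≤ N → 1 + ‖x n‖ ≤ M := by
    intro n hn
    have h1 := hxp n hn
    have h2 : (1+q)^n ≤ Real.exp (β*(2*(k:ℝ)+1)*L*T) := by
      have h3 : 1 + q ≤ Real.exp q := by linarith [Real.add_one_le_exp q]
      have h4 : (1+q)^n ≤ (Real.exp q)^n := pow_le_pow_left₀ (by linarith) h3 n
      have h5 : (Real.exp q)^n = Real.exp ((n:ℝ) * q) := (Real.exp_nat_mul q n).symm
      have h6 : (n:ℝ) * q ≤ β*(2*(k:ℝ)+1)*L*T := by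
        rw [hqdef]
        have h7 : τ * (n:ℝ) ≤ T := by
          rw [← hτN]
          apply mul_le_mul_of_nonneg_left _ hτ0.le
          exact_mod_cast hn
        nlinarith [mul_le_mul_of_nonneg_left h7 (show (0:ℝ) ≤ β*(2*(k:ℝ)+1)*L by positivity)]
      calc (1+q)^n ≤ (Real.exp q)^n := h4
        _ = Real.exp ((n:ℝ) * q) := h5
        _ ≤ Real.exp (β*(2*(k:ℝ)+1)*L*T) := Real.exp_le_exp.mpr h6
    rw [hMdef]
    have h8 : 0 ≤ 1+‖x₀‖ := by positivity
    nlinarith [h1, mul_le_mul_of_nonneg_left h2 h8, norm_nonneg (x n)]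
  -- main estimate
  intro n hn i
  have hJb : ‖J (x n)‖ ≤ MJ := by
    have h1 := hLip x₀ (x n)
    have h2 : ‖J (x n)‖ - ‖J x₀‖ ≤ ‖J (x n) - J x₀‖ := norm_sub_norm_le _ _
    have h3 : ‖x n - x₀‖ ≤ ‖x n‖ + ‖x₀‖ := norm_sub_le _ _
    have h4 : ‖x n‖ ≤ M - 1 := by linarith [hxbound n hn.le]
    have h5 : L * ‖x n - x₀‖ ≤ L * (M + ‖x₀‖) := by
      apply mul_le_mul_of_nonneg_left _ hL.le
      linarith
    rw [hMJdef]
    linarith [norm_nonneg (F (x n) - F x₀)]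
  have hAa : (τ*γ) * ‖J (x n)‖ ≤ τ*g := by
    rw [hgdef]
    have h1 : (τ*γ) * ‖J (x n)‖ ≤ (τ*γ) * MJ :=
      mul_le_mul_of_nonneg_left hJb (by positivity)
    nlinarith [h1]
  have hsm : (400*((k:ℝ)+1)^2)^(k+1) * (τ*g) ≤ 1 := by
    rw [← hKdef]
    have h1 : τ * g ≤ (1/(K*g)) * g := mul_le_mul_of_nonneg_right hττ₀ hg0.le
    have h2 : (1/(K*g)) * g = 1/K := by field_simp
    have h3 : K * (τ*g) ≤ K * (1/K) :=
      mul_le_mul_of_nonneg_left (by rw [← h2]; exact h1) hK0.le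
    have h4 : K * (1/K) = 1 := by field_simp
    linarith
  have hmain := gs_main (J (x n)) (hJsymm (x n)) (τ*γ) (τ*g) (by positivity) hAa
    (v n) (v (n+1)) (hortho n hn.le) (fun i => hGS n hn i) hsm i
  rw [← hKdef] at hmain
  have hτne : τ ≠ 0 := hτ0.ne'
  have hexpr : τ⁻¹ • (v (n+1) i - v n i) - γ • (J (x n)) (v n i) -
      γ • ((-⟪v n i, (J (x n)) (v n i)⟫) • v n i -
        (2:ℝ) • ∑ j ∈ Finset.Iio i, ⟪v n j, (J (x n)) (v n i)⟫ • v n j) =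
      τ⁻¹ • (v (n+1) i - v n i - (τ*γ) • ((J (x n)) (v n i) +
        ((-⟪v n i, (J (x n)) (v n i)⟫) • v n i -
        (2:ℝ) • ∑ j ∈ Finset.Iio i, ⟪v n j, (J (x n)) (v n i)⟫ • v n j))) := by
    match_scalars <;> (field_simp; try ring)
  rw [hexpr, norm_smul, Real.norm_eq_abs, abs_inv, abs_of_pos hτ0]
  have h4 : τ⁻¹ * ‖v (n+1) i - v n i - (τ*γ) • ((J (x n)) (v n i) +
      ((-⟪v n i, (J (x n)) (v n i)⟫) • v n i -
      (2:ℝ) • ∑ j ∈ Finset.Iio i, ⟪v n j, (J (x n)) (v n i)⟫ • v n j))‖ ≤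
      τ⁻¹ * (K * (τ*g)^2) := mul_le_mul_of_nonneg_left hmain (by positivity)
  have h5 : τ⁻¹ * (K * (τ*g)^2) = K*g^2*τ := by field_simp
  linarith
end
end

section
/- Under Assumption A, there exist τ₀ > 0 and Q > 0, depending only on d, k, L, β, γ, ‖x₀‖ and T, such that for every N ∈ ℕ with τ = T/N ≤ τ₀, the Gram–Schmidt normalization factor of the discrete HiSD scheme satisfies |1 − Y_{i,n}| ≤ |1 − Y_{i,n}²| ≤ Q(Σ_{j=1}^{i−1} ‖v_{j,n} − v_{j,n−1}‖² + τ) for all 1 ≤ i ≤ k and 1 ≤ n ≤ N. -/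
open scoped RealInnerProductSpace BigOperators

set_option maxHeartbeats 2000000

noncomputable section

lemma gs_step {E : Type*} [NormedAddCommGroup E] [InnerProductSpace ℝ E] {k : ℕ}
    (vt v' : Fin k → E)
    (h : ∀ i : Fin k,
      (vt i - ∑ j ∈ Finset.Iio i, ⟪vt i, v' j⟫ • v' j) ≠ 0 ∧
      v' i = ‖vt i - ∑ j ∈ Finset.Iio i, ⟪vt i, v' j⟫ • v' j‖⁻¹ •
        (vt i - ∑ j ∈ Finset.Iio i, ⟪vt i, v' j⟫ • v' j)) :
    Orthonormal ℝ v' := by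
  have hnorm : ∀ i, ‖v' i‖ = 1 := by
    intro i
    rw [(h i).2, norm_smul, norm_inv, norm_norm,
      inv_mul_cancel₀ (norm_ne_zero_iff.mpr (h i).1)]
  have horth : ∀ m : ℕ, ∀ i j : Fin k, (i : ℕ) ≤ m → j < i → ⟪v' i, v' j⟫ = 0 := by
    intro m
    induction m with
    | zero => intro i j hi hj; exact absurd (Fin.lt_def.mp hj) (by omega)
    | succ m IH =>
      intro i j him hj
      by_cases hcase : (i : ℕ) ≤ m
      · exact IH i j hcase hj
      have hij : ∀ a b : Fin k, a < i → b < i → a ≠ b → ⟪v' a, v' b⟫ = 0 := by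
        intro a b ha hb hab
        rcases lt_or_gt_of_ne hab with hlt | hgt
        · rw [real_inner_comm]; exact IH b a (by omega) hlt
        · exact IH a b (by omega) hgt
      rw [(h i).2, real_inner_smul_left]
      have hw : ⟪vt i - ∑ j' ∈ Finset.Iio i, ⟪vt i, v' j'⟫ • v' j', v' j⟫ = 0 := by
        rw [inner_sub_left, sum_inner]
        have : ∀ j' ∈ Finset.Iio i, ⟪(⟪vt i, v' j'⟫ : ℝ) • v' j', v' j⟫
            = if j' = j then ⟪vt i, v' j⟫ else 0 := by
          intro j' hj'
          rw [real_inner_smul_left]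
          by_cases hjj : j' = j
          · subst hjj
            rw [real_inner_self_eq_norm_sq, hnorm, if_pos rfl]; ring
          · rw [hij j' j (Finset.mem_Iio.mp hj') hj hjj, if_neg hjj, mul_zero]
        rw [Finset.sum_congr rfl this, Finset.sum_ite_eq' _ j,
          if_pos (Finset.mem_Iio.mpr hj)]
        ring
      rw [hw, mul_zero]
  rw [orthonormal_iff_ite]
  intro i j
  by_cases hij : i = j
  · subst hij; rw [if_pos rfl, real_inner_self_eq_norm_sq, hnorm]; norm_num
  · rw [if_neg hij]
    rcases lt_or_gt_of_ne hij with hlt | hgt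
    · rw [real_inner_comm]; exact horth j j i le_rfl hlt
    · exact horth i i j le_rfl hgt

theorem hisd_stmt2
    (d k : ℕ) (hd : 1 ≤ d) (hk : 1 ≤ k) (hkd : k ≤ d)
    (F : EuclideanSpace ℝ (Fin d) → EuclideanSpace ℝ (Fin d))
    (J : EuclideanSpace ℝ (Fin d) → (EuclideanSpace ℝ (Fin d) →L[ℝ] EuclideanSpace ℝ (Fin d)))
    (hJsymm : ∀ x u w, ⟪J x u, w⟫ = ⟪u, J x w⟫)
    (L : ℝ) (hL : 0 < L)
    (hLip : ∀ x₁ x₂ : EuclideanSpace ℝ (Fin d), ‖J x₂ - J x₁‖ + ‖F x₂ - F x₁‖ ≤ L * ‖x₂ - x₁‖)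
    (hgrow : ∀ x : EuclideanSpace ℝ (Fin d), ‖F x‖ ≤ L * (1 + ‖x‖))
    (β γ : ℝ) (hβ : 0 < β) (hγ : 0 < γ)
    (T : ℝ) (hT : 0 < T)
    (x₀ : EuclideanSpace ℝ (Fin d))
    (v₀ : Fin k → EuclideanSpace ℝ (Fin d))
    (hv₀ : ∀ i j : Fin k, ⟪v₀ i, v₀ j⟫ = if i = j then (1:ℝ) else 0) :
    ∃ τ₀ > (0:ℝ), ∃ Q > (0:ℝ), ∀ (N : ℕ) (τ : ℝ), 0 < N → τ = T / N → τ ≤ τ₀ →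
      ∀ (x : ℕ → EuclideanSpace ℝ (Fin d)) (v : ℕ → Fin k → EuclideanSpace ℝ (Fin d)),
        x 0 = x₀ → v 0 = v₀ →
        (∀ n < N, x (n+1) = x n + τ •
            (β • (F (x n) - (2:ℝ) • ∑ j, ⟪v n j, F (x n)⟫ • v n j))) →
        (∀ n < N, ∀ i : Fin k,
          let vt := v n i + (τ * γ) • J (x n) (v n i)
          let w := vt - ∑ j ∈ Finset.Iio i, ⟪vt, v (n+1) j⟫ • v (n+1) j
          w ≠ 0 ∧ v (n+1) i = ‖w‖⁻¹ • w) →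
        ∀ n < N, ∀ i : Fin k,
          let vt := v n i + (τ * γ) • J (x n) (v n i)
          let Y := ‖vt - ∑ j ∈ Finset.Iio i, ⟪vt, v (n+1) j⟫ • v (n+1) j‖
          |1 - Y| ≤ |1 - Y^2| ∧
            |1 - Y^2| ≤ Q * ((∑ j ∈ Finset.Iio i, ‖v (n+1) j - v n j‖^2) + τ) := by
  set c : ℝ := β * L * (1 + 2 * k) with hc
  have hc0 : 0 < c := by positivity
  set M : ℝ := Real.exp (c * T) * (1 + ‖x₀‖) with hM
  have hM0 : 0 < M := by positivity
  set B : ℝ := ‖J x₀‖ + L * (M + ‖x₀‖) with hB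
  have hB0 : 0 ≤ B := by positivity
  refine ⟨1, one_pos, 3 + 2*γ*B + γ^2*B^2*(1+2*k), by positivity, ?_⟩
  intro N τ hN hτdef hτ1 x v hx0 hv0 hX hGS
  have hNpos : (0:ℝ) < N := by exact_mod_cast hN
  have hτpos : 0 < τ := by rw [hτdef]; positivity
  -- orthonormality of v n
  have hON : ∀ n, n ≤ N → Orthonormal ℝ (v n) := by
    intro n
    induction n with
    | zero =>
      intro _
      rw [hv0, orthonormal_iff_ite]
      exact hv₀
    | succ n IH =>
      intro hn
      exact gs_step (fun i => v n i + (τ * γ) • J (x n) (v n i)) (v (n+1))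
        (fun i => hGS n (by omega) i)
  -- bound on ‖x n‖
  have hstep : ∀ n < N, 1 + ‖x (n+1)‖ ≤ (1 + τ * c) * (1 + ‖x n‖) := by
    intro n hn
    have hFb : ‖F (x n) - (2:ℝ) • ∑ j, ⟪v n j, F (x n)⟫ • v n j‖
        ≤ (1 + 2 * k) * ‖F (x n)‖ := by
      have hS : ‖∑ j, (⟪v n j, F (x n)⟫:ℝ) • v n j‖ ≤ (k:ℝ) * ‖F (x n)‖ := by
        calc ‖∑ j, (⟪v n j, F (x n)⟫:ℝ) • v n j‖
            ≤ ∑ j, ‖(⟪v n j, F (x n)⟫:ℝ) • v n j‖ := norm_sum_le _ _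
          _ ≤ ∑ _j : Fin k, ‖F (x n)‖ := by
              apply Finset.sum_le_sum
              intro j _
              rw [norm_smul, (hON n (le_of_lt hn)).1 j, mul_one]
              calc |(⟪v n j, F (x n)⟫:ℝ)| ≤ ‖v n j‖ * ‖F (x n)‖ :=
                    abs_real_inner_le_norm _ _
                _ = ‖F (x n)‖ := by rw [(hON n (le_of_lt hn)).1 j, one_mul]
          _ = (k:ℝ) * ‖F (x n)‖ := by
              rw [Finset.sum_const, Finset.card_univ, Fintype.card_fin, nsmul_eq_mul]
      calc ‖F (x n) - (2:ℝ) • ∑ j, (⟪v n j, F (x n)⟫:ℝ) • v n j‖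
          ≤ ‖F (x n)‖ + ‖(2:ℝ) • ∑ j, (⟪v n j, F (x n)⟫:ℝ) • v n j‖ := norm_sub_le _ _
        _ = ‖F (x n)‖ + 2 * ‖∑ j, (⟪v n j, F (x n)⟫:ℝ) • v n j‖ := by
            rw [norm_smul]; norm_num
        _ ≤ ‖F (x n)‖ + 2 * ((k:ℝ) * ‖F (x n)‖) := by
            have := hS; nlinarith
        _ = (1 + 2 * k) * ‖F (x n)‖ := by ring
    have h1 : ‖x (n+1)‖ ≤ ‖x n‖ + τ * β * ((1 + 2*k) * ‖F (x n)‖) := by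
      rw [hX n hn]
      calc ‖x n + τ • (β • (F (x n) - (2:ℝ) • ∑ j, ⟪v n j, F (x n)⟫ • v n j))‖
          ≤ ‖x n‖ + ‖τ • (β • (F (x n) - (2:ℝ) • ∑ j, ⟪v n j, F (x n)⟫ • v n j))‖ :=
            norm_add_le _ _
        _ = ‖x n‖ + τ * (β * ‖F (x n) - (2:ℝ) • ∑ j, ⟪v n j, F (x n)⟫ • v n j‖) := by
            rw [norm_smul, norm_smul, Real.norm_eq_abs, Real.norm_eq_abs,
              abs_of_pos hτpos, abs_of_pos hβ]
        _ ≤ ‖x n‖ + τ * β * ((1 + 2*k) * ‖F (x n)‖) := by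
            have := mul_le_mul_of_nonneg_left hFb (by positivity : (0:ℝ) ≤ τ * β)
            nlinarith
    have h2 : ‖F (x n)‖ ≤ L * (1 + ‖x n‖) := hgrow _
    have h3 : ‖x (n+1)‖ ≤ ‖x n‖ + τ * c * (1 + ‖x n‖) := by
      rw [hc]
      have := mul_le_mul_of_nonneg_left h2 (by positivity : (0:ℝ) ≤ τ * β * (1 + 2*(k:ℝ)))
      nlinarith
    linarith [h3]
  have hxgeo : ∀ n, n ≤ N → 1 + ‖x n‖ ≤ (1 + τ * c)^n * (1 + ‖x₀‖) := by
    intro n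
    induction n with
    | zero => intro _; rw [hx0]; simp
    | succ n IH =>
      intro hn
      have h1 := hstep n (by omega)
      have h2 := IH (by omega)
      calc 1 + ‖x (n+1)‖ ≤ (1 + τ * c) * (1 + ‖x n‖) := h1
        _ ≤ (1 + τ * c) * ((1 + τ * c)^n * (1 + ‖x₀‖)) :=
            mul_le_mul_of_nonneg_left h2 (by positivity)
        _ = (1 + τ * c)^(n+1) * (1 + ‖x₀‖) := by ring
  have hxb : ∀ n, n ≤ N → 1 + ‖x n‖ ≤ M := by
    intro n hn
    have h1 := hxgeo n hn
    have h2 : (1 + τ * c)^n ≤ Real.exp (c * T) := by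
      have h3 : (1 + τ * c) ≤ Real.exp (τ * c) := by
        have := Real.add_one_le_exp (τ * c); linarith
      have h4 : (1 + τ * c)^n ≤ (Real.exp (τ * c))^n :=
        pow_le_pow_left₀ (by positivity) h3 n
      rw [← Real.exp_nat_mul] at h4
      refine h4.trans (Real.exp_le_exp.mpr ?_)
      have hnN : (n:ℝ) ≤ N := by exact_mod_cast hn
      have hτn : (n:ℝ) * τ ≤ T := by
        rw [hτdef]
        calc (n:ℝ) * (T / N) ≤ (N:ℝ) * (T / N) := by
              apply mul_le_mul_of_nonneg_right hnN; positivity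
          _ = T := by field_simp
      nlinarith
    rw [hM]
    nlinarith [norm_nonneg x₀, Real.exp_pos (c * T)]
  have hJb : ∀ n, n ≤ N → ‖J (x n)‖ ≤ B := by
    intro n hn
    have h1 : ‖J (x n) - J x₀‖ ≤ L * ‖x n - x₀‖ := by
      have := hLip x₀ (x n)
      have := norm_nonneg (F (x n) - F x₀)
      linarith
    have h2 : ‖x n - x₀‖ ≤ ‖x n‖ + ‖x₀‖ := norm_sub_le _ _
    have h3 : ‖J (x n)‖ ≤ ‖J x₀‖ + ‖J (x n) - J x₀‖ := by
      calc ‖J (x n)‖ = ‖J x₀ + (J (x n) - J x₀)‖ := by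
            rw [show J x₀ + (J (x n) - J x₀) = J (x n) by abel]
        _ ≤ ‖J x₀‖ + ‖J (x n) - J x₀‖ := norm_add_le _ _
    have h4 := hxb n hn
    rw [hB]
    nlinarith
  intro n hn i
  intro vt Y
  have hvtdef : vt = v n i + (τ * γ) • J (x n) (v n i) := rfl
  have hYdef : Y = ‖vt - ∑ j ∈ Finset.Iio i, ⟪vt, v (n+1) j⟫ • v (n+1) j‖ := rfl
  have hu : Orthonormal ℝ (v (n+1)) := hON (n+1) (by omega)
  have hvn : Orthonormal ℝ (v n) := hON n (by omega)
  have hvi1 : ‖v n i‖ = 1 := hvn.1 i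
  set Jv := J (x n) (v n i) with hJv
  have hJvb : ‖Jv‖ ≤ B := by
    calc ‖Jv‖ ≤ ‖J (x n)‖ * ‖v n i‖ := (J (x n)).le_opNorm _
      _ = ‖J (x n)‖ := by rw [hvi1, mul_one]
      _ ≤ B := hJb n (by omega)
  set a : ℝ := τ * γ with ha
  have ha0 : 0 < a := by positivity
  -- first inequality
  have hY0 : 0 ≤ Y := by rw [hYdef]; exact norm_nonneg _
  constructor
  · rw [show (1:ℝ) - Y^2 = (1-Y)*(1+Y) by ring, abs_mul,
      abs_of_nonneg (show (0:ℝ) ≤ 1+Y by linarith)]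
    nlinarith [abs_nonneg (1-Y)]
  -- second inequality
  have hY2 : Y^2 = ‖vt‖^2 - ∑ j ∈ Finset.Iio i, (⟪vt, v (n+1) j⟫:ℝ)^2 := by
    rw [hYdef, norm_sub_sq_real]
    have hs1 : ⟪vt, ∑ j ∈ Finset.Iio i, (⟪vt, v (n+1) j⟫:ℝ) • v (n+1) j⟫
        = ∑ j ∈ Finset.Iio i, (⟪vt, v (n+1) j⟫:ℝ)^2 := by
      rw [inner_sum]
      refine Finset.sum_congr rfl fun j _ => ?_
      rw [real_inner_smul_right]; ring
    have hs2 : ‖∑ j ∈ Finset.Iio i, (⟪vt, v (n+1) j⟫:ℝ) • v (n+1) j‖^2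
        = ∑ j ∈ Finset.Iio i, (⟪vt, v (n+1) j⟫:ℝ)^2 := by
      rw [← real_inner_self_eq_norm_sq, hu.inner_sum]
      refine Finset.sum_congr rfl fun j _ => ?_
      simp [sq]
    rw [hs1, hs2]; ring
  have hvt2 : ‖vt‖^2 = 1 + 2*(a*⟪v n i, Jv⟫) + a^2*‖Jv‖^2 := by
    rw [hvtdef, norm_add_sq_real, real_inner_smul_right, norm_smul,
      Real.norm_eq_abs, hvi1, mul_pow, sq_abs]
    ring
  have hinner1 : |(⟪v n i, Jv⟫:ℝ)| ≤ B := by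
    calc |(⟪v n i, Jv⟫:ℝ)| ≤ ‖v n i‖ * ‖Jv‖ := abs_real_inner_le_norm _ _
      _ = ‖Jv‖ := by rw [hvi1, one_mul]
      _ ≤ B := hJvb
  have hvtb : |1 - ‖vt‖^2| ≤ 2*a*B + a^2*B^2 := by
    rw [hvt2]
    have h1 := abs_le.mp hinner1
    have h2 : ‖Jv‖^2 ≤ B^2 := by nlinarith [norm_nonneg Jv]
    rw [abs_le]
    constructor <;> nlinarith [sq_nonneg a, norm_nonneg Jv]
  have hcj : ∀ j ∈ Finset.Iio i, (⟪vt, v (n+1) j⟫:ℝ)^2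
      ≤ 2*‖v (n+1) j - v n j‖^2 + 2*a^2*B^2 := by
    intro j hj
    have hji : j < i := Finset.mem_Iio.mp hj
    have horthij : (⟪v n i, v n j⟫:ℝ) = 0 := by
      have := (orthonormal_iff_ite.mp hvn) i j
      rwa [if_neg hji.ne'] at this
    have e1 : (⟪vt, v (n+1) j⟫:ℝ)
        = ⟪v n i, v (n+1) j - v n j⟫ + a * ⟪Jv, v (n+1) j⟫ := by
      rw [hvtdef, inner_add_left, real_inner_smul_left, inner_sub_right, horthij]
      ring
    have hp : |(⟪v n i, v (n+1) j - v n j⟫:ℝ)| ≤ ‖v (n+1) j - v n j‖ := by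
      calc |(⟪v n i, v (n+1) j - v n j⟫:ℝ)| ≤ ‖v n i‖ * ‖v (n+1) j - v n j‖ :=
          abs_real_inner_le_norm _ _
        _ = ‖v (n+1) j - v n j‖ := by rw [hvi1, one_mul]
    have hq : |(⟪Jv, v (n+1) j⟫:ℝ)| ≤ B := by
      calc |(⟪Jv, v (n+1) j⟫:ℝ)| ≤ ‖Jv‖ * ‖v (n+1) j‖ := abs_real_inner_le_norm _ _
        _ = ‖Jv‖ := by rw [hu.1 j, mul_one]
        _ ≤ B := hJvb
    have hp2 : (⟪v n i, v (n+1) j - v n j⟫:ℝ)^2 ≤ ‖v (n+1) j - v n j‖^2 := by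
      calc (⟪v n i, v (n+1) j - v n j⟫:ℝ)^2 = |(⟪v n i, v (n+1) j - v n j⟫:ℝ)|^2 :=
            (sq_abs _).symm
        _ ≤ ‖v (n+1) j - v n j‖^2 := pow_le_pow_left₀ (abs_nonneg _) hp 2
    have hq2 : (⟪Jv, v (n+1) j⟫:ℝ)^2 ≤ B^2 := by
      calc (⟪Jv, v (n+1) j⟫:ℝ)^2 = |(⟪Jv, v (n+1) j⟫:ℝ)|^2 := (sq_abs _).symm
        _ ≤ B^2 := pow_le_pow_left₀ (abs_nonneg _) hq 2
    rw [e1]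
    nlinarith [sq_nonneg ((⟪v n i, v (n+1) j - v n j⟫:ℝ) - a * ⟪Jv, v (n+1) j⟫),
      mul_le_mul_of_nonneg_left hq2 (sq_nonneg a)]
  have hsum : ∑ j ∈ Finset.Iio i, (⟪vt, v (n+1) j⟫:ℝ)^2
      ≤ 2 * (∑ j ∈ Finset.Iio i, ‖v (n+1) j - v n j‖^2) + 2*(k:ℝ)*a^2*B^2 := by
    calc ∑ j ∈ Finset.Iio i, (⟪vt, v (n+1) j⟫:ℝ)^2
        ≤ ∑ j ∈ Finset.Iio i, (2*‖v (n+1) j - v n j‖^2 + 2*a^2*B^2) :=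
          Finset.sum_le_sum hcj
      _ = 2 * (∑ j ∈ Finset.Iio i, ‖v (n+1) j - v n j‖^2)
          + (Finset.Iio i).card * (2*a^2*B^2) := by
          rw [Finset.sum_add_distrib, Finset.sum_const, nsmul_eq_mul, Finset.mul_sum]
      _ ≤ 2 * (∑ j ∈ Finset.Iio i, ‖v (n+1) j - v n j‖^2) + 2*(k:ℝ)*a^2*B^2 := by
          have hcard : ((Finset.Iio i).card : ℝ) ≤ (k:ℝ) := by
            have h : (Finset.Iio i).card ≤ k := by
              simpa using Finset.card_le_univ (Finset.Iio i)
            exact_mod_cast h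
          have := mul_le_mul_of_nonneg_right hcard
            (by positivity : (0:ℝ) ≤ 2*a^2*B^2)
          linarith
  have hsum0 : 0 ≤ ∑ j ∈ Finset.Iio i, (⟪vt, v (n+1) j⟫:ℝ)^2 :=
    Finset.sum_nonneg fun j _ => sq_nonneg _
  have hΔ0 : 0 ≤ ∑ j ∈ Finset.Iio i, ‖v (n+1) j - v n j‖^2 :=
    Finset.sum_nonneg fun j _ => sq_nonneg _
  have hmain : |1 - Y^2| ≤ 2*a*B + a^2*B^2
      + (2 * (∑ j ∈ Finset.Iio i, ‖v (n+1) j - v n j‖^2) + 2*(k:ℝ)*a^2*B^2) := by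
    rw [hY2, show (1:ℝ) - (‖vt‖^2 - ∑ j ∈ Finset.Iio i, (⟪vt, v (n+1) j⟫:ℝ)^2)
      = (1 - ‖vt‖^2) + ∑ j ∈ Finset.Iio i, (⟪vt, v (n+1) j⟫:ℝ)^2 by ring]
    calc |(1 - ‖vt‖^2) + ∑ j ∈ Finset.Iio i, (⟪vt, v (n+1) j⟫:ℝ)^2|
        ≤ |1 - ‖vt‖^2| + |∑ j ∈ Finset.Iio i, (⟪vt, v (n+1) j⟫:ℝ)^2| := abs_add_le _ _
      _ = |1 - ‖vt‖^2| + ∑ j ∈ Finset.Iio i, (⟪vt, v (n+1) j⟫:ℝ)^2 := by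
          rw [abs_of_nonneg hsum0]
      _ ≤ 2*a*B + a^2*B^2 + (2 * (∑ j ∈ Finset.Iio i, ‖v (n+1) j - v n j‖^2)
          + 2*(k:ℝ)*a^2*B^2) := add_le_add hvtb hsum
  -- final arithmetic
  have ha2 : a^2 ≤ τ * γ^2 := by
    rw [ha]; nlinarith
  have haB : 2*a*B ≤ τ * (2*γ*B) := le_of_eq (by rw [ha]; ring)
  have hk0 : (0:ℝ) ≤ (k:ℝ) := Nat.cast_nonneg k
  refine hmain.trans ?_
  nlinarith [mul_le_mul_of_nonneg_right ha2 (sq_nonneg B),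
    mul_le_mul_of_nonneg_left (mul_le_mul_of_nonneg_right ha2 (sq_nonneg B)) hk0,
    mul_nonneg (mul_nonneg (le_of_lt hγ) hB0) (le_of_lt hτpos),
    mul_nonneg (mul_nonneg hk0 (mul_nonneg (sq_nonneg γ) (sq_nonneg B))) (le_of_lt hτpos),
    mul_nonneg (mul_nonneg (sq_nonneg γ) (sq_nonneg B)) (le_of_lt hτpos),
    mul_nonneg (mul_nonneg (mul_nonneg (le_of_lt hγ) hB0) hΔ0) (le_of_lt hτpos)]
end
end

section
/- Under Assumption A, there exist τ₀ > 0 and Q > 0, depending only on d, k, L, β, γ, ‖x₀‖ and T, such that for every N ∈ ℕ with τ = T/N ≤ τ₀, the reciprocal of the Gram–Schmidt normalization factor of the discrete HiSD scheme satisfies |1/Y_{i,n} − 1 + τγ v_{i,n−1}ᵀ J(x_{n−1}) v_{i,n−1}| ≤ Q τ² for all 1 ≤ i ≤ k and 1 ≤ n ≤ N. -/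
open scoped RealInnerProductSpace BigOperators

noncomputable section

section aux
variable {E : Type*} [NormedAddCommGroup E] [InnerProductSpace ℝ E] {k : ℕ}

lemma hisd_inner_w (vt : E) (v' : Fin k → E) (s : Finset (Fin k)) (u : E) :
    ⟪u, vt - ∑ j ∈ s, ⟪vt, v' j⟫ • v' j⟫ = ⟪u, vt⟫ - ∑ j ∈ s, ⟪vt, v' j⟫ * ⟪u, v' j⟫ := by
  rw [inner_sub_right, inner_sum]
  simp [real_inner_smul_right]

lemma hisd_norm_w (vt : E) (v' : Fin k → E) (s : Finset (Fin k))
    (hv' : ∀ i j, ⟪v' i, v' j⟫ = if i = j then (1:ℝ) else 0) :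
    ‖vt - ∑ j ∈ s, ⟪vt, v' j⟫ • v' j‖^2 = ‖vt‖^2 - ∑ j ∈ s, ⟪vt, v' j⟫^2 := by
  have h1 : ⟪vt, ∑ j ∈ s, ⟪vt, v' j⟫ • v' j⟫ = ∑ j ∈ s, ⟪vt, v' j⟫^2 := by
    rw [inner_sum]; apply Finset.sum_congr rfl; intro j _
    rw [real_inner_smul_right]; ring
  have h2 : ⟪(∑ j ∈ s, ⟪vt, v' j⟫ • v' j : E), ∑ j ∈ s, ⟪vt, v' j⟫ • v' j⟫ = ∑ j ∈ s, ⟪vt, v' j⟫^2 := by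
    rw [sum_inner]
    apply Finset.sum_congr rfl; intro j hj
    rw [real_inner_smul_left, inner_sum]
    rw [Finset.sum_eq_single_of_mem j hj]
    · rw [real_inner_smul_right, hv' j j]; simp; ring
    · intro l hl hlj
      rw [real_inner_smul_right, hv' j l, if_neg (Ne.symm hlj)]; ring
  rw [← real_inner_self_eq_norm_sq, ← real_inner_self_eq_norm_sq, real_inner_sub_sub_self, h1, h2]
  ring

lemma hisd_gs_on (vt v' : Fin k → E)
    (h : ∀ i, (vt i - ∑ j ∈ Finset.Iio i, ⟪vt i, v' j⟫ • v' j) ≠ 0 ∧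
         v' i = ‖vt i - ∑ j ∈ Finset.Iio i, ⟪vt i, v' j⟫ • v' j‖⁻¹ •
           (vt i - ∑ j ∈ Finset.Iio i, ⟪vt i, v' j⟫ • v' j)) :
    ∀ i j, ⟪v' i, v' j⟫ = if i = j then (1:ℝ) else 0 := by
  have hnorm : ∀ i, ‖v' i‖ = 1 := by
    intro i
    rw [(h i).2, norm_smul, norm_inv, norm_norm,
      inv_mul_cancel₀ (norm_ne_zero_iff.mpr (h i).1)]
  have key : ∀ m : ℕ, ∀ i j : Fin k, (i : ℕ) ≤ m → j < i → ⟪v' i, v' j⟫ = 0 := by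
    intro m
    induction m with
    | zero => intro i j hi hj; omega
    | succ m ih =>
      intro i j hi hj
      rcases Nat.lt_or_ge (i : ℕ) (m+1) with hlt | hge
      · exact ih i j (by omega) hj
      have hinner : ⟪v' j, v' i⟫ = 0 := by
        rw [(h i).2, real_inner_smul_right, hisd_inner_w]
        have hsum : ∑ l ∈ Finset.Iio i, ⟪vt i, v' l⟫ * ⟪v' j, v' l⟫ = ⟪v' j, vt i⟫ := by
          rw [Finset.sum_eq_single_of_mem j (Finset.mem_Iio.mpr hj)]
          · have : ⟪v' j, v' j⟫ = 1 := by
              rw [real_inner_self_eq_norm_sq, hnorm j]; norm_num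
            rw [this, mul_one, real_inner_comm]
          · intro l hl hlj
            have hli : l < i := Finset.mem_Iio.mp hl
            have : ⟪v' j, v' l⟫ = 0 := by
              rcases lt_or_gt_of_ne hlj with h1 | h1
              · exact ih j l (by omega) h1
              · rw [real_inner_comm]; exact ih l j (by omega) h1
            rw [this, mul_zero]
        rw [hsum, sub_self, mul_zero]
      rw [real_inner_comm]; exact hinner
  intro i j
  rcases eq_or_ne i j with rfl | hij
  · rw [if_pos rfl, real_inner_self_eq_norm_sq, hnorm i]; norm_num
  · rw [if_neg hij]
    rcases lt_or_gt_of_ne hij with h1 | h1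
    · rw [real_inner_comm]; exact key _ j i le_rfl h1
    · exact key _ i j le_rfl h1

lemma hisd_inv_est (y s e : ℝ) (hy : 0 < y) (hsq : y^2 = 1 + 2*s + e)
    (hs : |s| ≤ 1/4) (he : |e| ≤ 1/4) :
    |y⁻¹ - 1 + s| ≤ 8*s^2 + 4*|e| := by
  have hs1 : -(1/4) ≤ s := neg_le_of_abs_le hs
  have hs2 : s ≤ 1/4 := le_of_abs_le hs
  have he1 : -(1/4) ≤ e := neg_le_of_abs_le he
  have he2 : e ≤ 1/4 := le_of_abs_le he
  have hy2 : (1:ℝ)/2 ≤ y := by nlinarith [sq_nonneg (y - 1/2)]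
  have hyinv : y * y⁻¹ = 1 := mul_inv_cancel₀ hy.ne'
  set t := y⁻¹ - 1 + s with ht_def
  set z := y*(1-s) with hz_def
  have hzge : (3:ℝ)/8 ≤ z := by rw [hz_def]; nlinarith
  have hyt : y * t = 1 - z := by
    rw [ht_def, hz_def]; field_simp; ring
  have hzz : z^2 = (1+2*s+e)*(1-s)^2 := by rw [hz_def]; rw [mul_pow, hsq]
  have ht : t * (y*(1+z)) = 3*s^2 - 2*s^3 - e*(1-s)^2 := by
    calc t * (y*(1+z)) = (y*t)*(1+z) := by ring
      _ = (1-z)*(1+z) := by rw [hyt]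
      _ = 1 - z^2 := by ring
      _ = 3*s^2 - 2*s^3 - e*(1-s)^2 := by rw [hzz]; ring
  have hdnn : (0:ℝ) ≤ y*(1+z) := by nlinarith
  have hden : (1:ℝ)/2 ≤ y*(1+z) := by nlinarith
  have h1 : |t| * (y*(1+z)) = |3*s^2 - 2*s^3 - e*(1-s)^2| := by
    rw [← abs_of_nonneg hdnn, ← abs_mul, ht]
  have hscube : -(s^3) ≤ (1/4)*s^2 := by nlinarith [mul_nonneg (sq_nonneg s) (by linarith : (0:ℝ) ≤ s + 1/4)]
  have hscube2 : s^3 ≤ (1/4)*s^2 := by nlinarith [mul_nonneg (sq_nonneg s) (by linarith : (0:ℝ) ≤ 1/4 - s)]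
  have hq : (1-s)^2 ≤ 2 := by
    have h54 : (1-s)^2 ≤ (5/4)^2 := by
      apply sq_le_sq' <;> linarith
    linarith
  have hq0 : (0:ℝ) ≤ (1-s)^2 := sq_nonneg _
  have hee : |e*(1-s)^2| ≤ 2*|e| := by
    rw [abs_mul, abs_of_nonneg hq0]
    calc |e| * (1-s)^2 ≤ |e| * 2 := mul_le_mul_of_nonneg_left hq (abs_nonneg e)
      _ = 2*|e| := by ring
  have hee1 : e*(1-s)^2 ≤ 2*|e| := le_trans (le_abs_self _) hee
  have hee2 : -(2*|e|) ≤ e*(1-s)^2 := neg_le_of_abs_le hee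
  have h2 : |3*s^2 - 2*s^3 - e*(1-s)^2| ≤ 4*s^2 + 2*|e| := by
    rw [abs_le]; constructor <;> linarith
  have hfin : |t| * (1/2) ≤ |t| * (y*(1+z)) := mul_le_mul_of_nonneg_left hden (abs_nonneg t)
  rw [h1] at hfin
  linarith

lemma hisd_half_le {a : ℝ} (h0 : 0 ≤ a) (h : 1/4 ≤ a^2) : 1/2 ≤ a := by
  nlinarith

end aux

set_option maxHeartbeats 4000000 in
theorem hisd_stmt3
    (d k : ℕ) (hd : 1 ≤ d) (hk : 1 ≤ k) (hkd : k ≤ d)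
    (F : EuclideanSpace ℝ (Fin d) → EuclideanSpace ℝ (Fin d))
    (J : EuclideanSpace ℝ (Fin d) → (EuclideanSpace ℝ (Fin d) →L[ℝ] EuclideanSpace ℝ (Fin d)))
    (hJsymm : ∀ x u w, ⟪J x u, w⟫ = ⟪u, J x w⟫)
    (L : ℝ) (hL : 0 < L)
    (hLip : ∀ x₁ x₂ : EuclideanSpace ℝ (Fin d), ‖J x₂ - J x₁‖ + ‖F x₂ - F x₁‖ ≤ L * ‖x₂ - x₁‖)
    (hgrow : ∀ x : EuclideanSpace ℝ (Fin d), ‖F x‖ ≤ L * (1 + ‖x‖))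
    (β γ : ℝ) (hβ : 0 < β) (hγ : 0 < γ)
    (T : ℝ) (hT : 0 < T)
    (x₀ : EuclideanSpace ℝ (Fin d))
    (v₀ : Fin k → EuclideanSpace ℝ (Fin d))
    (hv₀ : ∀ i j : Fin k, ⟪v₀ i, v₀ j⟫ = if i = j then (1:ℝ) else 0) :
    ∃ τ₀ > (0:ℝ), ∃ Q > (0:ℝ), ∀ (N : ℕ) (τ : ℝ), 0 < N → τ = T / N → τ ≤ τ₀ →
      ∀ (x : ℕ → EuclideanSpace ℝ (Fin d)) (v : ℕ → Fin k → EuclideanSpace ℝ (Fin d)),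
        x 0 = x₀ → v 0 = v₀ →
        (∀ n < N, x (n+1) = x n + τ •
            (β • (F (x n) - (2:ℝ) • ∑ j, ⟪v n j, F (x n)⟫ • v n j))) →
        (∀ n < N, ∀ i : Fin k,
          let vt := v n i + (τ * γ) • J (x n) (v n i)
          let w := vt - ∑ j ∈ Finset.Iio i, ⟪vt, v (n+1) j⟫ • v (n+1) j
          w ≠ 0 ∧ v (n+1) i = ‖w‖⁻¹ • w) →
        ∀ n < N, ∀ i : Fin k,
          let vt := v n i + (τ * γ) • J (x n) (v n i)
          let Y := ‖vt - ∑ j ∈ Finset.Iio i, ⟪vt, v (n+1) j⟫ • v (n+1) j‖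
          |Y⁻¹ - 1 + τ * γ * ⟪v n i, J (x n) (v n i)⟫| ≤ Q * τ^2 := by
  classical
  have hk1 : (1:ℝ) ≤ (k:ℝ) := by exact_mod_cast hk
  set M : ℝ := (1+‖x₀‖) * Real.exp (β*(1+2*(k:ℝ))*L*T) with hMdef
  have hexp1 : (1:ℝ) ≤ Real.exp (β*(1+2*(k:ℝ))*L*T) :=
    Real.one_le_exp (mul_nonneg (mul_nonneg (mul_nonneg hβ.le (by positivity)) hL.le) hT.le)
  have hM1 : (1:ℝ) ≤ M := by
    rw [hMdef]; nlinarith [norm_nonneg x₀]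
  set CJ : ℝ := ‖J x₀‖ + L*(M+‖x₀‖) with hCJdef
  have hCJ0 : 0 ≤ CJ := by
    rw [hCJdef]
    have h1 : (0:ℝ) ≤ M + ‖x₀‖ := by linarith [norm_nonneg x₀]
    nlinarith [norm_nonneg (J x₀), hL.le]
  set B : ℝ := γ*CJ + 1 with hBdef
  clear_value M CJ B
  have hB1 : (1:ℝ) ≤ B := by rw [hBdef]; nlinarith [mul_nonneg hγ.le hCJ0]
  have hB0 : (0:ℝ) < B := lt_of_lt_of_le one_pos hB1
  have hγCJ : γ * CJ ≤ B := by rw [hBdef]; linarith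
  have hB2 : (1:ℝ) ≤ B^2 := by nlinarith
  have hkB2 : (1:ℝ) ≤ (k:ℝ)*B^2 := by nlinarith
  have h392 : (0:ℝ) < 392*(k:ℝ)*B^2 := by nlinarith
  refine ⟨1/(392*(k:ℝ)*B^2), div_pos one_pos h392, (8+200*(k:ℝ))*B^2 + 1, by positivity, ?_⟩
  intro N τ hN hτN hττ x v hx0 hv0 hstep hGS
  have hNpos : (0:ℝ) < (N:ℝ) := by exact_mod_cast hN
  have hτpos : 0 < τ := by rw [hτN]; exact div_pos hT hNpos
  have hτ392 : τ * (392*(k:ℝ)*B^2) ≤ 1 := by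
    rw [le_div_iff₀ h392] at hττ; linarith
  have hkB : (1:ℝ) ≤ (k:ℝ)*B := by
    have h := mul_le_mul hk1 hB1 zero_le_one (by linarith : (0:ℝ) ≤ (k:ℝ))
    linarith
  have hτB0 : (0:ℝ) ≤ τ*B := mul_nonneg hτpos.le hB0.le
  have hτB : τ*B ≤ 1/392 := by
    linarith [mul_nonneg hτB0 (by linarith : (0:ℝ) ≤ (k:ℝ)*B - 1), hτ392]
  have hτ49 : (k:ℝ)*(7*B*τ)^2 ≤ τ*B/8 := by
    linarith [mul_le_mul_of_nonneg_right hτ392 (by linarith : (0:ℝ) ≤ τ/8),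
      mul_nonneg hτpos.le (by linarith : (0:ℝ) ≤ B - 1)]
  -- orthonormality of v n for n ≤ N
  have hON : ∀ n, n ≤ N → ∀ p q : Fin k, ⟪v n p, v n q⟫ = if p = q then (1:ℝ) else 0 := by
    intro n
    induction n with
    | zero => intro _ p q; rw [hv0]; exact hv₀ p q
    | succ n ih =>
      intro hn
      have hn' : n < N := by omega
      exact hisd_gs_on (fun m => v n m + (τ*γ) • J (x n) (v n m)) (v (n+1))
        (fun m => hGS n hn' m)
  have hvnorm : ∀ n, n ≤ N → ∀ m : Fin k, ‖v n m‖ = 1 := by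
    intro n hn m
    have h1 := hON n hn m m
    rw [if_pos rfl, real_inner_self_eq_norm_sq] at h1
    have h2 : (‖v n m‖-1)*(‖v n m‖+1) = 0 := by linear_combination h1
    rcases mul_eq_zero.mp h2 with h3 | h3
    · linarith
    · linarith [norm_nonneg (v n m)]
  -- bound on x
  set A : ℝ := β*(1+2*(k:ℝ))*L with hAdef
  clear_value A
  have hA0 : (0:ℝ) ≤ A := by
    rw [hAdef]; exact mul_nonneg (mul_nonneg hβ.le (by positivity)) hL.le
  have hτA0 : (0:ℝ) ≤ 1 + τ*A := by linarith [mul_nonneg hτpos.le hA0]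
  have hxb : ∀ n, n ≤ N → 1 + ‖x n‖ ≤ (1+‖x₀‖) * (1+τ*A)^n := by
    intro n
    induction n with
    | zero => intro _; rw [hx0]; simp
    | succ n ih =>
      intro hn
      have hn' : n < N := by omega
      have hihn := ih (by omega)
      have hF : ‖F (x n)‖ ≤ L*(1+‖x n‖) := hgrow (x n)
      have hF0 : (0:ℝ) ≤ ‖F (x n)‖ := norm_nonneg _
      have hsum : ‖∑ j : Fin k, ⟪v n j, F (x n)⟫ • v n j‖ ≤ (k:ℝ)*‖F (x n)‖ := by
        calc ‖∑ j : Fin k, ⟪v n j, F (x n)⟫ • v n j‖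
            ≤ ∑ j : Fin k, ‖⟪v n j, F (x n)⟫ • v n j‖ := norm_sum_le _ _
          _ ≤ ∑ _j : Fin k, ‖F (x n)‖ := by
              apply Finset.sum_le_sum
              intro j _
              rw [norm_smul, Real.norm_eq_abs]
              calc |⟪v n j, F (x n)⟫| * ‖v n j‖ = |⟪v n j, F (x n)⟫| := by
                    rw [hvnorm n (by omega) j, mul_one]
                _ ≤ ‖v n j‖ * ‖F (x n)‖ := abs_real_inner_le_norm _ _
                _ = ‖F (x n)‖ := by rw [hvnorm n (by omega) j, one_mul]
          _ = (k:ℝ)*‖F (x n)‖ := by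
              rw [Finset.sum_const, Finset.card_univ, Fintype.card_fin, nsmul_eq_mul]
      have hnorm2 : ‖F (x n) - (2:ℝ) • ∑ j, ⟪v n j, F (x n)⟫ • v n j‖
          ≤ (1+2*(k:ℝ))*(L*(1+‖x n‖)) := by
        calc ‖F (x n) - (2:ℝ) • ∑ j, ⟪v n j, F (x n)⟫ • v n j‖
            ≤ ‖F (x n)‖ + ‖(2:ℝ) • ∑ j, ⟪v n j, F (x n)⟫ • v n j‖ := norm_sub_le _ _
          _ = ‖F (x n)‖ + 2*‖∑ j, ⟪v n j, F (x n)⟫ • v n j‖ := by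
              rw [norm_smul, Real.norm_eq_abs]; norm_num
          _ ≤ ‖F (x n)‖ + 2*((k:ℝ)*‖F (x n)‖) := by
              have h2 : 2*‖∑ j, ⟪v n j, F (x n)⟫ • v n j‖ ≤ 2*((k:ℝ)*‖F (x n)‖) := by linarith
              linarith
          _ = (1+2*(k:ℝ))*‖F (x n)‖ := by ring
          _ ≤ (1+2*(k:ℝ))*(L*(1+‖x n‖)) := mul_le_mul_of_nonneg_left hF (by positivity)
      have hxn1 : ‖x (n+1)‖ ≤ ‖x n‖ + τ*A*(1+‖x n‖) := by
        rw [hstep n hn']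
        calc ‖x n + τ • (β • (F (x n) - (2:ℝ) • ∑ j, ⟪v n j, F (x n)⟫ • v n j))‖
            ≤ ‖x n‖ + ‖τ • (β • (F (x n) - (2:ℝ) • ∑ j, ⟪v n j, F (x n)⟫ • v n j))‖ :=
              norm_add_le _ _
          _ = ‖x n‖ + τ * (β * ‖F (x n) - (2:ℝ) • ∑ j, ⟪v n j, F (x n)⟫ • v n j‖) := by
              rw [norm_smul, norm_smul, Real.norm_eq_abs, Real.norm_eq_abs,
                abs_of_pos hτpos, abs_of_pos hβ]
          _ ≤ ‖x n‖ + τ*A*(1+‖x n‖) := by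
              have h3 : τ * (β * ‖F (x n) - (2:ℝ) • ∑ j, ⟪v n j, F (x n)⟫ • v n j‖)
                  ≤ τ * (β * ((1+2*(k:ℝ))*(L*(1+‖x n‖)))) := by
                apply mul_le_mul_of_nonneg_left _ hτpos.le
                exact mul_le_mul_of_nonneg_left hnorm2 hβ.le
              have h4 : τ * (β * ((1+2*(k:ℝ))*(L*(1+‖x n‖)))) = τ*A*(1+‖x n‖) := by
                rw [hAdef]; ring
              linarith
      calc 1 + ‖x (n+1)‖ ≤ (1+τ*A)*(1+‖x n‖) := by linarith [hxn1]
        _ ≤ (1+τ*A)*((1+‖x₀‖)*(1+τ*A)^n) := mul_le_mul_of_nonneg_left hihn hτA0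
        _ = (1+‖x₀‖)*(1+τ*A)^(n+1) := by ring
  have hxM : ∀ n, n ≤ N → ‖x n‖ ≤ M := by
    intro n hn
    have h1 := hxb n hn
    have h2 : (1+τ*A)^n ≤ Real.exp (A*T) := by
      have hτn : (n:ℝ)*τ ≤ T := by
        rw [hτN]
        have hnN : (n:ℝ) ≤ (N:ℝ) := by exact_mod_cast hn
        calc (n:ℝ)*(T/(N:ℝ)) = T*((n:ℝ)/(N:ℝ)) := by ring
          _ ≤ T*1 := mul_le_mul_of_nonneg_left ((div_le_one hNpos).mpr hnN) hT.le
          _ = T := mul_one T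
      calc (1+τ*A)^n ≤ (Real.exp (τ*A))^n :=
            pow_le_pow_left₀ hτA0 (by linarith [Real.add_one_le_exp (τ*A)]) n
        _ = Real.exp ((n:ℝ)*(τ*A)) := by rw [← Real.exp_nat_mul]
        _ ≤ Real.exp (A*T) := by
            apply Real.exp_le_exp.mpr
            linarith [mul_le_mul_of_nonneg_right hτn hA0]
    have h3 : (1+‖x₀‖)*(1+τ*A)^n ≤ M := by
      have harg : A*T = β*(1+2*(k:ℝ))*L*T := by rw [hAdef]
      calc (1+‖x₀‖)*(1+τ*A)^n ≤ (1+‖x₀‖)*Real.exp (A*T) :=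
            mul_le_mul_of_nonneg_left h2 (by positivity)
        _ = M := by rw [hMdef, harg]
    linarith
  have hJb : ∀ n, n ≤ N → ‖J (x n)‖ ≤ CJ := by
    intro n hn
    have h := hLip x₀ (x n)
    have h1 : ‖J (x n)‖ - ‖J x₀‖ ≤ ‖J (x n) - J x₀‖ := norm_sub_norm_le _ _
    have h2 : ‖x n - x₀‖ ≤ ‖x n‖ + ‖x₀‖ := norm_sub_le _ _
    have h3 : ‖x n‖ ≤ M := hxM n hn
    have h4 : (0:ℝ) ≤ ‖F (x n) - F x₀‖ := norm_nonneg _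
    have h5 : L * ‖x n - x₀‖ ≤ L * (M + ‖x₀‖) :=
      mul_le_mul_of_nonneg_left (by linarith) hL.le
    rw [hCJdef]
    linarith
  -- the main part
  intro n hn i
  have hnN : n ≤ N := hn.le
  have hn1N : n + 1 ≤ N := hn
  set v' : Fin k → EuclideanSpace ℝ (Fin d) := v (n+1) with hv'def
  set vt : Fin k → EuclideanSpace ℝ (Fin d) :=
    fun m => v n m + (τ*γ) • J (x n) (v n m) with hvtdef
  set w : Fin k → EuclideanSpace ℝ (Fin d) :=
    fun m => vt m - ∑ j ∈ Finset.Iio m, ⟪vt m, v' j⟫ • v' j with hwdef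
  show |‖w i‖⁻¹ - 1 + τ*γ*⟪v n i, J (x n) (v n i)⟫| ≤ ((8+200*(k:ℝ))*B^2+1)*τ^2
  have hGS' : ∀ m, w m ≠ 0 ∧ v' m = ‖w m‖⁻¹ • w m := fun m => hGS n hn m
  have hONn : ∀ p q : Fin k, ⟪v n p, v n q⟫ = if p = q then (1:ℝ) else 0 := hON n hnN
  have hONn1 : ∀ p q : Fin k, ⟪v' p, v' q⟫ = if p = q then (1:ℝ) else 0 := hON (n+1) hn1N
  have hvn1 : ∀ m, ‖v n m‖ = 1 := hvnorm n hnN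
  have hJop : ∀ m, ‖J (x n) (v n m)‖ ≤ CJ := by
    intro m
    calc ‖J (x n) (v n m)‖ ≤ ‖J (x n)‖ * ‖v n m‖ := ContinuousLinearMap.le_opNorm _ _
      _ = ‖J (x n)‖ := by rw [hvn1 m, mul_one]
      _ ≤ CJ := hJb n hnN
  have hu : ∀ m, ‖(τ*γ) • J (x n) (v n m)‖ ≤ τ*B := by
    intro m
    rw [norm_smul, Real.norm_eq_abs, abs_of_pos (mul_pos hτpos hγ)]
    calc τ*γ*‖J (x n) (v n m)‖ ≤ τ*γ*CJ := by
          apply mul_le_mul_of_nonneg_left (hJop m) (mul_pos hτpos hγ).le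
      _ ≤ τ*B := by linarith [mul_le_mul_of_nonneg_left hγCJ hτpos.le]
  have hvtge : ∀ m, 1 - τ*B ≤ ‖vt m‖ := by
    intro m
    have h1 := abs_norm_sub_norm_le (v n m) (vt m)
    have h2 : ‖v n m - vt m‖ = ‖(τ*γ) • J (x n) (v n m)‖ := by
      simp only [hvtdef]
      rw [show v n m - (v n m + (τ*γ) • J (x n) (v n m)) = -((τ*γ) • J (x n) (v n m)) from by abel,
        norm_neg]
    rw [h2] at h1
    have h3 := abs_le.mp h1
    have h4 := hu m
    have h5 := hvn1 m
    linarith [h3.1, h3.2]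
  have hvtsq : ∀ m, ‖vt m‖^2
      = 1 + 2*(τ*γ*⟪v n m, J (x n) (v n m)⟫) + ‖(τ*γ) • J (x n) (v n m)‖^2 := by
    intro m
    have hm : vt m = v n m + (τ*γ) • J (x n) (v n m) := by simp only [hvtdef]
    rw [hm, norm_add_sq_real, hvn1 m, real_inner_smul_right]
    ring
  have hcross : ∀ p q : Fin k, p ≠ q → |⟪vt p, vt q⟫| ≤ 3*(τ*B) := by
    intro p q hpq
    have hexp : ⟪vt p, vt q⟫ = ⟪v n p, v n q⟫ + ⟪v n p, (τ*γ) • J (x n) (v n q)⟫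
        + (⟪(τ*γ) • J (x n) (v n p), v n q⟫ + ⟪(τ*γ) • J (x n) (v n p), (τ*γ) • J (x n) (v n q)⟫) := by
      simp only [hvtdef]
      rw [inner_add_left, inner_add_right, inner_add_right]
    have b1 : |⟪v n p, (τ*γ) • J (x n) (v n q)⟫| ≤ τ*B := by
      calc |⟪v n p, (τ*γ) • J (x n) (v n q)⟫| ≤ ‖v n p‖ * ‖(τ*γ) • J (x n) (v n q)‖ :=
            abs_real_inner_le_norm _ _
        _ ≤ τ*B := by rw [hvn1 p, one_mul]; exact hu q
    have b2 : |⟪(τ*γ) • J (x n) (v n p), v n q⟫| ≤ τ*B := by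
      calc |⟪(τ*γ) • J (x n) (v n p), v n q⟫| ≤ ‖(τ*γ) • J (x n) (v n p)‖ * ‖v n q‖ :=
            abs_real_inner_le_norm _ _
        _ ≤ τ*B := by rw [hvn1 q, mul_one]; exact hu p
    have b3 : |⟪(τ*γ) • J (x n) (v n p), (τ*γ) • J (x n) (v n q)⟫| ≤ (τ*B)*(τ*B) := by
      calc |⟪(τ*γ) • J (x n) (v n p), (τ*γ) • J (x n) (v n q)⟫|
          ≤ ‖(τ*γ) • J (x n) (v n p)‖ * ‖(τ*γ) • J (x n) (v n q)‖ := abs_real_inner_le_norm _ _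
        _ ≤ (τ*B)*(τ*B) := mul_le_mul (hu p) (hu q) (norm_nonneg _) hτB0
    rw [hexp, hONn p q, if_neg hpq, zero_add]
    calc |⟪v n p, (τ*γ) • J (x n) (v n q)⟫
        + (⟪(τ*γ) • J (x n) (v n p), v n q⟫ + ⟪(τ*γ) • J (x n) (v n p), (τ*γ) • J (x n) (v n q)⟫)|
        ≤ |⟪v n p, (τ*γ) • J (x n) (v n q)⟫|
          + (|⟪(τ*γ) • J (x n) (v n p), v n q⟫| + |⟪(τ*γ) • J (x n) (v n p), (τ*γ) • J (x n) (v n q)⟫|) := by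
          exact (abs_add_le _ _).trans (by gcongr; exact abs_add_le _ _)
      _ ≤ 3*(τ*B) := by linarith [b1, b2, b3, mul_le_mul_of_nonneg_left hτB hτB0]
  have hcard : ∀ p : Fin k, ((Finset.Iio p).card : ℝ) ≤ (k:ℝ) := by
    intro p
    have h1 := Finset.card_le_univ (Finset.Iio p)
    have h2 : (Finset.univ : Finset (Fin k)).card = k := by simp
    exact_mod_cast h1.trans_eq h2
  have hwsq : ∀ m, ‖w m‖^2 = ‖vt m‖^2 - ∑ l ∈ Finset.Iio m, ⟪vt m, v' l⟫^2 := by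
    intro m
    have hm : w m = vt m - ∑ l ∈ Finset.Iio m, ⟪vt m, v' l⟫ • v' l := by simp only [hwdef]
    rw [hm]
    exact hisd_norm_w _ _ _ hONn1
  have hstepP : ∀ j : Fin k,
      (∀ l : Fin k, l < j → 1/2 ≤ ‖w l‖ ∧ ∀ p : Fin k, l < p → |⟪vt p, v' l⟫| ≤ 7*B*τ) →
      1/2 ≤ ‖w j‖ ∧ ∀ p : Fin k, j < p → |⟪vt p, v' j⟫| ≤ 7*B*τ := by
    intro j ihj
    have h7B0 : (0:ℝ) ≤ 7*B*τ := mul_nonneg (mul_nonneg (by norm_num) hB0.le) hτpos.le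
    have hsum1 : ∑ l ∈ Finset.Iio j, ⟪vt j, v' l⟫^2 ≤ (k:ℝ)*(7*B*τ)^2 := by
      calc ∑ l ∈ Finset.Iio j, ⟪vt j, v' l⟫^2 ≤ ∑ _l ∈ Finset.Iio j, (7*B*τ)^2 := by
            apply Finset.sum_le_sum
            intro l hl
            have hlj := Finset.mem_Iio.mp hl
            have h1 := (ihj l hlj).2 j hlj
            rw [← sq_abs]
            exact pow_le_pow_left₀ (abs_nonneg _) h1 2
        _ = ((Finset.Iio j).card : ℝ)*(7*B*τ)^2 := by rw [Finset.sum_const, nsmul_eq_mul]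
        _ ≤ (k:ℝ)*(7*B*τ)^2 := mul_le_mul_of_nonneg_right (hcard j) (sq_nonneg _)
    have hYj : 1/2 ≤ ‖w j‖ := by
      have h0 : (0:ℝ) ≤ 1 - τ*B := by linarith
      have h1 : (1-τ*B)^2 ≤ ‖vt j‖^2 := pow_le_pow_left₀ h0 (hvtge j) 2
      have h2 : (1/4:ℝ) ≤ ‖w j‖^2 := by
        rw [hwsq j]
        linarith [hsum1, h1, hτ49, hτB, sq_nonneg (τ*B)]
      exact hisd_half_le (norm_nonneg (w j)) h2
    refine ⟨hYj, ?_⟩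
    intro p hjp
    have hinner : ⟪vt p, v' j⟫ = ‖w j‖⁻¹ * ⟪vt p, w j⟫ := by
      rw [(hGS' j).2, real_inner_smul_right]
    have hwj : ⟪vt p, w j⟫ = ⟪vt p, vt j⟫ - ∑ l ∈ Finset.Iio j, ⟪vt j, v' l⟫ * ⟪vt p, v' l⟫ := by
      have hm : w j = vt j - ∑ l ∈ Finset.Iio j, ⟪vt j, v' l⟫ • v' l := by simp only [hwdef]
      rw [hm]
      exact hisd_inner_w _ _ _ _
    have hsum2 : |∑ l ∈ Finset.Iio j, ⟪vt j, v' l⟫ * ⟪vt p, v' l⟫| ≤ (k:ℝ)*(7*B*τ)^2 := by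
      calc |∑ l ∈ Finset.Iio j, ⟪vt j, v' l⟫ * ⟪vt p, v' l⟫|
          ≤ ∑ l ∈ Finset.Iio j, |⟪vt j, v' l⟫ * ⟪vt p, v' l⟫| := Finset.abs_sum_le_sum_abs _ _
        _ ≤ ∑ _l ∈ Finset.Iio j, (7*B*τ)^2 := by
            apply Finset.sum_le_sum
            intro l hl
            have hlj := Finset.mem_Iio.mp hl
            have ha := (ihj l hlj).2 j hlj
            have hb := (ihj l hlj).2 p (lt_trans hlj hjp)
            rw [abs_mul]
            calc |⟪vt j, v' l⟫| * |⟪vt p, v' l⟫| ≤ (7*B*τ)*(7*B*τ) :=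
                  mul_le_mul ha hb (abs_nonneg _) h7B0
              _ = (7*B*τ)^2 := by ring
        _ = ((Finset.Iio j).card : ℝ)*(7*B*τ)^2 := by rw [Finset.sum_const, nsmul_eq_mul]
        _ ≤ (k:ℝ)*(7*B*τ)^2 := mul_le_mul_of_nonneg_right (hcard j) (sq_nonneg _)
    have h3 : |⟪vt p, w j⟫| ≤ 3*(τ*B) + (k:ℝ)*(7*B*τ)^2 := by
      rw [hwj]
      have h4 := abs_add_le (⟪vt p, vt j⟫) (-(∑ l ∈ Finset.Iio j, ⟪vt j, v' l⟫ * ⟪vt p, v' l⟫))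
      rw [abs_neg, ← sub_eq_add_neg] at h4
      exact h4.trans (add_le_add (hcross p j (ne_of_gt hjp)) hsum2)
    have hwpos : (0:ℝ) < ‖w j‖ := lt_of_lt_of_le (by norm_num) hYj
    have hinv : ‖w j‖⁻¹ ≤ 2 := by
      rw [show (2:ℝ) = (1/2)⁻¹ by norm_num]
      exact inv_anti₀ (by norm_num) hYj
    rw [hinner, abs_mul, abs_inv, abs_norm]
    calc ‖w j‖⁻¹ * |⟪vt p, w j⟫| ≤ 2 * (3*(τ*B) + (k:ℝ)*(7*B*τ)^2) :=
          mul_le_mul hinv h3 (abs_nonneg _) (by norm_num)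
      _ ≤ 7*B*τ := by linarith [hτ49, hτB0]
  have key : ∀ j : Fin k, 1/2 ≤ ‖w j‖ ∧ ∀ p : Fin k, j < p → |⟪vt p, v' j⟫| ≤ 7*B*τ := by
    have hm : ∀ m : ℕ, ∀ j : Fin k, (j:ℕ) ≤ m →
        1/2 ≤ ‖w j‖ ∧ ∀ p : Fin k, j < p → |⟪vt p, v' j⟫| ≤ 7*B*τ := by
      intro m
      induction m with
      | zero =>
        intro j hj
        apply hstepP
        intro l hl
        exact absurd (Fin.lt_def.mp hl) (by omega)
      | succ m ih =>
        intro j hj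
        apply hstepP
        intro l hl
        exact ih l (by have := Fin.lt_def.mp hl; omega)
    exact fun j => hm (j:ℕ) j le_rfl
  -- final estimate
  have hYpos : (0:ℝ) < ‖w i‖ := lt_of_lt_of_le (by norm_num) (key i).1
  have ha : |τ*γ*⟪v n i, J (x n) (v n i)⟫| ≤ τ*B := by
    rw [abs_mul, abs_of_pos (mul_pos hτpos hγ)]
    have h1 : |⟪v n i, J (x n) (v n i)⟫| ≤ CJ := by
      calc |⟪v n i, J (x n) (v n i)⟫| ≤ ‖v n i‖ * ‖J (x n) (v n i)‖ := abs_real_inner_le_norm _ _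
        _ ≤ CJ := by rw [hvn1 i, one_mul]; exact hJop i
    calc τ*γ*|⟪v n i, J (x n) (v n i)⟫| ≤ τ*γ*CJ :=
          mul_le_mul_of_nonneg_left h1 (mul_pos hτpos hγ).le
      _ ≤ τ*B := by linarith [mul_le_mul_of_nonneg_left hγCJ hτpos.le]
  have hsum1i : ∑ l ∈ Finset.Iio i, ⟪vt i, v' l⟫^2 ≤ (k:ℝ)*(7*B*τ)^2 := by
    calc ∑ l ∈ Finset.Iio i, ⟪vt i, v' l⟫^2 ≤ ∑ _l ∈ Finset.Iio i, (7*B*τ)^2 := by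
          apply Finset.sum_le_sum
          intro l hl
          have hlj := Finset.mem_Iio.mp hl
          have h1 := (key l).2 i hlj
          rw [← sq_abs]
          exact pow_le_pow_left₀ (abs_nonneg _) h1 2
      _ = ((Finset.Iio i).card : ℝ)*(7*B*τ)^2 := by rw [Finset.sum_const, nsmul_eq_mul]
      _ ≤ (k:ℝ)*(7*B*τ)^2 := mul_le_mul_of_nonneg_right (hcard i) (sq_nonneg _)
  have hsum0 : (0:ℝ) ≤ ∑ l ∈ Finset.Iio i, ⟪vt i, v' l⟫^2 :=
    Finset.sum_nonneg (fun l _ => sq_nonneg _)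
  have husq : ‖(τ*γ) • J (x n) (v n i)‖^2 ≤ (τ*B)^2 :=
    pow_le_pow_left₀ (norm_nonneg _) (hu i) 2
  set e : ℝ := ‖(τ*γ) • J (x n) (v n i)‖^2 - ∑ l ∈ Finset.Iio i, ⟪vt i, v' l⟫^2 with hedef
  have he : |e| ≤ (τ*B)^2 + (k:ℝ)*(7*B*τ)^2 := by
    rw [hedef, abs_le]
    constructor
    · linarith [husq, hsum1i, hsum0, sq_nonneg (‖(τ*γ) • J (x n) (v n i)‖)]
    · linarith [husq, hsum1i, hsum0, sq_nonneg (‖(τ*γ) • J (x n) (v n i)‖)]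
  have hsqw : ‖w i‖^2 = 1 + 2*(τ*γ*⟪v n i, J (x n) (v n i)⟫) + e := by
    rw [hwsq i, hvtsq i, hedef]; ring
  have hs4 : |τ*γ*⟪v n i, J (x n) (v n i)⟫| ≤ 1/4 := le_trans ha (by linarith)
  have hτBsq : (τ*B)^2 ≤ τ*B*(1/392) := by linarith [mul_le_mul_of_nonneg_left hτB hτB0]
  have he4 : |e| ≤ 1/4 := by
    apply le_trans he
    linarith [hτ49, hτB, hτBsq, hτB0]
  have hest := hisd_inv_est (‖w i‖) (τ*γ*⟪v n i, J (x n) (v n i)⟫) e hYpos hsqw hs4 he4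
  have hsq2 : (τ*γ*⟪v n i, J (x n) (v n i)⟫)^2 ≤ (τ*B)^2 := by
    rw [← sq_abs]
    exact pow_le_pow_left₀ (abs_nonneg _) ha 2
  calc |‖w i‖⁻¹ - 1 + τ*γ*⟪v n i, J (x n) (v n i)⟫|
      ≤ 8*(τ*γ*⟪v n i, J (x n) (v n i)⟫)^2 + 4*|e| := hest
    _ ≤ 8*(τ*B)^2 + 4*((τ*B)^2 + (k:ℝ)*(7*B*τ)^2) := by linarith [hsq2, he]
    _ = (12 + 196*(k:ℝ))*B^2*τ^2 := by ring
    _ ≤ ((8+200*(k:ℝ))*B^2+1)*τ^2 := by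
        linarith [mul_nonneg (mul_nonneg (by linarith : (0:ℝ) ≤ 4*(k:ℝ) - 4) (sq_nonneg B)) (sq_nonneg τ), sq_nonneg τ]
end
end

section
/- Under Assumption A, there exist τ₀ > 0 and Q > 0, depending only on d, k, L, β, γ, ‖x₀‖ and T, such that for every N ∈ ℕ with τ = T/N ≤ τ₀, the iterates of the discrete HiSD scheme satisfy, for all 1 ≤ i ≤ k and 1 ≤ n ≤ N, ‖Σ_{j=1}^{i−1} (v_{i,n−1}ᵀ v_{j,n}) v_{j,n} − τ γ Σ_{j=1}^{i−1} (v_{i,n−1}ᵀ J(x_{n−1}) v_{j,n−1}) v_{j,n−1}‖ ≤ Q τ². -/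
open scoped RealInnerProductSpace BigOperators

noncomputable section

lemma hisd_geom {k : ℕ} (j : Fin k) :
    ∑ l ∈ Finset.Iio j, (3:ℝ)^(l:ℕ) = ((3:ℝ)^(j:ℕ) - 1)/2 := by
  have : ∑ l ∈ Finset.Iio j, (3:ℝ)^(l:ℕ) = ∑ m ∈ Finset.Iio (j:ℕ), (3:ℝ)^m := by
    rw [← Fin.map_valEmbedding_Iio, Finset.sum_map]; rfl
  rw [this, Nat.Iio_eq_range, geom_sum_eq (by norm_num : (3:ℝ) ≠ 1)]
  norm_num

lemma hisd_gs_delta {d k : ℕ} (vn vt v' : Fin k → EuclideanSpace ℝ (Fin d))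
    (ε : ℝ) (hε : 0 ≤ ε)
    (hnn : ∀ i : Fin k, ‖vn i‖ = 1)
    (hon : ∀ i j : Fin k, i ≠ j → ⟪vn i, vn j⟫ = 0)
    (hn' : ∀ i : Fin k, ‖v' i‖ = 1)
    (hvt : ∀ i : Fin k, ‖vt i - vn i‖ ≤ ε)
    (h : ∀ i : Fin k,
      (vt i - ∑ j ∈ Finset.Iio i, ⟪vt i, v' j⟫ • v' j) ≠ 0 ∧
      v' i = ‖vt i - ∑ j ∈ Finset.Iio i, ⟪vt i, v' j⟫ • v' j‖⁻¹ •
        (vt i - ∑ j ∈ Finset.Iio i, ⟪vt i, v' j⟫ • v' j)) :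
    ∀ j : Fin k, ‖v' j - vn j‖ ≤ ε * (2*(1+k)*3^(j:ℕ)) ∧
      ‖(vt j - ∑ l ∈ Finset.Iio j, ⟪vt j, v' l⟫ • v' l) - vn j‖ ≤ ε * ((1+k)*3^(j:ℕ)) := by
  set w : Fin k → EuclideanSpace ℝ (Fin d) :=
    fun i => vt i - ∑ j ∈ Finset.Iio i, ⟪vt i, v' j⟫ • v' j with hwdef
  -- key inner bound
  have hip : ∀ j l : Fin k, l ≠ j → |⟪vt j, v' l⟫| ≤ ‖v' l - vn l‖ + ε := by
    intro j l hlj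
    have h0 : ⟪vn j, vn l⟫ = 0 := hon j l (Ne.symm hlj)
    have hdecomp : ⟪vt j, v' l⟫ = ⟪vn j, v' l - vn l⟫ + ⟪vt j - vn j, v' l⟫ := by
      simp only [inner_sub_left, inner_sub_right, h0]; ring
    calc |⟪vt j, v' l⟫| ≤ |⟪vn j, v' l - vn l⟫| + |⟪vt j - vn j, v' l⟫| := by
          rw [hdecomp]; exact abs_add_le _ _
      _ ≤ ‖vn j‖ * ‖v' l - vn l‖ + ‖vt j - vn j‖ * ‖v' l‖ :=
          add_le_add (abs_real_inner_le_norm _ _) (abs_real_inner_le_norm _ _)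
      _ ≤ ‖v' l - vn l‖ + ε := by
          rw [hnn j, one_mul, hn' l, mul_one]; exact add_le_add_right (hvt j) _
  have main : ∀ m : ℕ, ∀ j : Fin k, (j:ℕ) = m →
      ‖v' j - vn j‖ ≤ ε * (2*(1+k)*3^(j:ℕ)) ∧
      ‖w j - vn j‖ ≤ ε * ((1+k)*3^(j:ℕ)) := by
    intro m
    induction m using Nat.strong_induction_on with
    | _ m ih =>
      intro j hjm
      obtain ⟨hw0, hvj⟩ := h j
      have hwb : ‖w j - vn j‖ ≤ ε * ((1+k)*3^(j:ℕ)) := by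
        have h1 : w j - vn j = (vt j - vn j) - ∑ l ∈ Finset.Iio j, ⟪vt j, v' l⟫ • v' l := by
          simp only [hwdef]; abel
        have h2 : ‖w j - vn j‖ ≤ ε + ∑ l ∈ Finset.Iio j, |⟪vt j, v' l⟫| := by
          rw [h1]
          refine le_trans (norm_sub_le _ _) (add_le_add (hvt j) ?_)
          refine le_trans (norm_sum_le _ _) (Finset.sum_le_sum ?_)
          intro l _
          rw [norm_smul, Real.norm_eq_abs, hn' l, mul_one]
        have h3 : ∑ l ∈ Finset.Iio j, |⟪vt j, v' l⟫| ≤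
            ∑ l ∈ Finset.Iio j, (ε * (2*(1+k)*3^(l:ℕ)) + ε) := by
          refine Finset.sum_le_sum ?_
          intro l hl
          have hlj := Finset.mem_Iio.mp hl
          refine le_trans (hip j l hlj.ne) (add_le_add_left ?_ _)
          exact (ih (l:ℕ) (hjm ▸ hlj) l rfl).1
        have hs : ∑ l ∈ Finset.Iio j, (ε * (2*(1+(k:ℝ))*3^(l:ℕ)))
            = ε * (2*(1+(k:ℝ))) * ∑ l ∈ Finset.Iio j, (3:ℝ)^(l:ℕ) := by
          rw [Finset.mul_sum]; exact Finset.sum_congr rfl (fun l _ => by ring)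
        have h4 : ∑ l ∈ Finset.Iio j, (ε * (2*(1+k)*3^(l:ℕ)) + ε)
            = ε * (2*(1+k)) * (((3:ℝ)^(j:ℕ) - 1)/2) + (j:ℕ) * ε := by
          rw [Finset.sum_add_distrib, hs, hisd_geom j, Finset.sum_const, Fin.card_Iio,
            nsmul_eq_mul]
        have hjk : ((j:ℕ):ℝ) ≤ (k:ℝ) := by exact_mod_cast (j.isLt).le
        have hpow : (1:ℝ) ≤ 3^(j:ℕ) := one_le_pow₀ (by norm_num)
        have hk0 : (0:ℝ) ≤ (k:ℝ) := Nat.cast_nonneg k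
        nlinarith [h2, h3, h4, mul_nonneg hε hk0, mul_nonneg hε (sub_nonneg.mpr hpow)]
      refine ⟨?_, hwb⟩
      have h5 : ‖v' j - w j‖ = |1 - ‖w j‖| := by
        rw [hvj]
        have : ‖w j‖⁻¹ • w j - w j = (‖w j‖⁻¹ - 1) • w j := by rw [sub_smul, one_smul]
        have habs : ∀ a : ℝ, 0 < a → |a⁻¹ - 1| * a = |1 - a| := by
          intro a ha
          calc |a⁻¹ - 1| * a = |(a⁻¹-1)*a| := by rw [abs_mul, abs_of_pos ha]
            _ = |1 - a| := by rw [sub_mul, inv_mul_cancel₀ ha.ne', one_mul]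
        rw [this, norm_smul, Real.norm_eq_abs, habs _ (norm_pos_iff.mpr hw0)]
      have h6 : |1 - ‖w j‖| ≤ ‖w j - vn j‖ := by
        rw [← hnn j]
        refine le_trans (abs_norm_sub_norm_le (vn j) (w j)) ?_
        rw [norm_sub_rev]
      calc ‖v' j - vn j‖ = ‖(v' j - w j) + (w j - vn j)‖ := by rw [sub_add_sub_cancel]
        _ ≤ ‖v' j - w j‖ + ‖w j - vn j‖ := norm_add_le _ _
        _ ≤ ‖w j - vn j‖ + ‖w j - vn j‖ := by rw [h5]; exact add_le_add_left h6 _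
        _ ≤ ε * ((1+k)*3^(j:ℕ)) + ε * ((1+k)*3^(j:ℕ)) := add_le_add hwb hwb
        _ = ε * (2*(1+k)*3^(j:ℕ)) := by ring
  intro j
  exact main (j:ℕ) j rfl

lemma hisd_norm_one {d : ℕ} (x : EuclideanSpace ℝ (Fin d)) (h : ⟪x,x⟫ = 1) : ‖x‖ = 1 := by
  have h2 : ‖x‖ * ‖x‖ = 1 := by rw [← real_inner_self_eq_norm_mul_norm, h]
  rcases mul_self_eq_one_iff.mp h2 with h | h
  · exact h
  · nlinarith [norm_nonneg x]

lemma hisd_gs_ortho {d k : ℕ} (vt v' : Fin k → EuclideanSpace ℝ (Fin d))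
    (h : ∀ i : Fin k,
      (vt i - ∑ j ∈ Finset.Iio i, ⟪vt i, v' j⟫ • v' j) ≠ 0 ∧
      v' i = ‖vt i - ∑ j ∈ Finset.Iio i, ⟪vt i, v' j⟫ • v' j‖⁻¹ •
        (vt i - ∑ j ∈ Finset.Iio i, ⟪vt i, v' j⟫ • v' j)) :
    ∀ i j : Fin k, ⟪v' i, v' j⟫ = if i = j then (1:ℝ) else 0 := by
  set w : Fin k → EuclideanSpace ℝ (Fin d) :=
    fun i => vt i - ∑ j ∈ Finset.Iio i, ⟪vt i, v' j⟫ • v' j with hwdef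
  have main : ∀ m : ℕ, ∀ i : Fin k, (i:ℕ) = m →
      (‖v' i‖ = 1 ∧ ∀ j, j < i → ⟪v' i, v' j⟫ = 0) := by
    intro m
    induction m using Nat.strong_induction_on with
    | _ m ih =>
      intro i him
      obtain ⟨hw, hvi⟩ := h i
      constructor
      · rw [hvi, norm_smul, norm_inv, norm_norm, inv_mul_cancel₀ (norm_ne_zero_iff.mpr hw)]
      · intro j hj
        have hpair : ∀ l : Fin k, l < i → ⟪v' l, v' j⟫ = if l = j then (1:ℝ) else 0 := by
          intro l hl
          rcases lt_trichotomy l j with hlj | hlj | hlj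
          · rw [if_neg hlj.ne, real_inner_comm]
            exact ((ih (j:ℕ) (him ▸ hj) j rfl).2 l hlj)
          · subst hlj
            rw [if_pos rfl, real_inner_self_eq_norm_mul_norm,
              (ih (l:ℕ) (him ▸ hl) l rfl).1, one_mul]
          · rw [if_neg hlj.ne', (ih (l:ℕ) (him ▸ hl) l rfl).2 j hlj]
        have hwj : ⟪w i, v' j⟫ = 0 := by
          have hsum : ∑ l ∈ Finset.Iio i, ⟪⟪vt i, v' l⟫ • v' l, v' j⟫ = ⟪vt i, v' j⟫ := by
            rw [Finset.sum_eq_single_of_mem j (Finset.mem_Iio.mpr hj)]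
            · rw [real_inner_smul_left, hpair j hj, if_pos rfl, mul_one]
            · intro l hl hlj
              rw [real_inner_smul_left, hpair l (Finset.mem_Iio.mp hl), if_neg hlj, mul_zero]
          simp only [hwdef, inner_sub_left, sum_inner, hsum, sub_self]
        rw [hvi, real_inner_smul_left, hwj, mul_zero]
  intro i j
  rcases lt_trichotomy i j with hij | hij | hij
  · rw [if_neg hij.ne, real_inner_comm, (main (j:ℕ) j rfl).2 i hij]
  · subst hij
    rw [if_pos rfl, real_inner_self_eq_norm_mul_norm, (main (i:ℕ) i rfl).1, one_mul]
  · rw [if_neg hij.ne', (main (i:ℕ) i rfl).2 j hij]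

set_option maxHeartbeats 4000000 in
theorem hisd_stmt5
    (d k : ℕ) (hd : 1 ≤ d) (hk : 1 ≤ k) (hkd : k ≤ d)
    (F : EuclideanSpace ℝ (Fin d) → EuclideanSpace ℝ (Fin d))
    (J : EuclideanSpace ℝ (Fin d) → (EuclideanSpace ℝ (Fin d) →L[ℝ] EuclideanSpace ℝ (Fin d)))
    (hJsymm : ∀ x u w, ⟪J x u, w⟫ = ⟪u, J x w⟫)
    (L : ℝ) (hL : 0 < L)
    (hLip : ∀ x₁ x₂ : EuclideanSpace ℝ (Fin d), ‖J x₂ - J x₁‖ + ‖F x₂ - F x₁‖ ≤ L * ‖x₂ - x₁‖)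
    (hgrow : ∀ x : EuclideanSpace ℝ (Fin d), ‖F x‖ ≤ L * (1 + ‖x‖))
    (β γ : ℝ) (hβ : 0 < β) (hγ : 0 < γ)
    (T : ℝ) (hT : 0 < T)
    (x₀ : EuclideanSpace ℝ (Fin d))
    (v₀ : Fin k → EuclideanSpace ℝ (Fin d))
    (hv₀ : ∀ i j : Fin k, ⟪v₀ i, v₀ j⟫ = if i = j then (1:ℝ) else 0) :
    ∃ τ₀ > (0:ℝ), ∃ Q > (0:ℝ), ∀ (N : ℕ) (τ : ℝ), 0 < N → τ = T / N → τ ≤ τ₀ →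
      ∀ (x : ℕ → EuclideanSpace ℝ (Fin d)) (v : ℕ → Fin k → EuclideanSpace ℝ (Fin d)),
        x 0 = x₀ → v 0 = v₀ →
        (∀ n < N, x (n+1) = x n + τ •
            (β • (F (x n) - (2:ℝ) • ∑ j, ⟪v n j, F (x n)⟫ • v n j))) →
        (∀ n < N, ∀ i : Fin k,
          let vt := v n i + (τ * γ) • J (x n) (v n i)
          let w := vt - ∑ j ∈ Finset.Iio i, ⟪vt, v (n+1) j⟫ • v (n+1) j
          w ≠ 0 ∧ v (n+1) i = ‖w‖⁻¹ • w) →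
        ∀ n < N, ∀ i : Fin k,
          ‖(∑ j ∈ Finset.Iio i, ⟪v n i, v (n+1) j⟫ • v (n+1) j) -
            (τ * γ) • ∑ j ∈ Finset.Iio i, ⟪v n i, J (x n) (v n j)⟫ • v n j‖ ≤ Q * τ^2 := by
  have hk1 : (1:ℝ) ≤ (k:ℝ) := by exact_mod_cast hk
  have hkr : (0:ℝ) < (k:ℝ) := by linarith
  set c : ℝ := β*(1+2*(k:ℝ))*L with hc
  have hcpos : 0 < c := by positivity
  set R : ℝ := Real.exp (c*T) * (1+‖x₀‖) with hR
  have hR1 : 1 ≤ R := by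
    have h1 : (1:ℝ) ≤ Real.exp (c*T) := Real.one_le_exp (by positivity)
    nlinarith only [h1, norm_nonneg x₀, hR]
  set MJ : ℝ := ‖J x₀‖ + L * (R + ‖x₀‖) with hMJ
  have hMJpos : 0 < MJ := by
    nlinarith only [norm_nonneg (J x₀), norm_nonneg x₀, hMJ, hR1, hL]
  set M : ℝ := γ * MJ with hM
  have hMpos : 0 < M := by positivity
  set E1 : ℝ := M * (1+(k:ℝ)) * 3^k with hE1
  have hE1pos : 0 < E1 := by positivity
  set D : ℝ := 2 * E1 with hD
  have hDpos : 0 < D := by positivity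
  set G : ℝ := M + (k:ℝ)*(D+M)*D with hG
  have hGpos : 0 < G := by positivity
  set Hc : ℝ := 2*E1*G + (k:ℝ)*(D+M)*D with hHc
  have hHcpos : 0 < Hc := by positivity
  refine ⟨min 1 (1/(2*E1)), lt_min one_pos (by positivity), (k:ℝ)*(D^2+Hc)+1, by positivity, ?_⟩
  intro N τ hN hτ hττ₀ x v hx0 hv0 hxstep hvstep
  have hNpos : (0:ℝ) < (N:ℝ) := by exact_mod_cast hN
  have hτpos : 0 < τ := hτ ▸ div_pos hT hNpos
  have hτ1 : τ ≤ 1 := le_trans hττ₀ (min_le_left _ _)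
  have hτE : τ * E1 ≤ 1/2 := by
    have h1 : τ ≤ 1/(2*E1) := le_trans hττ₀ (min_le_right _ _)
    have h2 := (le_div_iff₀ (by positivity : (0:ℝ) < 2*E1)).mp h1
    linarith only [h2]
  -- orthonormality at every step
  have orth : ∀ m, m ≤ N → ∀ i j : Fin k, ⟪v m i, v m j⟫ = if i = j then (1:ℝ) else 0 := by
    intro m
    induction m with
    | zero => intro _; rw [hv0]; exact hv₀
    | succ p ihp =>
      intro hpN
      exact hisd_gs_ortho (fun i => v p i + (τ*γ) • J (x p) (v p i)) (v (p+1))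
        (fun i => hvstep p (Nat.lt_of_succ_le hpN) i)
  have vnorm : ∀ m, m ≤ N → ∀ i : Fin k, ‖v m i‖ = 1 := by
    intro m hm i
    exact hisd_norm_one _ (by rw [orth m hm i i, if_pos rfl])
  -- bound on x
  have hxb : ∀ m, m ≤ N → 1 + ‖x m‖ ≤ (1+τ*c)^m * (1+‖x₀‖) := by
    intro m
    induction m with
    | zero => intro _; rw [hx0]; simp
    | succ p ihp =>
      intro hpN
      have hpN' : p ≤ N := le_of_lt (Nat.lt_of_succ_le hpN)
      have hstep := hxstep p (Nat.lt_of_succ_le hpN)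
      have hFb : ‖F (x p)‖ ≤ L * (1 + ‖x p‖) := hgrow _
      have hsum : ‖∑ j, ⟪v p j, F (x p)⟫ • v p j‖ ≤ (k:ℝ) * ‖F (x p)‖ := by
        refine le_trans (norm_sum_le _ _) ?_
        have hone : ∀ j : Fin k, ‖⟪v p j, F (x p)⟫ • v p j‖ ≤ ‖F (x p)‖ := by
          intro j
          rw [norm_smul, Real.norm_eq_abs, vnorm p hpN' j, mul_one]
          refine le_trans (abs_real_inner_le_norm _ _) ?_
          rw [vnorm p hpN' j, one_mul]
        refine le_trans (Finset.sum_le_sum (fun j _ => hone j)) ?_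
        rw [Finset.sum_const, Finset.card_univ, Fintype.card_fin, nsmul_eq_mul]
      have hstepn : ‖x (p+1) - x p‖ ≤ τ * c * (1+‖x p‖) := by
        rw [hstep, add_sub_cancel_left, norm_smul, norm_smul, Real.norm_eq_abs,
          Real.norm_eq_abs, abs_of_pos hτpos, abs_of_pos hβ]
        have h2 : ‖F (x p) - (2:ℝ) • ∑ j, ⟪v p j, F (x p)⟫ • v p j‖
            ≤ (1+2*(k:ℝ)) * ‖F (x p)‖ := by
          refine le_trans (norm_sub_le _ _) ?_
          rw [norm_smul, Real.norm_eq_abs, (by norm_num : |(2:ℝ)| = 2)]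
          linarith only [hsum, norm_nonneg (F (x p))]
        have h3 : ‖F (x p) - (2:ℝ) • ∑ j, ⟪v p j, F (x p)⟫ • v p j‖
            ≤ (1+2*(k:ℝ)) * (L * (1 + ‖x p‖)) :=
          le_trans h2 (mul_le_mul_of_nonneg_left hFb (by positivity))
        rw [hc]
        linarith only [mul_le_mul_of_nonneg_left h3 (show (0:ℝ) ≤ τ*β by positivity)]
      have hnd : ‖x (p+1)‖ - ‖x p‖ ≤ ‖x (p+1) - x p‖ := norm_sub_norm_le _ _
      have hih := ihp hpN'
      rw [pow_succ]
      have htc : (0:ℝ) ≤ 1 + τ*c := by positivity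
      linarith only [hstepn, hnd, mul_le_mul_of_nonneg_right hih htc]
  have hxR : ∀ m, m ≤ N → 1 + ‖x m‖ ≤ R := by
    intro m hm
    refine le_trans (hxb m hm) ?_
    rw [hR]
    have h2 : (1+τ*c)^m ≤ Real.exp (c*T) := by
      have h3 : (1+τ*c)^m ≤ (1+τ*c)^N :=
        pow_le_pow_right₀ (by linarith only [mul_pos hτpos hcpos]) hm
      have h4 : (1+τ*c)^N ≤ Real.exp (τ*c)^N :=
        pow_le_pow_left₀ (by positivity) (by linarith only [Real.add_one_le_exp (τ*c)]) N
      have h5 : Real.exp (τ*c)^N = Real.exp ((N:ℝ)*(τ*c)) := (Real.exp_nat_mul _ N).symm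
      have h6 : (N:ℝ)*(τ*c) = c*T := by
        have hNne : (N:ℝ) ≠ 0 := hNpos.ne'
        rw [hτ]; field_simp
      calc (1+τ*c)^m ≤ (1+τ*c)^N := h3
        _ ≤ Real.exp (τ*c)^N := h4
        _ = Real.exp (c*T) := by rw [h5, h6]
    exact mul_le_mul_of_nonneg_right h2 (by positivity)
  have hJb : ∀ m, m ≤ N → ‖J (x m)‖ ≤ MJ := by
    intro m hm
    have h1 := hLip x₀ (x m)
    have h2 : ‖J (x m)‖ - ‖J x₀‖ ≤ ‖J (x m) - J x₀‖ := norm_sub_norm_le _ _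
    have h3 : ‖x m - x₀‖ ≤ ‖x m‖ + ‖x₀‖ := norm_sub_le _ _
    have h4 : ‖x m‖ ≤ R := by linarith only [hxR m hm]
    have h5 := norm_nonneg (F (x m) - F x₀)
    have h6 : L * ‖x m - x₀‖ ≤ L * (R + ‖x₀‖) := by
      apply mul_le_mul_of_nonneg_left _ hL.le
      linarith only [h3, h4]
    rw [hMJ]; linarith only [h1, h2, h5, h6]
  -- now the fixed step n
  intro n hn i
  have hnN : n ≤ N := hn.le
  have hn1N : n + 1 ≤ N := hn
  set vt : Fin k → EuclideanSpace ℝ (Fin d) :=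
    fun p => v n p + (τ*γ) • J (x n) (v n p) with hvt
  set w : Fin k → EuclideanSpace ℝ (Fin d) :=
    fun p => vt p - ∑ l ∈ Finset.Iio p, ⟪vt p, v (n+1) l⟫ • v (n+1) l with hwdef
  have hgs : ∀ p : Fin k, w p ≠ 0 ∧ v (n+1) p = ‖w p‖⁻¹ • w p :=
    fun p => hvstep n hn p
  have hvtb : ∀ p : Fin k, ‖vt p - v n p‖ ≤ τ * M := by
    intro p
    have h1 : vt p - v n p = (τ*γ) • J (x n) (v n p) := by simp [hvt]
    rw [h1, norm_smul, Real.norm_eq_abs, abs_of_pos (by positivity)]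
    calc τ*γ*‖J (x n) (v n p)‖ ≤ τ*γ*(‖J (x n)‖ * ‖v n p‖) :=
          mul_le_mul_of_nonneg_left (ContinuousLinearMap.le_opNorm (J (x n)) (v n p))
            (by positivity)
      _ ≤ τ * M := by
          rw [vnorm n hnN p, mul_one, hM]
          have h7 := hJb n hnN
          linarith only [mul_le_mul_of_nonneg_left h7 (show (0:ℝ) ≤ τ*γ by positivity)]
  have hdelta := hisd_gs_delta (v n) vt (v (n+1)) (τ*M) (by positivity)
    (vnorm n hnN)
    (fun p q hpq => by rw [orth n hnN p q, if_neg hpq])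
    (vnorm (n+1) hn1N) hvtb hgs
  -- simplified delta bounds
  have h3k : ∀ p : Fin k, (3:ℝ)^(p:ℕ) ≤ 3^k := fun p => pow_le_pow_right₀ (by norm_num) p.isLt.le
  have hdD : ∀ p : Fin k, ‖v (n+1) p - v n p‖ ≤ τ * D := by
    intro p
    refine le_trans (hdelta p).1 ?_
    rw [hD, hE1]
    linarith only [mul_le_mul_of_nonneg_left (h3k p)
      (show (0:ℝ) ≤ τ*M*(2*(1+(k:ℝ))) by positivity)]
  have hwE : ∀ p : Fin k, ‖w p - v n p‖ ≤ τ * E1 := by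
    intro p
    refine le_trans (hdelta p).2 ?_
    rw [hE1]
    linarith only [mul_le_mul_of_nonneg_left (h3k p)
      (show (0:ℝ) ≤ τ*M*(1+(k:ℝ)) by positivity)]
    -- scalar cross bounds
  have hcross : ∀ p q : Fin k, p ≠ q → |⟪v n p, v (n+1) q⟫| ≤ τ * D := by
    intro p q hpq
    have h1 : ⟪v n p, v (n+1) q⟫ = ⟪v n p, v (n+1) q - v n q⟫ := by
      rw [inner_sub_right, orth n hnN p q, if_neg hpq, sub_zero]
    rw [h1]
    refine le_trans (abs_real_inner_le_norm _ _) ?_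
    rw [vnorm n hnN p, one_mul]
    exact hdD q
  have hsmulb : ∀ p : Fin k, ‖(τ*γ) • J (x n) (v n p)‖ ≤ τ * M := by
    intro p
    refine le_trans (le_of_eq (by rw [← (show vt p - v n p = (τ*γ) • J (x n) (v n p) by
      simp only [hvt]; exact add_sub_cancel_left _ _)])) (hvtb p)
  have hvtc : ∀ q l : Fin k, l ≠ q → |⟪vt q, v (n+1) l⟫| ≤ τ*(D+M) := by
    intro q l hlq
    have h1 : ⟪vt q, v (n+1) l⟫
        = ⟪v n q, v (n+1) l⟫ + ⟪(τ*γ) • J (x n) (v n q), v (n+1) l⟫ := by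
      simp only [hvt]; exact inner_add_left _ _ _
    rw [h1]
    refine le_trans (abs_add_le _ _) ?_
    have h2 : |⟪(τ*γ) • J (x n) (v n q), v (n+1) l⟫| ≤ τ * M := by
      refine le_trans (abs_real_inner_le_norm _ _) ?_
      rw [vnorm (n+1) hn1N l, mul_one]
      exact hsmulb q
    have h3 := hcross q l (Ne.symm hlq)
    linarith only [h3, h2]
  -- key second-order scalar bound
  have hkey : ∀ j : Fin k, j < i →
      |⟪v n i, v (n+1) j⟫ - τ*γ*⟪v n i, J (x n) (v n j)⟫| ≤ τ^2 * Hc := by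
    intro j hji
    have hij : i ≠ j := hji.ne'
    have hsw : ⟪v n i, w j⟫ = ⟪v n i, vt j⟫
        - ∑ l ∈ Finset.Iio j, ⟪vt j, v (n+1) l⟫ * ⟪v n i, v (n+1) l⟫ := by
      simp only [hwdef]
      rw [inner_sub_right, inner_sum]
      congr 1
      exact Finset.sum_congr rfl (fun l _ => real_inner_smul_right _ _ _)
    have hvtj : ⟪v n i, vt j⟫ = τ*γ*⟪v n i, J (x n) (v n j)⟫ := by
      simp only [hvt]
      rw [inner_add_right, orth n hnN i j, if_neg hij, real_inner_smul_right, zero_add]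
    have hsumb : |∑ l ∈ Finset.Iio j, ⟪vt j, v (n+1) l⟫ * ⟪v n i, v (n+1) l⟫|
        ≤ (k:ℝ) * (τ*(D+M) * (τ*D)) := by
      refine le_trans (Finset.abs_sum_le_sum_abs _ _) ?_
      have hterm : ∀ l ∈ Finset.Iio j,
          |⟪vt j, v (n+1) l⟫ * ⟪v n i, v (n+1) l⟫| ≤ τ*(D+M) * (τ*D) := by
        intro l hl
        have hlj : l < j := Finset.mem_Iio.mp hl
        rw [abs_mul]
        exact mul_le_mul (hvtc j l hlj.ne) (hcross i l (hlj.trans hji).ne')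
          (abs_nonneg _) (by positivity)
      refine le_trans (Finset.sum_le_card_nsmul _ _ _ hterm) ?_
      rw [Fin.card_Iio, nsmul_eq_mul]
      have hjk : ((j:ℕ):ℝ) ≤ (k:ℝ) := by exact_mod_cast j.isLt.le
      exact mul_le_mul_of_nonneg_right hjk (by positivity)
    have hb : |τ*γ*⟪v n i, J (x n) (v n j)⟫| ≤ τ * M := by
      rw [abs_mul, abs_mul, abs_of_pos hτpos, abs_of_pos hγ]
      have h1 : |⟪v n i, J (x n) (v n j)⟫| ≤ MJ := by
        refine le_trans (abs_real_inner_le_norm _ _) ?_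
        rw [vnorm n hnN i, one_mul]
        refine le_trans (ContinuousLinearMap.le_opNorm _ _) ?_
        rw [vnorm n hnN j, mul_one]
        exact hJb n hnN
      rw [hM, mul_assoc]
      exact mul_le_mul_of_nonneg_left (mul_le_mul_of_nonneg_left h1 hγ.le) hτpos.le
    have hs_abs : |⟪v n i, w j⟫| ≤ τ * G := by
      rw [hsw]
      have htri : |⟪v n i, vt j⟫
          - ∑ l ∈ Finset.Iio j, ⟪vt j, v (n+1) l⟫ * ⟪v n i, v (n+1) l⟫|
          ≤ |⟪v n i, vt j⟫|
            + |∑ l ∈ Finset.Iio j, ⟪vt j, v (n+1) l⟫ * ⟪v n i, v (n+1) l⟫| := by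
        rw [sub_eq_add_neg]
        exact le_trans (abs_add_le _ _) (by rw [abs_neg])
      refine le_trans htri ?_
      have h1 : |⟪v n i, vt j⟫| ≤ τ * M := hvtj ▸ hb
      rw [hG]
      linarith only [h1, hsumb,
        mul_le_mul_of_nonneg_right hτ1 (show (0:ℝ) ≤ τ*((k:ℝ)*((D+M)*D)) by positivity)]
    have hw0 := (hgs j).1
    have hwjb := hwE j
    have h1w : |1 - ‖w j‖| ≤ τ * E1 := by
      rw [← vnorm n hnN j]
      refine le_trans (le_trans (abs_norm_sub_norm_le (v n j) (w j)) ?_) hwjb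
      rw [norm_sub_rev]
    have hwhalf : (1:ℝ)/2 ≤ ‖w j‖ := by
      linarith only [hτE, (abs_le.mp h1w).2]
    have hwpos : (0:ℝ) < ‖w j‖ := by linarith only [hwhalf]
    have hinv : |‖w j‖⁻¹ - 1| ≤ 2*(τ*E1) := by
      have h2 : ‖w j‖⁻¹ - 1 = (1 - ‖w j‖) * ‖w j‖⁻¹ := by field_simp
      rw [h2, abs_mul, abs_of_pos (inv_pos.mpr hwpos)]
      have h3 : ‖w j‖⁻¹ ≤ 2 := by
        rw [show (2:ℝ) = ((1:ℝ)/2)⁻¹ by norm_num]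
        exact inv_anti₀ (by norm_num) hwhalf
      have h4 := mul_le_mul h1w h3 (by positivity) (by positivity)
      linarith only [h4]
    have ha : ⟪v n i, v (n+1) j⟫ = ‖w j‖⁻¹ * ⟪v n i, w j⟫ := by
      rw [(hgs j).2, real_inner_smul_right]
    have hsb : ⟪v n i, w j⟫ - τ*γ*⟪v n i, J (x n) (v n j)⟫
        = -(∑ l ∈ Finset.Iio j, ⟪vt j, v (n+1) l⟫ * ⟪v n i, v (n+1) l⟫) := by
      rw [hsw, hvtj]; ring
    have hdec : ⟪v n i, v (n+1) j⟫ - τ*γ*⟪v n i, J (x n) (v n j)⟫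
        = (‖w j‖⁻¹ - 1) * ⟪v n i, w j⟫
          + (⟪v n i, w j⟫ - τ*γ*⟪v n i, J (x n) (v n j)⟫) := by
      rw [ha]; ring
    rw [hdec]
    refine le_trans (abs_add_le _ _) ?_
    rw [abs_mul]
    have h4 : |‖w j‖⁻¹ - 1| * |⟪v n i, w j⟫| ≤ (2*(τ*E1)) * (τ*G) :=
      mul_le_mul hinv hs_abs (abs_nonneg _) (by positivity)
    have h5 : |⟪v n i, w j⟫ - τ*γ*⟪v n i, J (x n) (v n j)⟫|
        ≤ (k:ℝ) * (τ*(D+M) * (τ*D)) := by rw [hsb, abs_neg]; exact hsumb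
    rw [hHc]
    linarith only [h4, h5]
  -- assemble
  have hsplit : (∑ j ∈ Finset.Iio i, ⟪v n i, v (n+1) j⟫ • v (n+1) j) -
      (τ * γ) • ∑ j ∈ Finset.Iio i, ⟪v n i, J (x n) (v n j)⟫ • v n j
      = ∑ j ∈ Finset.Iio i, (⟪v n i, v (n+1) j⟫ • v (n+1) j
          - (τ*γ*⟪v n i, J (x n) (v n j)⟫) • v n j) := by
    rw [Finset.smul_sum, ← Finset.sum_sub_distrib]
    exact Finset.sum_congr rfl (fun j _ => by rw [smul_smul])
  rw [hsplit]
  refine le_trans (norm_sum_le _ _) ?_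
  have hterm : ∀ j ∈ Finset.Iio i, ‖⟪v n i, v (n+1) j⟫ • v (n+1) j
      - (τ*γ*⟪v n i, J (x n) (v n j)⟫) • v n j‖ ≤ τ^2*D^2 + τ^2*Hc := by
    intro j hj
    have hji := Finset.mem_Iio.mp hj
    have hdec2 : ⟪v n i, v (n+1) j⟫ • v (n+1) j
        - (τ*γ*⟪v n i, J (x n) (v n j)⟫) • v n j
        = ⟪v n i, v (n+1) j⟫ • (v (n+1) j - v n j)
          + (⟪v n i, v (n+1) j⟫ - τ*γ*⟪v n i, J (x n) (v n j)⟫) • v n j := by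
      rw [smul_sub, sub_smul]; abel
    rw [hdec2]
    refine le_trans (norm_add_le _ _) ?_
    rw [norm_smul, norm_smul, Real.norm_eq_abs, Real.norm_eq_abs, vnorm n hnN j, mul_one]
    have h1 := hcross i j hji.ne'
    have h2 := hdD j
    have h3 := hkey j hji
    linarith only [h3, mul_le_mul h1 h2 (norm_nonneg _) (by positivity : (0:ℝ) ≤ τ*D)]
  refine le_trans (Finset.sum_le_sum hterm) ?_
  rw [Finset.sum_const, Fin.card_Iio, nsmul_eq_mul]
  have hik : ((i:ℕ):ℝ) ≤ (k:ℝ) := by exact_mod_cast i.isLt.le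
  linarith only [sq_nonneg τ,
    mul_le_mul_of_nonneg_right hik (show (0:ℝ) ≤ τ^2*D^2 + τ^2*Hc by positivity)]
end
end

section
/- Under Assumption A, there exist τ₀ > 0 and Q > 0, depending only on d, k, L, β, γ, ‖x₀‖ and T, such that for every N ∈ ℕ with τ = T/N ≤ τ₀, the iterates of the discrete HiSD scheme satisfy, for all 1 ≤ i ≤ k and 1 ≤ n ≤ N, ‖τ γ Σ_{j=1}^{i−1} (v_{i,n−1}ᵀ J(x_{n−1})ᵀ v_{j,n}) v_{j,n} − τ γ Σ_{j=1}^{i−1} (v_{i,n−1}ᵀ J(x_{n−1})ᵀ v_{j,n−1}) v_{j,n−1}‖ ≤ Q τ². -/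
open scoped RealInnerProductSpace BigOperators

noncomputable section

variable {E : Type*} [NormedAddCommGroup E] [InnerProductSpace ℝ E]

lemma gs_on (k : ℕ) (vt v' : Fin k → E)
    (hGS : ∀ i : Fin k,
      (vt i - ∑ j ∈ Finset.Iio i, ⟪vt i, v' j⟫ • v' j) ≠ 0 ∧
      v' i = ‖vt i - ∑ j ∈ Finset.Iio i, ⟪vt i, v' j⟫ • v' j‖⁻¹ •
        (vt i - ∑ j ∈ Finset.Iio i, ⟪vt i, v' j⟫ • v' j)) :
    ∀ i j : Fin k, ⟪v' i, v' j⟫ = if i = j then (1:ℝ) else 0 := by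
  have hnorm : ∀ i, ‖v' i‖ = 1 := by
    intro i
    rw [(hGS i).2, norm_smul, norm_inv, norm_norm,
      inv_mul_cancel₀ (norm_ne_zero_iff.mpr (hGS i).1)]
  have hself : ∀ i, ⟪v' i, v' i⟫ = 1 := by
    intro i
    rw [real_inner_self_eq_norm_sq, hnorm]; norm_num
  have hperp : ∀ m : ℕ, ∀ i : Fin k, (i:ℕ) < m → ∀ j : Fin k, j < i → ⟪v' i, v' j⟫ = 0 := by
    intro m
    induction m with
    | zero => intro i hi; omega
    | succ m ih =>
      intro i him j hji
      have horth : ∀ l ∈ Finset.Iio i, ⟪vt i, v' l⟫ * ⟪v' l, v' j⟫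
          = if l = j then ⟪vt i, v' l⟫ else 0 := by
        intro l hl
        rw [Finset.mem_Iio] at hl
        by_cases hlj : l = j
        · subst hlj; rw [hself]; simp
        · rw [if_neg hlj]
          rcases lt_or_gt_of_ne hlj with h | h
          · have := ih j (by have := hji; have : (j:ℕ) < (i:ℕ) := hji; omega) l h
            rw [real_inner_comm (v' j) (v' l), this, mul_zero]
          · have := ih l (by have : (l:ℕ) < (i:ℕ) := hl; omega) j h
            rw [this, mul_zero]
      have hwj : ⟪vt i - ∑ l ∈ Finset.Iio i, ⟪vt i, v' l⟫ • v' l, v' j⟫ = 0 := by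
        rw [inner_sub_left, sum_inner]
        have : ∑ l ∈ Finset.Iio i, ⟪⟪vt i, v' l⟫ • v' l, v' j⟫
            = ∑ l ∈ Finset.Iio i, ⟪vt i, v' l⟫ * ⟪v' l, v' j⟫ := by
          refine Finset.sum_congr rfl fun l _ => ?_
          rw [real_inner_smul_left]
        rw [this, Finset.sum_congr rfl horth, Finset.sum_ite_eq' (Finset.Iio i) j
          (fun l => ⟪vt i, v' l⟫), if_pos (Finset.mem_Iio.mpr hji)]
        ring
      rw [(hGS i).2, real_inner_smul_left, hwj, mul_zero]
  intro i j
  by_cases hij : i = j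
  · subst hij; rw [if_pos rfl, hself]
  · rw [if_neg hij]
    rcases lt_or_gt_of_ne hij with h | h
    · rw [real_inner_comm]; exact hperp ((j:ℕ)+1) j (by omega) i h
    · exact hperp ((i:ℕ)+1) i (by omega) j h

variable {E : Type*} [NormedAddCommGroup E] [InnerProductSpace ℝ E]

lemma geom_sum_Iio (k : ℕ) (i : Fin k) :
    2 * (∑ j ∈ Finset.Iio i, (3:ℝ)^(j:ℕ)) + 1 ≤ 3^(i:ℕ) := by
  have h1 : ∑ j ∈ Finset.Iio i, (3:ℝ)^(j:ℕ)
      = ∑ m ∈ Finset.range (i:ℕ), (3:ℝ)^m := by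
    rw [← Nat.Iio_eq_range, ← Fin.map_valEmbedding_Iio, Finset.sum_map]
    rfl
  rw [h1, geom_sum_eq (by norm_num : (3:ℝ) ≠ 1)]
  have : (0:ℝ) < 3^(i:ℕ) := by positivity
  linarith [this]

lemma gs_close (k : ℕ) (vt v v' : Fin k → E) (τ ε : ℝ) (hτ : 0 ≤ τ) (hε : 0 ≤ ε)
    (hvon : ∀ i j : Fin k, ⟪v i, v j⟫ = if i = j then (1:ℝ) else 0)
    (hclose : ∀ i, ‖vt i - v i‖ ≤ τ * ε)
    (hGS : ∀ i : Fin k,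
      (vt i - ∑ j ∈ Finset.Iio i, ⟪vt i, v' j⟫ • v' j) ≠ 0 ∧
      v' i = ‖vt i - ∑ j ∈ Finset.Iio i, ⟪vt i, v' j⟫ • v' j‖⁻¹ •
        (vt i - ∑ j ∈ Finset.Iio i, ⟪vt i, v' j⟫ • v' j)) :
    ∀ i : Fin k, ‖v' i - v i‖ ≤ τ * (2*ε*(k+1) * 3^(i:ℕ)) := by
  set A : ℝ := 2*ε*(k+1) with hA
  have hApos : 0 ≤ A := by positivity
  have hv'on := gs_on k vt v' hGS
  have hv'norm : ∀ i, ‖v' i‖ = 1 := by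
    intro i
    have h2 : ‖v' i‖^2 = 1 := by
      rw [← real_inner_self_eq_norm_sq, hv'on]; simp
    nlinarith [norm_nonneg (v' i)]
  have hvnorm : ∀ i, ‖v i‖ = 1 := by
    intro i
    have h2 : ‖v i‖^2 = 1 := by
      rw [← real_inner_self_eq_norm_sq, hvon]; simp
    nlinarith [norm_nonneg (v i)]
  have main : ∀ m : ℕ, ∀ i : Fin k, (i:ℕ) < m → ‖v' i - v i‖ ≤ τ * (A * 3^(i:ℕ)) := by
    intro m
    induction m with
    | zero => intro i hi; omega
    | succ m ih =>
      intro i him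
      set w : E := vt i - ∑ j ∈ Finset.Iio i, ⟪vt i, v' j⟫ • v' j with hw
      -- coefficient bounds
      have hcoef : ∀ j ∈ Finset.Iio i, ‖⟪vt i, v' j⟫ • v' j‖ ≤ τ * (ε + A * 3^(j:ℕ)) := by
        intro j hj
        rw [Finset.mem_Iio] at hj
        have hIH : ‖v' j - v j‖ ≤ τ * (A * 3^(j:ℕ)) :=
          ih j (by have : (j:ℕ) < (i:ℕ) := hj; omega)
        have hsplit : ⟪vt i, v' j⟫ = ⟪vt i - v i, v' j⟫ + ⟪v i, v' j - v j⟫ + ⟪v i, v j⟫ := by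
          rw [inner_sub_left, inner_sub_right]; ring
        have hzero : ⟪v i, v j⟫ = (0:ℝ) := by
          rw [hvon]; rw [if_neg (by exact fun h => absurd h (by exact fun h => (ne_of_gt hj) (by rw [h]) ) )]
        have h1 : |⟪vt i - v i, v' j⟫| ≤ τ * ε := by
          calc |⟪vt i - v i, v' j⟫| ≤ ‖vt i - v i‖ * ‖v' j‖ := abs_real_inner_le_norm _ _
          _ = ‖vt i - v i‖ := by rw [hv'norm, mul_one]
          _ ≤ τ * ε := hclose i
        have h2 : |⟪v i, v' j - v j⟫| ≤ τ * (A * 3^(j:ℕ)) := by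
          calc |⟪v i, v' j - v j⟫| ≤ ‖v i‖ * ‖v' j - v j‖ := abs_real_inner_le_norm _ _
          _ = ‖v' j - v j‖ := by rw [hvnorm, one_mul]
          _ ≤ τ * (A * 3^(j:ℕ)) := hIH
        have habs : |⟪vt i, v' j⟫| ≤ τ * ε + τ * (A * 3^(j:ℕ)) := by
          rw [hsplit, hzero, add_zero]
          calc |⟪vt i - v i, v' j⟫ + ⟪v i, v' j - v j⟫|
              ≤ |⟪vt i - v i, v' j⟫| + |⟪v i, v' j - v j⟫| := abs_add_le _ _
          _ ≤ τ * ε + τ * (A * 3^(j:ℕ)) := add_le_add h1 h2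
        rw [norm_smul, Real.norm_eq_abs, hv'norm, mul_one]
        linarith [habs]
      have hsum : ∑ j ∈ Finset.Iio i, (3:ℝ)^(j:ℕ) ≤ (3^(i:ℕ) - 1)/2 := by
        have := geom_sum_Iio k i; linarith
      have hcard : (Finset.Iio i).card = (i:ℕ) := Fin.card_Iio i
      have hwv : ‖w - v i‖ ≤ τ * (ε * (1 + (i:ℕ)) + A * ((3^(i:ℕ) - 1)/2)) := by
        have : w - v i = (vt i - v i) - ∑ j ∈ Finset.Iio i, ⟪vt i, v' j⟫ • v' j := by
          rw [hw]; abel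
        rw [this]
        calc ‖(vt i - v i) - ∑ j ∈ Finset.Iio i, ⟪vt i, v' j⟫ • v' j‖
            ≤ ‖vt i - v i‖ + ‖∑ j ∈ Finset.Iio i, ⟪vt i, v' j⟫ • v' j‖ := norm_sub_le _ _
        _ ≤ τ * ε + ∑ j ∈ Finset.Iio i, ‖⟪vt i, v' j⟫ • v' j‖ :=
            add_le_add (hclose i) (norm_sum_le _ _)
        _ ≤ τ * ε + ∑ j ∈ Finset.Iio i, τ * (ε + A * 3^(j:ℕ)) :=
            add_le_add_right (Finset.sum_le_sum hcoef) _
        _ = τ * ε + ∑ j ∈ Finset.Iio i, ((τ * ε) + (τ * A) * 3^(j:ℕ)) := by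
            congr 1; exact Finset.sum_congr rfl (fun j _ => by ring)
        _ = τ * ε + ((i:ℕ) * (τ * ε) + τ * A * ∑ j ∈ Finset.Iio i, (3:ℝ)^(j:ℕ)) := by
            rw [Finset.sum_add_distrib, Finset.sum_const, hcard, ← Finset.mul_sum,
              nsmul_eq_mul]
        _ ≤ τ * ε + ((i:ℕ) * (τ * ε) + τ * A * ((3^(i:ℕ) - 1)/2)) := by
            have hτA : 0 ≤ τ * A := by positivity
            have := mul_le_mul_of_nonneg_left hsum hτA
            linarith
        _ = τ * (ε * (1 + (i:ℕ)) + A * ((3^(i:ℕ) - 1)/2)) := by ring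
      have hwne : w ≠ 0 := (hGS i).1
      have hnz : ‖w‖ ≠ 0 := norm_ne_zero_iff.mpr hwne
      have hv'w : ‖v' i - w‖ = |1 - ‖w‖| := by
        rw [(hGS i).2]
        have h0 : ‖w‖⁻¹ • w - w = (‖w‖⁻¹ - 1) • w := by rw [sub_smul, one_smul]
        rw [h0, norm_smul, Real.norm_eq_abs,
          show |1 - ‖w‖| = |(‖w‖⁻¹ - 1) * ‖w‖| from by
            rw [sub_mul, inv_mul_cancel₀ hnz, one_mul],
          abs_mul, abs_of_nonneg (norm_nonneg w)]
      have h1w : |1 - ‖w‖| ≤ ‖w - v i‖ := by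
        have h := abs_norm_sub_norm_le (v i) w
        rw [hvnorm] at h
        calc |1 - ‖w‖| ≤ ‖v i - w‖ := h
        _ = ‖w - v i‖ := norm_sub_rev _ _
      have hik : ((i:ℕ):ℝ) + 1 ≤ (k:ℝ) + 1 := by
        have := i.isLt
        have h1 : (i:ℕ) + 1 ≤ k + 1 := by omega
        exact_mod_cast h1
      have hXY : (ε * (1 + (i:ℕ)) + A * ((3^((i:ℕ)) - 1)/2)) * 2 ≤ A * 3^((i:ℕ)) := by
        have h2 : ε * (1 + ((i:ℕ):ℝ)) * 2 ≤ A := by rw [hA]; nlinarith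
        nlinarith
      calc ‖v' i - v i‖ = ‖(v' i - w) + (w - v i)‖ := by rw [sub_add_sub_cancel]
      _ ≤ ‖v' i - w‖ + ‖w - v i‖ := norm_add_le _ _
      _ = |1 - ‖w‖| + ‖w - v i‖ := by rw [hv'w]
      _ ≤ ‖w - v i‖ + ‖w - v i‖ := add_le_add h1w le_rfl
      _ ≤ τ * (ε * (1 + (i:ℕ)) + A * ((3^(i:ℕ) - 1)/2)) * 2 := by linarith
      _ = τ * ((ε * (1 + (i:ℕ)) + A * ((3^(i:ℕ) - 1)/2)) * 2) := by ring
      _ ≤ τ * (A * 3^(i:ℕ)) := mul_le_mul_of_nonneg_left hXY hτ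
  intro i
  exact main ((i:ℕ)+1) i (by omega)

set_option maxHeartbeats 1000000 in
theorem hisd_stmt6
    (d k : ℕ) (hd : 1 ≤ d) (hk : 1 ≤ k) (hkd : k ≤ d)
    (F : EuclideanSpace ℝ (Fin d) → EuclideanSpace ℝ (Fin d))
    (J : EuclideanSpace ℝ (Fin d) → (EuclideanSpace ℝ (Fin d) →L[ℝ] EuclideanSpace ℝ (Fin d)))
    (hJsymm : ∀ x u w, ⟪J x u, w⟫ = ⟪u, J x w⟫)
    (L : ℝ) (hL : 0 < L)
    (hLip : ∀ x₁ x₂ : EuclideanSpace ℝ (Fin d), ‖J x₂ - J x₁‖ + ‖F x₂ - F x₁‖ ≤ L * ‖x₂ - x₁‖)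
    (hgrow : ∀ x : EuclideanSpace ℝ (Fin d), ‖F x‖ ≤ L * (1 + ‖x‖))
    (β γ : ℝ) (hβ : 0 < β) (hγ : 0 < γ)
    (T : ℝ) (hT : 0 < T)
    (x₀ : EuclideanSpace ℝ (Fin d))
    (v₀ : Fin k → EuclideanSpace ℝ (Fin d))
    (hv₀ : ∀ i j : Fin k, ⟪v₀ i, v₀ j⟫ = if i = j then (1:ℝ) else 0) :
    ∃ τ₀ > (0:ℝ), ∃ Q > (0:ℝ), ∀ (N : ℕ) (τ : ℝ), 0 < N → τ = T / N → τ ≤ τ₀ →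
      ∀ (x : ℕ → EuclideanSpace ℝ (Fin d)) (v : ℕ → Fin k → EuclideanSpace ℝ (Fin d)),
        x 0 = x₀ → v 0 = v₀ →
        (∀ n < N, x (n+1) = x n + τ •
            (β • (F (x n) - (2:ℝ) • ∑ j, ⟪v n j, F (x n)⟫ • v n j))) →
        (∀ n < N, ∀ i : Fin k,
          let vt := v n i + (τ * γ) • J (x n) (v n i)
          let w := vt - ∑ j ∈ Finset.Iio i, ⟪vt, v (n+1) j⟫ • v (n+1) j
          w ≠ 0 ∧ v (n+1) i = ‖w‖⁻¹ • w) →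
        ∀ n < N, ∀ i : Fin k,
          ‖(τ * γ) • (∑ j ∈ Finset.Iio i, ⟪J (x n) (v n i), v (n+1) j⟫ • v (n+1) j) -
            (τ * γ) • (∑ j ∈ Finset.Iio i, ⟪J (x n) (v n i), v n j⟫ • v n j)‖ ≤ Q * τ^2 := by
  set a : ℝ := β*(1+2*(k:ℝ))*L with ha_def
  have hapos : 0 < a := by rw [ha_def]; positivity
  set B : ℝ := Real.exp (a*T) * (1+‖x₀‖) with hB_def
  have hBpos : 0 < B := by rw [hB_def]; positivity
  set M : ℝ := ‖J 0‖ + L*B with hM_def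
  have hMpos : 0 < M := by
    rw [hM_def]
    have := norm_nonneg (J 0)
    nlinarith
  set A : ℝ := 2*(γ*M)*((k:ℝ)+1) with hA_def
  have hApos : 0 < A := by
    rw [hA_def]
    have h0 : (0:ℝ) ≤ (k:ℝ) := Nat.cast_nonneg k
    have h1 : 0 < γ * M := mul_pos hγ hMpos
    nlinarith
  set C : ℝ := A * 3^k with hC_def
  have hCpos : 0 < C := by
    rw [hC_def]
    positivity
  refine ⟨1, one_pos, 2*γ*(k:ℝ)*M*C + 1, ?_, ?_⟩
  · have h1 : (0:ℝ) ≤ 2*γ*(k:ℝ)*M*C :=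
      mul_nonneg (mul_nonneg (mul_nonneg (by positivity) (Nat.cast_nonneg k)) hMpos.le) hCpos.le
    linarith
  intro N τ hN hτdef hττ₀ x v hx0 hv0 hxstep hGS
  have hτpos : 0 < τ := by
    rw [hτdef]
    exact div_pos hT (by exact_mod_cast hN)
  have hτN : τ * N = T := by
    rw [hτdef]
    field_simp
  -- Gram-Schmidt hypothesis, non-let form
  have hGS' : ∀ n < N, ∀ i : Fin k,
      ((v n i + (τ*γ) • J (x n) (v n i)) -
        ∑ j ∈ Finset.Iio i, ⟪(v n i + (τ*γ) • J (x n) (v n i)), v (n+1) j⟫ • v (n+1) j) ≠ 0 ∧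
      v (n+1) i = ‖(v n i + (τ*γ) • J (x n) (v n i)) -
        ∑ j ∈ Finset.Iio i, ⟪(v n i + (τ*γ) • J (x n) (v n i)), v (n+1) j⟫ • v (n+1) j‖⁻¹ •
        ((v n i + (τ*γ) • J (x n) (v n i)) -
        ∑ j ∈ Finset.Iio i, ⟪(v n i + (τ*γ) • J (x n) (v n i)), v (n+1) j⟫ • v (n+1) j) :=
    fun n hn i => hGS n hn i
  -- orthonormality along the iteration
  have ortho : ∀ n, n ≤ N → ∀ i j : Fin k, ⟪v n i, v n j⟫ = if i = j then (1:ℝ) else 0 := by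
    intro n
    induction n with
    | zero => intro _; rw [hv0]; exact hv₀
    | succ n ih =>
      intro hn
      exact gs_on k (fun i => v n i + (τ*γ) • J (x n) (v n i)) (v (n+1))
        (fun i => hGS' n (by omega) i)
  have vnorm : ∀ n, n ≤ N → ∀ i : Fin k, ‖v n i‖ = 1 := by
    intro n hn i
    have h2 : ‖v n i‖^2 = 1 := by
      rw [← real_inner_self_eq_norm_sq, ortho n hn]; simp
    nlinarith [norm_nonneg (v n i)]
  have hxb : ∀ n, n ≤ N → 1 + ‖x n‖ ≤ (1+a*τ)^n * (1+‖x₀‖) := by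
    intro n
    induction n with
    | zero => intro _; rw [hx0]; simp
    | succ n ih =>
      intro hn
      have hnN : n < N := by omega
      have ihn := ih (by omega)
      have hvn : ∀ j : Fin k, ‖v n j‖ = 1 := vnorm n (by omega)
      have hF : ‖F (x n)‖ ≤ L * (1 + ‖x n‖) := hgrow (x n)
      have hsum : ‖∑ j : Fin k, ⟪v n j, F (x n)⟫ • v n j‖ ≤ (k:ℝ) * ‖F (x n)‖ := by
        calc ‖∑ j : Fin k, ⟪v n j, F (x n)⟫ • v n j‖
            ≤ ∑ j : Fin k, ‖⟪v n j, F (x n)⟫ • v n j‖ := norm_sum_le _ _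
        _ ≤ ∑ _j : Fin k, ‖F (x n)‖ := by
            refine Finset.sum_le_sum fun j _ => ?_
            rw [norm_smul, Real.norm_eq_abs, hvn j, mul_one]
            calc |⟪v n j, F (x n)⟫| ≤ ‖v n j‖ * ‖F (x n)‖ := abs_real_inner_le_norm _ _
            _ = ‖F (x n)‖ := by rw [hvn j, one_mul]
        _ = (k:ℝ) * ‖F (x n)‖ := by
            rw [Finset.sum_const, Finset.card_univ, Fintype.card_fin, nsmul_eq_mul]
      have hS : ‖F (x n) - (2:ℝ) • ∑ j, ⟪v n j, F (x n)⟫ • v n j‖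
          ≤ (1+2*(k:ℝ)) * (L*(1+‖x n‖)) := by
        calc ‖F (x n) - (2:ℝ) • ∑ j, ⟪v n j, F (x n)⟫ • v n j‖
            ≤ ‖F (x n)‖ + ‖(2:ℝ) • ∑ j, ⟪v n j, F (x n)⟫ • v n j‖ := norm_sub_le _ _
        _ = ‖F (x n)‖ + 2 * ‖∑ j, ⟪v n j, F (x n)⟫ • v n j‖ := by
            rw [norm_smul, Real.norm_eq_abs]; norm_num
        _ ≤ ‖F (x n)‖ + 2 * ((k:ℝ) * ‖F (x n)‖) := by linarith
        _ = (1+2*(k:ℝ)) * ‖F (x n)‖ := by ring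
        _ ≤ (1+2*(k:ℝ)) * (L*(1+‖x n‖)) :=
            mul_le_mul_of_nonneg_left hF (by positivity)
      have hstep : ‖x (n+1) - x n‖ ≤ a * τ * (1+‖x n‖) := by
        rw [hxstep n hnN, add_sub_cancel_left, norm_smul, norm_smul,
          Real.norm_eq_abs, Real.norm_eq_abs, abs_of_pos hτpos, abs_of_pos hβ]
        calc τ * (β * ‖F (x n) - (2:ℝ) • ∑ j, ⟪v n j, F (x n)⟫ • v n j‖)
            ≤ τ * (β * ((1+2*(k:ℝ)) * (L*(1+‖x n‖)))) :=
              mul_le_mul_of_nonneg_left (mul_le_mul_of_nonneg_left hS hβ.le) hτpos.le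
        _ = a * τ * (1+‖x n‖) := by rw [ha_def]; ring
      calc 1 + ‖x (n+1)‖ = 1 + ‖x n + (x (n+1) - x n)‖ := by rw [add_sub_cancel]
      _ ≤ 1 + (‖x n‖ + ‖x (n+1) - x n‖) := by
          linarith [norm_add_le (x n) (x (n+1) - x n)]
      _ ≤ (1 + ‖x n‖) + a*τ*(1+‖x n‖) := by linarith
      _ = (1 + a*τ) * (1+‖x n‖) := by ring
      _ ≤ (1 + a*τ) * ((1+a*τ)^n * (1+‖x₀‖)) :=
          mul_le_mul_of_nonneg_left ihn (by positivity)
      _ = (1+a*τ)^(n+1) * (1+‖x₀‖) := by ring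
  have hxB : ∀ n, n ≤ N → ‖x n‖ ≤ B := by
    intro n hn
    have hpow : (1+a*τ)^n ≤ Real.exp (a*T) := by
      calc (1+a*τ)^n ≤ (Real.exp (a*τ))^n := by
            apply pow_le_pow_left₀ (by positivity)
            linarith [Real.add_one_le_exp (a*τ)]
      _ = Real.exp (n*(a*τ)) := (Real.exp_nat_mul _ n).symm
      _ ≤ Real.exp (a*T) := by
          apply Real.exp_le_exp.mpr
          have h1 : τ * (n:ℝ) ≤ τ * (N:ℝ) :=
            mul_le_mul_of_nonneg_left (by exact_mod_cast hn) hτpos.le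
          nlinarith [hτN]
    have h2 := hxb n hn
    have h3 : (1+a*τ)^n * (1+‖x₀‖) ≤ Real.exp (a*T) * (1+‖x₀‖) :=
      mul_le_mul_of_nonneg_right hpow (by positivity)
    rw [hB_def]; linarith
  have hJv : ∀ n, n ≤ N → ∀ i : Fin k, ‖J (x n) (v n i)‖ ≤ M := by
    intro n hn i
    have hJ : ‖J (x n)‖ ≤ M := by
      have h := hLip 0 (x n)
      rw [sub_zero] at h
      have h2 : ‖J (x n)‖ - ‖J 0‖ ≤ ‖J (x n) - J 0‖ := norm_sub_norm_le _ _
      have h3 : ‖x n‖ ≤ B := hxB n hn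
      have hF0 : (0:ℝ) ≤ ‖F (x n) - F 0‖ := norm_nonneg _
      rw [hM_def]
      nlinarith
    calc ‖J (x n) (v n i)‖ ≤ ‖J (x n)‖ * ‖v n i‖ := (J (x n)).le_opNorm _
    _ = ‖J (x n)‖ := by rw [vnorm n hn, mul_one]
    _ ≤ M := hJ
  have hvd : ∀ n, n < N → ∀ i : Fin k, ‖v (n+1) i - v n i‖ ≤ τ * C := by
    intro n hn i
    have hγM : (0:ℝ) ≤ γ * M := (mul_pos hγ hMpos).le
    have hclose : ∀ i' : Fin k,
        ‖(v n i' + (τ*γ) • J (x n) (v n i')) - v n i'‖ ≤ τ * (γ*M) := by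
      intro i'
      rw [add_sub_cancel_left, norm_smul, Real.norm_eq_abs, abs_of_pos (mul_pos hτpos hγ)]
      calc τ * γ * ‖J (x n) (v n i')‖ ≤ τ * γ * M :=
            mul_le_mul_of_nonneg_left (hJv n hn.le i') (by positivity)
      _ = τ * (γ*M) := by ring
    have h := gs_close k (fun i' => v n i' + (τ*γ) • J (x n) (v n i')) (v n) (v (n+1))
      τ (γ*M) hτpos.le hγM (ortho n hn.le) hclose (fun i' => hGS' n hn i') i
    calc ‖v (n+1) i - v n i‖ ≤ τ * (2*(γ*M)*((k:ℝ)+1) * 3^(i:ℕ)) := h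
    _ ≤ τ * C := by
        rw [hC_def, hA_def]
        have h3 : (3:ℝ)^(i:ℕ) ≤ 3^k :=
          pow_le_pow_right₀ (by norm_num) (le_of_lt i.isLt)
        have hA' : (0:ℝ) ≤ 2*(γ*M)*((k:ℝ)+1) := by positivity
        have := mul_le_mul_of_nonneg_left h3 hA'
        exact mul_le_mul_of_nonneg_left this hτpos.le
  -- final estimate
  intro n hn i
  have hterm : ∀ j ∈ Finset.Iio i,
      ‖⟪J (x n) (v n i), v (n+1) j⟫ • v (n+1) j - ⟪J (x n) (v n i), v n j⟫ • v n j‖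
        ≤ 2*M*(τ*C) := by
    intro j hj
    have huM : ‖J (x n) (v n i)‖ ≤ M := hJv n hn.le i
    have hv1 : ‖v (n+1) j‖ = 1 := vnorm (n+1) (by omega) j
    have hv0' : ‖v n j‖ = 1 := vnorm n hn.le j
    have hvd' : ‖v (n+1) j - v n j‖ ≤ τ * C := hvd n hn j
    have hdec : ⟪J (x n) (v n i), v (n+1) j⟫ • v (n+1) j - ⟪J (x n) (v n i), v n j⟫ • v n j
        = ⟪J (x n) (v n i), v (n+1) j⟫ • (v (n+1) j - v n j)
          + ⟪J (x n) (v n i), v (n+1) j - v n j⟫ • v n j := by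
      rw [inner_sub_right, smul_sub, sub_smul]; abel
    have hc1 : |⟪J (x n) (v n i), v (n+1) j⟫| ≤ M := by
      calc |⟪J (x n) (v n i), v (n+1) j⟫| ≤ ‖J (x n) (v n i)‖ * ‖v (n+1) j‖ :=
            abs_real_inner_le_norm _ _
      _ = ‖J (x n) (v n i)‖ := by rw [hv1, mul_one]
      _ ≤ M := huM
    have hc2 : |⟪J (x n) (v n i), v (n+1) j - v n j⟫| ≤ M * (τ*C) := by
      calc |⟪J (x n) (v n i), v (n+1) j - v n j⟫|
          ≤ ‖J (x n) (v n i)‖ * ‖v (n+1) j - v n j‖ := abs_real_inner_le_norm _ _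
      _ ≤ M * (τ*C) :=
          mul_le_mul huM hvd' (norm_nonneg _) hMpos.le
    rw [hdec]
    calc ‖⟪J (x n) (v n i), v (n+1) j⟫ • (v (n+1) j - v n j)
          + ⟪J (x n) (v n i), v (n+1) j - v n j⟫ • v n j‖
        ≤ ‖⟪J (x n) (v n i), v (n+1) j⟫ • (v (n+1) j - v n j)‖
          + ‖⟪J (x n) (v n i), v (n+1) j - v n j⟫ • v n j‖ := norm_add_le _ _
    _ = |⟪J (x n) (v n i), v (n+1) j⟫| * ‖v (n+1) j - v n j‖
          + |⟪J (x n) (v n i), v (n+1) j - v n j⟫| * ‖v n j‖ := by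
        rw [norm_smul, norm_smul, Real.norm_eq_abs, Real.norm_eq_abs]
    _ ≤ M * (τ*C) + M * (τ*C) * 1 := by
        have e1 : |⟪J (x n) (v n i), v (n+1) j⟫| * ‖v (n+1) j - v n j‖ ≤ M * (τ*C) :=
          mul_le_mul hc1 hvd' (norm_nonneg _) hMpos.le
        have e2 : |⟪J (x n) (v n i), v (n+1) j - v n j⟫| * ‖v n j‖ ≤ M * (τ*C) * 1 := by
          rw [hv0']
          linarith
        linarith
    _ = 2*M*(τ*C) := by ring
  have hc2MτC : (0:ℝ) ≤ 2*M*(τ*C) := by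
    have := mul_nonneg hτpos.le hCpos.le
    nlinarith
  have hsummed : ‖∑ j ∈ Finset.Iio i,
      (⟪J (x n) (v n i), v (n+1) j⟫ • v (n+1) j - ⟪J (x n) (v n i), v n j⟫ • v n j)‖
      ≤ (k:ℝ) * (2*M*(τ*C)) := by
    calc ‖∑ j ∈ Finset.Iio i,
        (⟪J (x n) (v n i), v (n+1) j⟫ • v (n+1) j - ⟪J (x n) (v n i), v n j⟫ • v n j)‖
        ≤ ∑ j ∈ Finset.Iio i,
          ‖⟪J (x n) (v n i), v (n+1) j⟫ • v (n+1) j - ⟪J (x n) (v n i), v n j⟫ • v n j‖ :=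
          norm_sum_le _ _
    _ ≤ ∑ _j ∈ Finset.Iio i, 2*M*(τ*C) := Finset.sum_le_sum hterm
    _ = ((Finset.Iio i).card : ℝ) * (2*M*(τ*C)) := by
        rw [Finset.sum_const, nsmul_eq_mul]
    _ ≤ (k:ℝ) * (2*M*(τ*C)) := by
        apply mul_le_mul_of_nonneg_right _ hc2MτC
        rw [Fin.card_Iio]
        exact_mod_cast le_of_lt i.isLt
  rw [← smul_sub, ← Finset.sum_sub_distrib, norm_smul, Real.norm_eq_abs,
    abs_of_pos (mul_pos hτpos hγ)]
  calc τ * γ * ‖∑ j ∈ Finset.Iio i,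
      (⟪J (x n) (v n i), v (n+1) j⟫ • v (n+1) j - ⟪J (x n) (v n i), v n j⟫ • v n j)‖
      ≤ τ * γ * ((k:ℝ) * (2*M*(τ*C))) :=
        mul_le_mul_of_nonneg_left hsummed (by positivity)
  _ = 2*γ*(k:ℝ)*M*C * τ^2 := by ring
  _ ≤ (2*γ*(k:ℝ)*M*C + 1) * τ^2 := by nlinarith [sq_nonneg τ]
end
end

section
/- Under Assumption A, there exist τ₀ > 0 and Q > 0, depending only on d, k, L, β, γ, ‖x₀‖ and T, such that for every N ∈ ℕ with τ = T/N ≤ τ₀, the iterates of the discrete HiSD scheme satisfy, for all 1 ≤ i ≤ k and 1 ≤ n ≤ N, ‖τ γ Σ_{j=1}^{i−1} (v_{i,n−1}ᵀ v_{j,n}) (v_{i,n−1}ᵀ J(x_{n−1}) v_{i,n−1}) v_{j,n}‖ ≤ Q τ². -/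
open scoped RealInnerProductSpace BigOperators

set_option maxHeartbeats 1000000

noncomputable section

theorem hisd_stmt7
    (d k : ℕ) (hd : 1 ≤ d) (hk : 1 ≤ k) (hkd : k ≤ d)
    (F : EuclideanSpace ℝ (Fin d) → EuclideanSpace ℝ (Fin d))
    (J : EuclideanSpace ℝ (Fin d) → (EuclideanSpace ℝ (Fin d) →L[ℝ] EuclideanSpace ℝ (Fin d)))
    (hJsymm : ∀ x u w, ⟪J x u, w⟫ = ⟪u, J x w⟫)
    (L : ℝ) (hL : 0 < L)
    (hLip : ∀ x₁ x₂ : EuclideanSpace ℝ (Fin d), ‖J x₂ - J x₁‖ + ‖F x₂ - F x₁‖ ≤ L * ‖x₂ - x₁‖)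
    (hgrow : ∀ x : EuclideanSpace ℝ (Fin d), ‖F x‖ ≤ L * (1 + ‖x‖))
    (β γ : ℝ) (hβ : 0 < β) (hγ : 0 < γ)
    (T : ℝ) (hT : 0 < T)
    (x₀ : EuclideanSpace ℝ (Fin d))
    (v₀ : Fin k → EuclideanSpace ℝ (Fin d))
    (hv₀ : ∀ i j : Fin k, ⟪v₀ i, v₀ j⟫ = if i = j then (1:ℝ) else 0) :
    ∃ τ₀ > (0:ℝ), ∃ Q > (0:ℝ), ∀ (N : ℕ) (τ : ℝ), 0 < N → τ = T / N → τ ≤ τ₀ →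
      ∀ (x : ℕ → EuclideanSpace ℝ (Fin d)) (v : ℕ → Fin k → EuclideanSpace ℝ (Fin d)),
        x 0 = x₀ → v 0 = v₀ →
        (∀ n < N, x (n+1) = x n + τ •
            (β • (F (x n) - (2:ℝ) • ∑ j, ⟪v n j, F (x n)⟫ • v n j))) →
        (∀ n < N, ∀ i : Fin k,
          let vt := v n i + (τ * γ) • J (x n) (v n i)
          let w := vt - ∑ j ∈ Finset.Iio i, ⟪vt, v (n+1) j⟫ • v (n+1) j
          w ≠ 0 ∧ v (n+1) i = ‖w‖⁻¹ • w) →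
        ∀ n < N, ∀ i : Fin k,
          ‖(τ * γ) • ∑ j ∈ Finset.Iio i,
              (⟪v n i, v (n+1) j⟫ * ⟪v n i, J (x n) (v n i)⟫) • v (n+1) j‖ ≤ Q * τ^2 := by

  classical
  -- constants
  set C : ℝ := β * (1 + 2*k) * L with hCdef
  have hCpos : 0 < C := by
    have : (0:ℝ) < 1 + 2*k := by positivity
    positivity
  set M : ℝ := Real.exp (C*T) * (1 + ‖x₀‖) with hMdef
  have hMpos : 0 < M := by positivity
  set MJ : ℝ := ‖J x₀‖ + L*(M + ‖x₀‖) + 1 with hMJdef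
  have hMJpos : 0 < MJ := by positivity
  set A : ℝ := 4*(k+1)*γ*MJ with hAdef
  have hApos : 0 < A := by positivity
  set Kc : ℝ := 4*k with hKcdef
  have hKone : (1:ℝ) ≤ Kc := by
    have : (1:ℝ) ≤ (k:ℝ) := by exact_mod_cast hk
    simp only [hKcdef]; nlinarith
  have hkpos : (0:ℝ) < k := by exact_mod_cast hk
  refine ⟨T, hT, γ * MJ * A * k * Kc^k, by positivity, ?_⟩
  intro N τ hN hτdef hττ₀ x v hx0 hv0 hxrec hvrec
  have hτpos : 0 < τ := by
    rw [hτdef]; positivity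
  -- reformulate the Gram-Schmidt hypothesis
  have hW : ∀ n < N, ∀ i : Fin k,
      (v n i + (τ * γ) • J (x n) (v n i)
        - ∑ j ∈ Finset.Iio i, ⟪v n i + (τ * γ) • J (x n) (v n i), v (n+1) j⟫ • v (n+1) j) ≠ 0 ∧
      v (n+1) i = ‖v n i + (τ * γ) • J (x n) (v n i)
        - ∑ j ∈ Finset.Iio i, ⟪v n i + (τ * γ) • J (x n) (v n i), v (n+1) j⟫ • v (n+1) j‖⁻¹ •
        (v n i + (τ * γ) • J (x n) (v n i)
        - ∑ j ∈ Finset.Iio i, ⟪v n i + (τ * γ) • J (x n) (v n i), v (n+1) j⟫ • v (n+1) j) := by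
    intro n hn i
    exact hvrec n hn i
  -- unit norms
  have hunit : ∀ n ≤ N, ∀ i : Fin k, ‖v n i‖ = 1 := by
    intro n hn i
    cases n with
    | zero =>
      rw [hv0]
      have h := hv₀ i i
      simp only [eq_self_iff_true, if_true] at h
      have h2 := real_inner_self_eq_norm_mul_norm (v₀ i)
      nlinarith [norm_nonneg (v₀ i)]
    | succ n =>
      obtain ⟨hw, hvi⟩ := hW n (by omega) i
      rw [hvi, norm_smul, norm_inv, norm_norm]
      exact inv_mul_cancel₀ (norm_ne_zero_iff.mpr hw)
  -- orthogonality
  have horth : ∀ n ≤ N, ∀ i j : Fin k, i ≠ j → ⟪v n i, v n j⟫ = 0 := by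
    intro n
    induction n with
    | zero => intro _ i j hij; rw [hv0]; simpa [hij] using hv₀ i j
    | succ n _ =>
      intro hn
      have hn' : n < N := by omega
      have aux : ∀ m : ℕ, ∀ i : Fin k, (i:ℕ) = m → ∀ j : Fin k, j < i →
          ⟪v (n+1) i, v (n+1) j⟫ = 0 := by
        intro m
        induction m using Nat.strong_induction_on with
        | _ m IHm =>
          intro i him j hji
          obtain ⟨hw, hvi⟩ := hW n hn' i
          set Vt : EuclideanSpace ℝ (Fin d) := v n i + (τ * γ) • J (x n) (v n i) with hVt
          set Sm : EuclideanSpace ℝ (Fin d) :=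
            ∑ l ∈ Finset.Iio i, ⟪Vt, v (n+1) l⟫ • v (n+1) l with hSm
          rw [hvi, real_inner_smul_left]
          have hWj : ⟪Vt - Sm, v (n+1) j⟫ = 0 := by
            rw [inner_sub_left, hSm, sum_inner]
            have hterm : ∀ l ∈ Finset.Iio i,
                ⟪⟪Vt, v (n+1) l⟫ • v (n+1) l, v (n+1) j⟫
                = if l = j then ⟪Vt, v (n+1) j⟫ else 0 := by
              intro l hl
              rw [Finset.mem_Iio] at hl
              rw [real_inner_smul_left]
              by_cases hlj : l = j
              · subst hlj
                rw [if_pos rfl]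
                have h1 : ⟪v (n+1) l, v (n+1) l⟫ = 1 := by
                  rw [real_inner_self_eq_norm_mul_norm, hunit (n+1) hn l]; norm_num
                rw [h1, mul_one]
              · rw [if_neg hlj]
                have h0 : ⟪v (n+1) l, v (n+1) j⟫ = 0 := by
                  rcases lt_or_gt_of_ne hlj with h | h
                  · have hjm : (j:ℕ) < m := by
                      rw [← him]; exact Fin.lt_def.mp hji
                    have := IHm (j:ℕ) hjm j rfl l h
                    rw [real_inner_comm]; exact this
                  · have hlm : (l:ℕ) < m := by
                      rw [← him]; exact Fin.lt_def.mp hl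
                    exact IHm (l:ℕ) hlm l rfl j h
                rw [h0, mul_zero]
            rw [Finset.sum_congr rfl hterm, Finset.sum_ite_eq' (Finset.Iio i) j
              (fun _ => ⟪Vt, v (n+1) j⟫), if_pos (Finset.mem_Iio.mpr hji), sub_self]
          rw [hWj, mul_zero]
      intro i j hij
      rcases lt_or_gt_of_ne hij with h | h
      · rw [real_inner_comm]; exact aux (j:ℕ) j rfl i h
      · exact aux (i:ℕ) i rfl j h
  -- x bounded
  have hxb : ∀ n ≤ N, ‖x n‖ ≤ M := by
    have hstep : ∀ n < N, ‖x (n+1)‖ ≤ ‖x n‖ + τ * C * (1 + ‖x n‖) := by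
      intro n hn
      set S : EuclideanSpace ℝ (Fin d) := ∑ j, ⟪v n j, F (x n)⟫ • v n j with hS
      have hsum : ‖S‖ ≤ k * ‖F (x n)‖ := by
        calc ‖S‖ ≤ ∑ j, ‖⟪v n j, F (x n)⟫ • v n j‖ := norm_sum_le _ _
          _ ≤ ∑ _j : Fin k, ‖F (x n)‖ := by
              apply Finset.sum_le_sum; intro j _
              rw [norm_smul, hunit n hn.le j, mul_one, Real.norm_eq_abs]
              calc |⟪v n j, F (x n)⟫| ≤ ‖v n j‖ * ‖F (x n)‖ := abs_real_inner_le_norm _ _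
                _ = ‖F (x n)‖ := by rw [hunit n hn.le j, one_mul]
          _ = k * ‖F (x n)‖ := by simp [Finset.sum_const, Finset.card_univ]
      have hFb := hgrow (x n)
      have hd1 : ‖x (n+1) - x n‖ ≤ τ * C * (1 + ‖x n‖) := by
        rw [hxrec n hn, ← hS]
        have he : x n + τ • β • (F (x n) - (2:ℝ) • S) - x n
            = τ • β • (F (x n) - (2:ℝ) • S) := by abel
        rw [he, norm_smul, norm_smul, Real.norm_eq_abs, Real.norm_eq_abs,
          abs_of_pos hτpos, abs_of_pos hβ]
        have hb : ‖F (x n) - (2:ℝ) • S‖ ≤ (1+2*(k:ℝ)) * (L*(1+‖x n‖)) := by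
          have h2 : ‖F (x n) - (2:ℝ) • S‖ ≤ ‖F (x n)‖ + 2 * ‖S‖ := by
            calc ‖F (x n) - (2:ℝ) • S‖ ≤ ‖F (x n)‖ + ‖(2:ℝ) • S‖ := norm_sub_le _ _
              _ = ‖F (x n)‖ + 2 * ‖S‖ := by
                  rw [norm_smul, Real.norm_eq_abs]; norm_num
          have hLx : (0:ℝ) ≤ L * (1 + ‖x n‖) := by positivity
          nlinarith
        calc τ * (β * ‖F (x n) - (2:ℝ) • S‖)
            ≤ τ * (β * ((1+2*(k:ℝ)) * (L*(1+‖x n‖)))) := by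
              apply mul_le_mul_of_nonneg_left _ hτpos.le
              exact mul_le_mul_of_nonneg_left hb hβ.le
          _ = τ * C * (1 + ‖x n‖) := by rw [hCdef]; ring
      have h4 : ‖x (n+1)‖ ≤ ‖x n‖ + ‖x (n+1) - x n‖ := by
        have h5 := norm_add_le (x n) (x (n+1) - x n)
        have he2 : x n + (x (n+1) - x n) = x (n+1) := by abel
        rw [he2] at h5
        linarith
      linarith
    have hgrow2 : ∀ n, n ≤ N → 1 + ‖x n‖ ≤ (1+τ*C)^n * (1+‖x₀‖) := by
      intro n
      induction n with
      | zero => intro _; simp [hx0]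
      | succ n IH =>
        intro hn
        have h1 := IH (by omega)
        have h2 := hstep n (by omega)
        calc 1 + ‖x (n+1)‖ ≤ (1+τ*C) * (1+‖x n‖) := by nlinarith
          _ ≤ (1+τ*C) * ((1+τ*C)^n * (1+‖x₀‖)) := by
              apply mul_le_mul_of_nonneg_left h1 (by positivity)
          _ = (1+τ*C)^(n+1) * (1+‖x₀‖) := by ring
    intro n hn
    have h1 := hgrow2 n hn
    have h2 : (1+τ*C)^n ≤ Real.exp (C*T) := by
      have e1 : (1+τ*C) ≤ Real.exp (τ*C) := by
        have := Real.add_one_le_exp (τ*C); linarith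
      have hτn : τ * n ≤ T := by
        have hn' : (n:ℝ) ≤ (N:ℝ) := by exact_mod_cast hn
        have hNpos : (0:ℝ) < (N:ℝ) := by exact_mod_cast hN
        rw [hτdef, div_mul_eq_mul_div, div_le_iff₀ hNpos]
        nlinarith
      calc (1+τ*C)^n ≤ (Real.exp (τ*C))^n := by
            apply pow_le_pow_left₀ (by positivity) e1
        _ = Real.exp (n * (τ*C)) := (Real.exp_nat_mul _ n).symm
        _ ≤ Real.exp (C*T) := by
            apply Real.exp_le_exp.mpr
            have hnn : (0:ℝ) ≤ (n:ℝ) := Nat.cast_nonneg n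
            nlinarith
    have h3 : (1+τ*C)^n * (1+‖x₀‖) ≤ Real.exp (C*T) * (1+‖x₀‖) := by
      apply mul_le_mul_of_nonneg_right h2 (by positivity)
    simp only [hMdef]
    have hxnn : (0:ℝ) ≤ ‖x₀‖ := norm_nonneg _
    linarith
  -- J bounded
  have hJb : ∀ n ≤ N, ‖J (x n)‖ ≤ MJ := by
    intro n hn
    have h1 : ‖J (x n) - J x₀‖ ≤ L * ‖x n - x₀‖ := by
      have := hLip x₀ (x n)
      have h0 : (0:ℝ) ≤ ‖F (x n) - F x₀‖ := norm_nonneg _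
      linarith
    have h2 : ‖x n - x₀‖ ≤ ‖x n‖ + ‖x₀‖ := norm_sub_le _ _
    have h3 : ‖J (x n)‖ ≤ ‖J x₀‖ + ‖J (x n) - J x₀‖ := by
      have h := norm_add_le (J x₀) (J (x n) - J x₀)
      have he : J x₀ + (J (x n) - J x₀) = J (x n) := by abel
      rw [he] at h
      linarith
    have hx := hxb n hn
    have : L * ‖x n - x₀‖ ≤ L * (M + ‖x₀‖) := by
      apply mul_le_mul_of_nonneg_left _ hL.le
      linarith
    simp only [hMJdef]
    linarith
  have hJv : ∀ n ≤ N, ∀ u : EuclideanSpace ℝ (Fin d), ‖J (x n) u‖ ≤ MJ * ‖u‖ := by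
    intro n hn u
    exact le_trans ((J (x n)).le_opNorm u) (by
      apply mul_le_mul_of_nonneg_right (hJb n hn) (norm_nonneg u))
  -- drift of v
  have hKpos : (0:ℝ) < Kc := lt_of_lt_of_le one_pos hKone
  have hvdiff : ∀ n < N, ∀ i : Fin k, ‖v (n+1) i - v n i‖ ≤ A * Kc^(i:ℕ) * τ := by
    intro n hn
    have hn1 : n + 1 ≤ N := hn
    have key : ∀ m : ℕ, ∀ i : Fin k, (i:ℕ) = m → ‖v (n+1) i - v n i‖ ≤ A * Kc^(i:ℕ) * τ := by
      intro m
      induction m using Nat.strong_induction_on with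
      | _ m IHm =>
        intro i him
        obtain ⟨hw, hvi⟩ := hW n hn i
        set Vt : EuclideanSpace ℝ (Fin d) := v n i + (τ * γ) • J (x n) (v n i) with hVt
        set Sm : EuclideanSpace ℝ (Fin d) :=
          ∑ l ∈ Finset.Iio i, ⟪Vt, v (n+1) l⟫ • v (n+1) l with hSm
        have hKipos : (0:ℝ) < Kc^(i:ℕ) := pow_pos hKpos _
        have hKige : (1:ℝ) ≤ Kc^(i:ℕ) := one_le_pow₀ hKone
        have hJvi : ‖J (x n) (v n i)‖ ≤ MJ := by
          have h := hJv n hn.le (v n i)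
          rwa [hunit n hn.le i, mul_one] at h
        have hvt : ‖Vt - v n i‖ ≤ γ * MJ * τ := by
          have he : Vt - v n i = (τ * γ) • J (x n) (v n i) := by rw [hVt]; abel
          rw [he, norm_smul, Real.norm_eq_abs, abs_of_pos (mul_pos hτpos hγ)]
          calc τ * γ * ‖J (x n) (v n i)‖ ≤ τ * γ * MJ := by
                apply mul_le_mul_of_nonneg_left hJvi (by positivity)
            _ = γ * MJ * τ := by ring
        have hterm : ∀ l ∈ Finset.Iio i,
            ‖⟪Vt, v (n+1) l⟫ • v (n+1) l‖ ≤ A * (Kc^(i:ℕ)/Kc) * τ + γ * MJ * τ := by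
          intro l hl
          rw [Finset.mem_Iio] at hl
          rw [norm_smul, hunit (n+1) hn1 l, mul_one, Real.norm_eq_abs]
          have hKl : Kc^(l:ℕ) ≤ Kc^(i:ℕ)/Kc := by
            rw [le_div_iff₀ hKpos]
            calc Kc^(l:ℕ) * Kc = Kc^((l:ℕ)+1) := (pow_succ _ _).symm
              _ ≤ Kc^(i:ℕ) := pow_le_pow_right₀ hKone (Fin.lt_def.mp hl)
          have hl1 : |⟪v n i, v (n+1) l⟫| ≤ A * Kc^(l:ℕ) * τ := by
            have h0 : ⟪v n i, v n l⟫ = 0 := horth n hn.le i l (ne_of_gt hl)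
            have he2 : ⟪v n i, v (n+1) l⟫ = ⟪v n i, v (n+1) l - v n l⟫ := by
              rw [inner_sub_right, h0, sub_zero]
            rw [he2]
            calc |⟪v n i, v (n+1) l - v n l⟫| ≤ ‖v n i‖ * ‖v (n+1) l - v n l‖ :=
                  abs_real_inner_le_norm _ _
              _ = ‖v (n+1) l - v n l‖ := by rw [hunit n hn.le i, one_mul]
              _ ≤ A * Kc^(l:ℕ) * τ := IHm (l:ℕ) (him ▸ Fin.lt_def.mp hl) l rfl
          have hl2 : |⟪(τ*γ) • J (x n) (v n i), v (n+1) l⟫| ≤ γ * MJ * τ := by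
            rw [real_inner_smul_left, abs_mul, abs_of_pos (mul_pos hτpos hγ)]
            calc τ*γ * |⟪J (x n) (v n i), v (n+1) l⟫|
                ≤ τ*γ*(‖J (x n) (v n i)‖ * ‖v (n+1) l‖) :=
                  mul_le_mul_of_nonneg_left (abs_real_inner_le_norm _ _) (by positivity)
              _ ≤ γ * MJ * τ := by
                  rw [hunit (n+1) hn1 l, mul_one]
                  calc τ*γ*‖J (x n) (v n i)‖ ≤ τ*γ*MJ :=
                        mul_le_mul_of_nonneg_left hJvi (by positivity)
                    _ = γ * MJ * τ := by ring
          have hsplit : ⟪Vt, v (n+1) l⟫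
              = ⟪v n i, v (n+1) l⟫ + ⟪(τ*γ) • J (x n) (v n i), v (n+1) l⟫ := by
            rw [hVt, inner_add_left]
          calc |⟪Vt, v (n+1) l⟫|
              ≤ |⟪v n i, v (n+1) l⟫| + |⟪(τ*γ) • J (x n) (v n i), v (n+1) l⟫| := by
                rw [hsplit]; exact abs_add_le _ _
            _ ≤ A * Kc^(l:ℕ) * τ + γ * MJ * τ := add_le_add hl1 hl2
            _ ≤ A * (Kc^(i:ℕ)/Kc) * τ + γ * MJ * τ := by
                have : A * Kc^(l:ℕ) * τ ≤ A * (Kc^(i:ℕ)/Kc) * τ := by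
                  apply mul_le_mul_of_nonneg_right _ hτpos.le
                  exact mul_le_mul_of_nonneg_left hKl hApos.le
                linarith
        have hik : ((i:ℕ):ℝ) ≤ (k:ℝ) := by
          exact_mod_cast (le_of_lt i.isLt)
        have hSmB : ‖Sm‖ ≤ (A * Kc^(i:ℕ)/4 + k*(γ*MJ)) * τ := by
          calc ‖Sm‖ ≤ ∑ l ∈ Finset.Iio i, ‖⟪Vt, v (n+1) l⟫ • v (n+1) l‖ := by
                rw [hSm]; exact norm_sum_le _ _
            _ ≤ ∑ _l ∈ Finset.Iio i, (A * (Kc^(i:ℕ)/Kc) * τ + γ * MJ * τ) :=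
                Finset.sum_le_sum hterm
            _ = (i:ℕ) * (A * (Kc^(i:ℕ)/Kc) * τ + γ * MJ * τ) := by
                rw [Finset.sum_const, Fin.card_Iio, nsmul_eq_mul]
            _ ≤ (k:ℝ) * (A * (Kc^(i:ℕ)/Kc) * τ + γ * MJ * τ) := by
                apply mul_le_mul_of_nonneg_right hik (by positivity)
            _ = (A * Kc^(i:ℕ)/4 + k*(γ*MJ)) * τ := by
                rw [hKcdef]; field_simp
        have hWv : ‖(Vt - Sm) - v n i‖ ≤ (A * Kc^(i:ℕ)/4 + k*(γ*MJ) + γ*MJ) * τ := by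
          have he : (Vt - Sm) - v n i = (Vt - v n i) - Sm := by abel
          rw [he]
          calc ‖(Vt - v n i) - Sm‖ ≤ ‖Vt - v n i‖ + ‖Sm‖ := norm_sub_le _ _
            _ ≤ γ * MJ * τ + (A * Kc^(i:ℕ)/4 + (k:ℝ)*(γ*MJ)) * τ := add_le_add hvt hSmB
            _ = (A * Kc^(i:ℕ)/4 + (k:ℝ)*(γ*MJ) + γ*MJ) * τ := by ring
        have habs : |‖Vt - Sm‖ - 1| ≤ (A * Kc^(i:ℕ)/4 + k*(γ*MJ) + γ*MJ) * τ := by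
          have h := abs_norm_sub_norm_le (Vt - Sm) (v n i)
          rw [hunit n hn.le i] at h
          exact le_trans h hWv
        have hd2 : ‖v (n+1) i - (Vt - Sm)‖ = |1 - ‖Vt - Sm‖| := by
          rw [hvi]
          have he : ‖Vt - Sm‖⁻¹ • (Vt - Sm) - (Vt - Sm) = (‖Vt - Sm‖⁻¹ - 1) • (Vt - Sm) := by
            rw [sub_smul, one_smul]
          rw [he, norm_smul, Real.norm_eq_abs]
          have hWpos : (0:ℝ) < ‖Vt - Sm‖ := norm_pos_iff.mpr hw
          rw [← abs_of_pos hWpos, ← abs_mul, abs_of_pos hWpos]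
          congr 1
          field_simp
        have htot : ‖v (n+1) i - v n i‖
            ≤ 2 * ((A * Kc^(i:ℕ)/4 + k*(γ*MJ) + γ*MJ) * τ) := by
          have he : v (n+1) i - v n i = (v (n+1) i - (Vt - Sm)) + ((Vt - Sm) - v n i) := by
            abel
          calc ‖v (n+1) i - v n i‖
              ≤ ‖v (n+1) i - (Vt - Sm)‖ + ‖(Vt - Sm) - v n i‖ := by
                rw [he]; exact norm_add_le _ _
            _ ≤ |1 - ‖Vt - Sm‖| + (A * Kc^(i:ℕ)/4 + k*(γ*MJ) + γ*MJ) * τ := by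
                rw [hd2]; exact add_le_add le_rfl hWv
            _ ≤ 2 * ((A * Kc^(i:ℕ)/4 + k*(γ*MJ) + γ*MJ) * τ) := by
                rw [abs_sub_comm] at habs
                linarith
        have hAeq : 2*((k:ℝ)*(γ*MJ) + γ*MJ) = A/2 := by rw [hAdef]; ring
        calc ‖v (n+1) i - v n i‖
            ≤ 2 * ((A * Kc^(i:ℕ)/4 + k*(γ*MJ) + γ*MJ) * τ) := htot
          _ = (A * Kc^(i:ℕ)/2) * τ + (A/2) * τ := by rw [← hAeq]; ring
          _ ≤ A * Kc^(i:ℕ) * τ := by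
              nlinarith [mul_nonneg (mul_nonneg hApos.le hτpos.le) (sub_nonneg.mpr hKige)]
    intro i
    exact key (i:ℕ) i rfl
  -- final bound
  intro n hn i
  have hn1 : n+1 ≤ N := hn
  set SS : EuclideanSpace ℝ (Fin d) := ∑ j ∈ Finset.Iio i,
    (⟪v n i, v (n+1) j⟫ * ⟪v n i, J (x n) (v n i)⟫) • v (n+1) j with hSS
  rw [norm_smul, Real.norm_eq_abs, abs_of_pos (mul_pos hτpos hγ)]
  have hterm : ∀ j ∈ Finset.Iio i,
      ‖(⟪v n i, v (n+1) j⟫ * ⟪v n i, J (x n) (v n i)⟫) • v (n+1) j‖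
        ≤ MJ * (A * Kc^k * τ) := by
    intro j hj
    rw [Finset.mem_Iio] at hj
    rw [norm_smul, hunit (n+1) hn1 j, mul_one, Real.norm_eq_abs, abs_mul]
    have h1 : |⟪v n i, v (n+1) j⟫| ≤ A * Kc^(j:ℕ) * τ := by
      have h0 : ⟪v n i, v n j⟫ = 0 := horth n hn.le i j (ne_of_gt hj)
      have he2 : ⟪v n i, v (n+1) j⟫ = ⟪v n i, v (n+1) j - v n j⟫ := by
        rw [inner_sub_right, h0, sub_zero]
      rw [he2]
      calc |⟪v n i, v (n+1) j - v n j⟫| ≤ ‖v n i‖ * ‖v (n+1) j - v n j‖ :=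
            abs_real_inner_le_norm _ _
        _ = ‖v (n+1) j - v n j‖ := by rw [hunit n hn.le i, one_mul]
        _ ≤ A * Kc^(j:ℕ) * τ := hvdiff n hn j
    have h2 : |⟪v n i, J (x n) (v n i)⟫| ≤ MJ := by
      calc |⟪v n i, J (x n) (v n i)⟫| ≤ ‖v n i‖ * ‖J (x n) (v n i)‖ :=
            abs_real_inner_le_norm _ _
        _ ≤ MJ := by
            rw [hunit n hn.le i, one_mul]
            have h := hJv n hn.le (v n i)
            rwa [hunit n hn.le i, mul_one] at h
    have hKj : Kc^(j:ℕ) ≤ Kc^k := pow_le_pow_right₀ hKone (le_of_lt j.isLt)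
    have h1' : |⟪v n i, v (n+1) j⟫| ≤ A * Kc^k * τ := by
      refine le_trans h1 ?_
      have h3 := mul_le_mul_of_nonneg_left hKj hApos.le
      nlinarith
    calc |⟪v n i, v (n+1) j⟫| * |⟪v n i, J (x n) (v n i)⟫| ≤ (A * Kc^k * τ) * MJ := by
          apply mul_le_mul h1' h2 (abs_nonneg _) (by positivity)
      _ = MJ * (A * Kc^k * τ) := by ring
  have hsum : ‖SS‖ ≤ (i:ℕ) * (MJ * (A * Kc^k * τ)) := by
    calc ‖SS‖ ≤ ∑ j ∈ Finset.Iio i,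
          ‖(⟪v n i, v (n+1) j⟫ * ⟪v n i, J (x n) (v n i)⟫) • v (n+1) j‖ := by
          rw [hSS]; exact norm_sum_le _ _
      _ ≤ ∑ _j ∈ Finset.Iio i, (MJ * (A * Kc^k * τ)) := Finset.sum_le_sum hterm
      _ = (i:ℕ) * (MJ * (A * Kc^k * τ)) := by
          rw [Finset.sum_const, Fin.card_Iio, nsmul_eq_mul]
  have hik : ((i:ℕ):ℝ) ≤ (k:ℝ) := by exact_mod_cast (le_of_lt i.isLt)
  calc τ * γ * ‖SS‖ ≤ τ * γ * ((i:ℕ) * (MJ * (A * Kc^k * τ))) := by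
        apply mul_le_mul_of_nonneg_left hsum (by positivity)
    _ ≤ τ * γ * ((k:ℝ) * (MJ * (A * Kc^k * τ))) := by
        apply mul_le_mul_of_nonneg_left _ (by positivity)
        apply mul_le_mul_of_nonneg_right hik (by positivity)
    _ = γ * MJ * A * k * Kc^k * τ^2 := by ring
end
end
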